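/- arXiv:2112.02645 — 6 statements merged into one kernel-verified Lean document; each statement's English description precedes it below -/
import Mathlib

section
/- Let D be a weighted oriented graph with at least one edge and let J(D) = ⋂_{(t_i,t_j) ∈ E(D)} (t_i, t_j^{w_j}) be the Alexander dual of the edge ideal I(D). Then J(D)^n = J(D)^{(n)} for all n ≥ 1 if and only if J(D) is a normal ideal and NP(J(D)) = IP(J(D)), where IP(J(D)) = {x ∈ ℝ^s : x ≥ 0 and x_i + w_j^{-1} x_j ≥ 1 for every (t_i, t_j) ∈ E(D)}. -/
open MvPolynomial Pointwise



/-- A weighted oriented graph `D` on vertices `t_1, …, t_s` (indexed by `Fin s`):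
a set of directed edges with no loops such that for each unordered pair of vertices at
most one orientation occurs, together with a weight function `w : V(D) → ℕ₊` which
equals `1` on every source vertex (a vertex having only outgoing edges, i.e. no
incoming edge). -/
structure WOGraph (s : ℕ) where
  E : Set (Fin s × Fin s)
  no_loops : ∀ i : Fin s, (i, i) ∉ E
  no_two_orientations : ∀ i j : Fin s, (i, j) ∈ E → (j, i) ∉ E
  w : Fin s → ℕ
  w_pos : ∀ i, 1 ≤ w i
  source_weight_one : ∀ i : Fin s, (∀ j, (j, i) ∉ E) → w i = 1

/-- A vertex of `D` is a sink if it has only incoming edges. -/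
def WOGraph.IsSink {s : ℕ} (D : WOGraph s) (i : Fin s) : Prop := ∀ j, (i, j) ∉ D.E

/-- `V⁺(D)`: the set of vertices of weight greater than `1`. -/
def WOGraph.Vplus {s : ℕ} (D : WOGraph s) : Set (Fin s) := { i | 1 < D.w i }

/-- The underlying simple graph `G` of `D`, with edges `{t_i, t_j}` for `(t_i,t_j) ∈ E(D)`. -/
def WOGraph.underlying {s : ℕ} (D : WOGraph s) : SimpleGraph (Fin s) :=
  SimpleGraph.fromRel (fun i j => (i, j) ∈ D.E)

/-- The edge ideal `I(D) = (t_i t_j^{w_j} : (t_i, t_j) ∈ E(D))` of `D`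
in `S = K[t_1, …, t_s]`. -/
noncomputable def WOGraph.edgeIdeal {s : ℕ} (D : WOGraph s) (K : Type*) [Field K] :
    Ideal (MvPolynomial (Fin s) K) :=
  Ideal.span { f | ∃ e ∈ D.E, f = X e.1 * X e.2 ^ D.w e.2 }

/-- The contraction `J S_p ∩ S` to `R` of the extension of an ideal `J` to the
localization of `R` at a prime ideal `p`. -/
noncomputable def contractAt {R : Type*} [CommRing R] (J p : Ideal R) (hp : p.IsPrime) :
    Ideal R :=
  letI := hp
  (J.map (algebraMap R (Localization.AtPrime p))).comap
    (algebraMap R (Localization.AtPrime p))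

/-- The `n`-th symbolic power `I^{(n)} = ⋂_{i=1}^r (Iⁿ S_{p_i} ∩ S)`, the intersection
being taken over the minimal primes `p_1, …, p_r` of `I`. -/
noncomputable def symbolicPower {R : Type*} [CommRing R] (I : Ideal R) (n : ℕ) : Ideal R :=
  ⨅ (p : Ideal R) (hp : p ∈ I.minimalPrimes), contractAt (I ^ n) p hp.1.1

/-- The integral closure of a monomial ideal `J`:
the ideal `({t^a : (t^a)^p ∈ J^p for some integer p ≥ 1})`. -/
noncomputable def monIntegralClosure {s : ℕ} (K : Type*) [Field K]
    (J : Ideal (MvPolynomial (Fin s) K)) : Ideal (MvPolynomial (Fin s) K) :=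
  Ideal.span { f | ∃ a : Fin s →₀ ℕ, f = monomial a (1 : K) ∧
    ∃ p : ℕ, 1 ≤ p ∧ (monomial a (1 : K)) ^ p ∈ J ^ p }

/-- The Alexander dual `J(D) = ⋂_{(t_i,t_j) ∈ E(D)} (t_i, t_j^{w_j})` of the edge ideal
of a weighted oriented graph `D`. -/
noncomputable def alexDual {s : ℕ} (K : Type*) [Field K] (D : WOGraph s) :
    Ideal (MvPolynomial (Fin s) K) :=
  ⨅ e ∈ D.E, Ideal.span {X e.1, X e.2 ^ D.w e.2}



namespace AuxNTF

open Finsupp in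
lemma le_single_pair {s : ℕ} {i j : Fin s} (hij : i ≠ j) (k l : ℕ) (m : Fin s →₀ ℕ) :
    Finsupp.single i k + Finsupp.single j l ≤ m ↔ k ≤ m i ∧ l ≤ m j := by
  constructor
  · intro h
    have hi := h i
    have hj := h j
    simp [Finsupp.add_apply, Finsupp.single_apply, hij, hij.symm] at hi hj
    exact ⟨hi, hj⟩
  · intro ⟨h1, h2⟩ x
    simp only [Finsupp.add_apply, Finsupp.single_apply]
    split_ifs with hi hj hj
    · exact absurd (hi.trans hj.symm) hij
    · subst hi; omega
    · subst hj; omega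
    · omega

variable {s : ℕ} {K : Type*} [Field K]

/-- The monomial ideal generated by exponents in `A`. -/
noncomputable def MI (K : Type*) [Field K] {s : ℕ} (A : Set (Fin s →₀ ℕ)) :
    Ideal (MvPolynomial (Fin s) K) :=
  Ideal.span ((fun a => monomial a (1 : K)) '' A)

lemma mem_MI {A : Set (Fin s →₀ ℕ)} {f : MvPolynomial (Fin s) K} :
    f ∈ MI K A ↔ ∀ m ∈ f.support, ∃ a ∈ A, a ≤ m :=
  MvPolynomial.mem_ideal_span_monomial_image

lemma monomial_mem_MI {A : Set (Fin s →₀ ℕ)} {m : Fin s →₀ ℕ} :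
    monomial m (1 : K) ∈ MI K A ↔ ∃ a ∈ A, a ≤ m := by
  rw [mem_MI]
  simp [support_monomial]

lemma MI_mul (A B : Set (Fin s →₀ ℕ)) : MI K A * MI K B = MI K (A + B) := by
  unfold MI
  rw [Ideal.span_mul_span']
  congr 1
  ext f
  constructor
  · rintro ⟨g, ⟨a, ha, rfl⟩, h, ⟨b, hb, rfl⟩, rfl⟩
    refine ⟨a + b, Set.add_mem_add ha hb, ?_⟩
    simp [monomial_mul]
  · rintro ⟨c, ⟨a, ha, b, hb, rfl⟩, rfl⟩
    refine ⟨monomial a 1, ⟨a, ha, rfl⟩, monomial b 1, ⟨b, hb, rfl⟩, ?_⟩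
    simp [monomial_mul]

lemma X_eq_monomial (i : Fin s) : (X i : MvPolynomial (Fin s) K) =
    monomial (Finsupp.single i 1) 1 := by
  rw [← X_pow_eq_monomial, pow_one]

lemma pair_eq_MI (i j : Fin s) (w : ℕ) :
    (Ideal.span {X i, X j ^ w} : Ideal (MvPolynomial (Fin s) K)) =
      MI K {Finsupp.single i 1, Finsupp.single j w} := by
  unfold MI
  rw [Set.image_pair, X_eq_monomial, X_pow_eq_monomial]

/-- Exponent sets for powers of `(X i, X j ^ w)`. -/
def pairSet (i j : Fin s) (w n : ℕ) : Set (Fin s →₀ ℕ) :=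
  {b | ∃ k ≤ n, b = Finsupp.single i k + Finsupp.single j ((n - k) * w)}

lemma pair_pow_eq_MI (i j : Fin s) (w : ℕ) (n : ℕ) :
    (Ideal.span {X i, X j ^ w} : Ideal (MvPolynomial (Fin s) K)) ^ n =
      MI K (pairSet i j w n) := by
  induction n with
  | zero =>
    rw [pow_zero]
    have h0 : pairSet i j w 0 = {0} := by
      ext b
      simp only [pairSet, Set.mem_setOf_eq, Set.mem_singleton_iff]
      constructor
      · rintro ⟨k, hk, rfl⟩
        interval_cases k
        simp
      · rintro rfl
        exact ⟨0, le_rfl, by simp⟩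
    rw [h0]
    unfold MI
    rw [Set.image_singleton]
    have : monomial (0 : Fin s →₀ ℕ) (1 : K) = 1 := by
      simp [monomial_zero']
    rw [this, Ideal.span_singleton_one, Ideal.one_eq_top]
  | succ n ih =>
    rw [pow_succ, ih, pair_eq_MI, MI_mul]
    congr 1
    ext b
    constructor
    · rintro ⟨b1, ⟨k, hk, rfl⟩, b2, hb2, rfl⟩
      rcases hb2 with rfl | rfl
      · refine ⟨k + 1, by omega, ?_⟩
        have h1 : n + 1 - (k + 1) = n - k := by omega
        rw [h1]
        ext x
        simp only [Finsupp.add_apply, Finsupp.single_apply]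
        split_ifs <;> omega
      · refine ⟨k, by omega, ?_⟩
        have h1 : (n + 1 - k) * w = (n - k) * w + w := by
          rw [Nat.succ_sub hk, Nat.succ_mul]
        rw [h1]
        ext x
        simp only [Finsupp.add_apply, Finsupp.single_apply]
        split_ifs <;> omega
    · rintro ⟨k, hk, rfl⟩
      rcases Nat.eq_zero_or_pos k with rfl | hkpos
      · refine ⟨Finsupp.single i 0 + Finsupp.single j (n * w), ⟨0, Nat.zero_le n, rfl⟩,
          Finsupp.single j w, Or.inr rfl, ?_⟩
        have h1 : (n + 1 - 0) * w = n * w + w := by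
          rw [Nat.sub_zero, Nat.succ_mul]
        rw [h1]
        ext x
        simp only [Finsupp.add_apply, Finsupp.single_apply]
        split_ifs <;> omega
      · refine ⟨Finsupp.single i (k - 1) + Finsupp.single j ((n - (k - 1)) * w), ⟨k - 1, by omega, rfl⟩,
          Finsupp.single i 1, Or.inl rfl, ?_⟩
        have h1 : n - (k - 1) = n + 1 - k := by omega
        rw [h1]
        ext x
        simp only [Finsupp.add_apply, Finsupp.single_apply]
        split_ifs <;> omega

lemma pairSet_le_iff {i j : Fin s} (hij : i ≠ j) {w n : ℕ} (hw : 1 ≤ w) (m : Fin s →₀ ℕ) :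
    (∃ a ∈ pairSet i j w n, a ≤ m) ↔ n * w ≤ w * m i + m j := by
  constructor
  · rintro ⟨a, ⟨k, hk, rfl⟩, hle⟩
    rw [le_single_pair hij] at hle
    obtain ⟨h1, h2⟩ := hle
    have : n * w = k * w + (n - k) * w := by
      rw [← Nat.add_mul]
      congr 1
      omega
    rw [this]
    have hkw : k * w ≤ m i * w := Nat.mul_le_mul_right w h1
    calc k * w + (n - k) * w ≤ m i * w + m j := Nat.add_le_add hkw h2
    _ = w * m i + m j := by rw [Nat.mul_comm]
  · intro h
    refine ⟨Finsupp.single i (min (m i) n) + Finsupp.single j ((n - min (m i) n) * w),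
      ⟨min (m i) n, min_le_right _ _, rfl⟩, ?_⟩
    rw [le_single_pair hij]
    refine ⟨min_le_left _ _, ?_⟩
    rcases le_or_gt n (m i) with hc | hc
    · simp [Nat.min_eq_right hc]
    · rw [Nat.min_eq_left (le_of_lt hc), Nat.sub_mul]
      have : w * m i = m i * w := Nat.mul_comm _ _
      omega

lemma pair_pow_mem {i j : Fin s} (hij : i ≠ j) {w : ℕ} (hw : 1 ≤ w) {n : ℕ}
    {f : MvPolynomial (Fin s) K} :
    f ∈ (Ideal.span {X i, X j ^ w} : Ideal (MvPolynomial (Fin s) K)) ^ n ↔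
      ∀ m ∈ f.support, n * w ≤ w * m i + m j := by
  rw [pair_pow_eq_MI, mem_MI]
  exact forall₂_congr fun m _ => pairSet_le_iff hij hw m

end AuxNTF
namespace AuxNTF

variable {s : ℕ} {K : Type*} [Field K]

lemma spanXX_eq_MI (i j : Fin s) :
    (Ideal.span {X i, X j} : Ideal (MvPolynomial (Fin s) K)) =
      MI K {Finsupp.single i 1, Finsupp.single j 1} := by
  have : (X j : MvPolynomial (Fin s) K) = X j ^ 1 := (pow_one _).symm
  rw [this, pair_eq_MI]

lemma mem_spanXX {i j : Fin s} {f : MvPolynomial (Fin s) K} :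
    f ∈ (Ideal.span {X i, X j} : Ideal (MvPolynomial (Fin s) K)) ↔
      ∀ m ∈ f.support, 1 ≤ m i ∨ 1 ≤ m j := by
  rw [spanXX_eq_MI, mem_MI]
  refine forall₂_congr fun m _ => ?_
  constructor
  · rintro ⟨a, ha, hle⟩
    rcases ha with rfl | rfl
    · exact Or.inl (Finsupp.single_le_iff.1 hle)
    · exact Or.inr (Finsupp.single_le_iff.1 hle)
  · rintro (h | h)
    · exact ⟨Finsupp.single i 1, Or.inl rfl, Finsupp.single_le_iff.2 h⟩
    · exact ⟨Finsupp.single j 1, Or.inr rfl, Finsupp.single_le_iff.2 h⟩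

lemma X_mem_spanXX {i j k : Fin s} :
    (X k : MvPolynomial (Fin s) K) ∈
      (Ideal.span {X i, X j} : Ideal (MvPolynomial (Fin s) K)) ↔ k = i ∨ k = j := by
  rw [spanXX_eq_MI]
  have hX : (X k : MvPolynomial (Fin s) K) = monomial (Finsupp.single k 1) 1 :=
    X_eq_monomial k
  rw [hX, monomial_mem_MI]
  constructor
  · rintro ⟨a, ha, hle⟩
    rcases ha with rfl | rfl
    · left
      have := Finsupp.single_le_iff.1 hle
      rw [Finsupp.single_apply] at this
      by_contra hne
      simp [fun h : k = i => hne h] at this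
    · right
      have := Finsupp.single_le_iff.1 hle
      rw [Finsupp.single_apply] at this
      by_contra hne
      simp [fun h : k = j => hne h] at this
  · rintro (rfl | rfl)
    · exact ⟨Finsupp.single k 1, Or.inl rfl, le_rfl⟩
    · exact ⟨Finsupp.single k 1, Or.inr rfl, le_rfl⟩

open Classical in
lemma isPrime_spanXX (i j : Fin s) :
    (Ideal.span {X i, X j} : Ideal (MvPolynomial (Fin s) K)).IsPrime := by
  classical
  set g : Fin s → MvPolynomial (Fin s) K :=
    fun k => if k = i ∨ k = j then 0 else X k with hg
  set φ : MvPolynomial (Fin s) K →ₐ[K] MvPolynomial (Fin s) K := aeval g with hφ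
  have hmon0 : ∀ (m : Fin s →₀ ℕ) (c : K), (m i ≠ 0 ∨ m j ≠ 0) → φ (monomial m c) = 0 := by
    intro m c hm
    rw [hφ, aeval_monomial]
    have : (m.prod fun k e => g k ^ e) = 0 := by
      rcases hm with hm | hm
      · apply Finset.prod_eq_zero (Finsupp.mem_support_iff.2 hm)
        show g i ^ m i = 0
        have hgi : g i = 0 := by simp [hg]
        rw [hgi]
        exact zero_pow hm
      · apply Finset.prod_eq_zero (Finsupp.mem_support_iff.2 hm)
        show g j ^ m j = 0
        have hgj : g j = 0 := by simp [hg]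
        rw [hgj]
        exact zero_pow hm
    rw [this, mul_zero]
  have hmon1 : ∀ (m : Fin s →₀ ℕ) (c : K), m i = 0 → m j = 0 → φ (monomial m c) = monomial m c := by
    intro m c hmi hmj
    rw [hφ, aeval_monomial]
    have : (m.prod fun k e => g k ^ e) = (m.prod fun k e => (X k : MvPolynomial (Fin s) K) ^ e) := by
      apply Finsupp.prod_congr
      intro k hk
      have hki : k ≠ i := fun h => by
        subst h; exact (Finsupp.mem_support_iff.1 hk) hmi
      have hkj : k ≠ j := fun h => by
        subst h; exact (Finsupp.mem_support_iff.1 hk) hmj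
      rw [hg]
      simp [hki, hkj]
    rw [this, algebraMap_eq, ← monomial_eq]
  have hker : ∀ f : MvPolynomial (Fin s) K, φ f = 0 ↔ f ∈
      (Ideal.span {X i, X j} : Ideal (MvPolynomial (Fin s) K)) := by
    intro f
    rw [mem_spanXX]
    constructor
    · intro h0
      by_contra hmem
      push_neg at hmem
      obtain ⟨m0, hm0, hm0i, hm0j⟩ := hmem
      have hm0i' : m0 i = 0 := by omega
      have hm0j' : m0 j = 0 := by omega
      have : coeff m0 (φ f) = coeff m0 f := by
        conv_lhs => rw [f.as_sum, map_sum]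
        rw [MvPolynomial.coeff_sum]
        rw [Finset.sum_eq_single_of_mem m0 hm0]
        · rw [hmon1 _ _ hm0i' hm0j', coeff_monomial, if_pos rfl]
        · intro b hb hne
          by_cases hb0 : b i = 0 ∧ b j = 0
          · rw [hmon1 _ _ hb0.1 hb0.2, coeff_monomial, if_neg hne]
          · rw [hmon0]
            · exact MvPolynomial.coeff_zero m0
            · omega
      rw [h0] at this
      simp only [MvPolynomial.coeff_zero] at this
      exact (Finsupp.mem_support_iff.1 hm0) this.symm
    · intro hmem
      conv_lhs => rw [f.as_sum, map_sum]
      apply Finset.sum_eq_zero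
      intro m hm
      apply hmon0
      have := hmem m hm
      omega
  have hkereq : (Ideal.span {X i, X j} : Ideal (MvPolynomial (Fin s) K)) =
      RingHom.ker (φ : MvPolynomial (Fin s) K →+* MvPolynomial (Fin s) K) := by
    ext f
    rw [RingHom.mem_ker]
    exact (hker f).symm.trans (by rfl)
  rw [hkereq]
  exact RingHom.ker_isPrime _

/-- The key "lowest weighted degree" lemma used for primaryness. -/
lemma low_degree (L : (Fin s →₀ ℕ) → ℕ)
    (hL : ∀ a b, L (a + b) = L a + L b) {c x : MvPolynomial (Fin s) K} {N : ℕ}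
    (hc : ∃ p ∈ c.support, L p = 0)
    (h : ∀ μ ∈ (c * x).support, N ≤ L μ) :
    ∀ m ∈ x.support, N ≤ L m := by
  classical
  intro m hm
  -- minimal weighted degree of x
  have hTne : (x.support.image L).Nonempty := ⟨L m, Finset.mem_image_of_mem L hm⟩
  set d := (x.support.image L).min' hTne with hd
  have hdle : ∀ q ∈ x.support, d ≤ L q := fun q hq =>
    Finset.min'_le _ _ (Finset.mem_image_of_mem L hq)
  suffices hNd : N ≤ d by exact le_trans hNd (hdle m hm)
  obtain ⟨d0, hd0mem, hd0⟩ := Finset.mem_image.1 (Finset.min'_mem _ hTne)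
  -- maximal lex monomials in the extremal graded pieces
  set Sx := x.support.filter (fun q => L q = d) with hSx
  have hSxne : Sx.Nonempty := ⟨d0, Finset.mem_filter.2 ⟨hd0mem, hd0⟩⟩
  obtain ⟨qs, hqsS, hqsmax⟩ := Finset.exists_max_image Sx (fun q => toLex q) hSxne
  obtain ⟨hqs_supp, hqs_deg⟩ := Finset.mem_filter.1 hqsS
  set Sc := c.support.filter (fun p => L p = 0) with hSc
  obtain ⟨p0, hp0supp, hp0⟩ := hc
  have hScne : Sc.Nonempty := ⟨p0, Finset.mem_filter.2 ⟨hp0supp, hp0⟩⟩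
  obtain ⟨ps, hpsS, hpsmax⟩ := Finset.exists_max_image Sc (fun p => toLex p) hScne
  obtain ⟨hps_supp, hps_deg⟩ := Finset.mem_filter.1 hpsS
  have key : coeff (ps + qs) (c * x) = coeff ps c * coeff qs x := by
    rw [MvPolynomial.coeff_mul]
    apply Finset.sum_eq_single_of_mem (ps, qs) (Finset.HasAntidiagonal.mem_antidiagonal.2 rfl)
    rintro ⟨p, q⟩ hpq hne
    have hpq' : p + q = ps + qs := Finset.HasAntidiagonal.mem_antidiagonal.1 hpq
    by_contra hnz
    have hp : p ∈ c.support := MvPolynomial.mem_support_iff.2 (left_ne_zero_of_mul hnz)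
    have hq : q ∈ x.support := MvPolynomial.mem_support_iff.2 (right_ne_zero_of_mul hnz)
    have hsum : L p + L q = 0 + d := by
      rw [← hL, hpq', hL, hps_deg, hqs_deg]
    have hqge : d ≤ L q := hdle q hq
    have hLq : L q = d := by omega
    have hLp : L p = 0 := by omega
    have hpSc : p ∈ Sc := Finset.mem_filter.2 ⟨hp, hLp⟩
    have hqSx : q ∈ Sx := Finset.mem_filter.2 ⟨hq, hLq⟩
    have hple : toLex p ≤ toLex ps := hpsmax p hpSc
    have hqle : toLex q ≤ toLex qs := hqsmax q hqSx
    have hpeq : toLex p = toLex ps := by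
      by_contra hne'
      have hlt : toLex p < toLex ps := lt_of_le_of_ne hple hne'
      have h1 : toLex p + toLex q < toLex ps + toLex qs :=
        lt_of_lt_of_le (add_lt_add_left hlt (toLex q)) (add_le_add_right hqle (toLex ps))
      have h2 : toLex p + toLex q = toLex ps + toLex qs := congrArg toLex hpq'
      rw [h2] at h1
      exact lt_irrefl _ h1
    have hp' : p = ps := toLex_inj.1 hpeq
    subst hp'
    have hq' : q = qs := by
      have := add_left_cancel hpq'
      exact this
    subst hq'
    exact hne rfl
  have hmem : ps + qs ∈ (c * x).support :=
    MvPolynomial.mem_support_iff.2 (by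
      rw [key]
      exact mul_ne_zero (MvPolynomial.mem_support_iff.1 hps_supp)
        (MvPolynomial.mem_support_iff.1 hqs_supp))
  have := h _ hmem
  rw [hL, hps_deg, hqs_deg] at this
  omega

lemma primary_pair {i j : Fin s} (hij : i ≠ j) {w : ℕ} (hw : 1 ≤ w) {n : ℕ}
    {c x : MvPolynomial (Fin s) K}
    (hc : c ∉ (Ideal.span {X i, X j} : Ideal (MvPolynomial (Fin s) K)))
    (hcx : c * x ∈ (Ideal.span {X i, X j ^ w} : Ideal (MvPolynomial (Fin s) K)) ^ n) :
    x ∈ (Ideal.span {X i, X j ^ w} : Ideal (MvPolynomial (Fin s) K)) ^ n := by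
  rw [pair_pow_mem hij hw] at hcx ⊢
  rw [mem_spanXX] at hc
  push_neg at hc
  obtain ⟨m0, hm0, h1, h2⟩ := hc
  refine low_degree (fun m => w * m i + m j)
    (fun a b => by simp only [Finsupp.add_apply]; ring) ⟨m0, hm0, ?_⟩ hcx
  have e1 : m0 i = 0 := by omega
  have e2 : m0 j = 0 := by omega
  simp [e1, e2]

end AuxNTF
namespace AuxNTF

variable {s : ℕ} {K : Type*} [Field K] {D : WOGraph s}

lemma edge_ne {e : Fin s × Fin s} (he : e ∈ D.E) : e.1 ≠ e.2 := by
  intro h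
  apply D.no_loops e.1
  have : e = (e.1, e.2) := rfl
  rw [this, ← h] at he
  exact he

lemma mem_alexDual {f : MvPolynomial (Fin s) K} :
    f ∈ alexDual K D ↔ ∀ e ∈ D.E, f ∈ Ideal.span {X e.1, X e.2 ^ D.w e.2} := by
  unfold alexDual
  rw [Ideal.mem_iInf]
  exact forall_congr' fun e => Ideal.mem_iInf

lemma alexDual_le {e : Fin s × Fin s} (he : e ∈ D.E) :
    alexDual K D ≤ Ideal.span {X e.1, X e.2 ^ D.w e.2} := by
  intro f hf
  exact mem_alexDual.1 hf e he

/-- The edge set as a finset. -/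
noncomputable def Efin (D : WOGraph s) : Finset (Fin s × Fin s) :=
  (Set.toFinite D.E).toFinset

lemma mem_Efin {e : Fin s × Fin s} : e ∈ Efin D ↔ e ∈ D.E := Set.Finite.mem_toFinset _

lemma XX_mem_pair {e : Fin s × Fin s} :
    (X e.1 * X e.2 ^ D.w e.2 : MvPolynomial (Fin s) K) ∈
      Ideal.span {X e.1, X e.2 ^ D.w e.2} :=
  Ideal.mul_mem_right _ _ (Ideal.subset_span (Set.mem_insert _ _))

lemma prod_gen_mem : (∏ e ∈ Efin D, (X e.1 * X e.2 ^ D.w e.2 : MvPolynomial (Fin s) K))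
    ∈ alexDual K D := by
  rw [mem_alexDual]
  intro e he
  rw [← Finset.mul_prod_erase (Efin D) _ (mem_Efin.2 he)]
  exact Ideal.mul_mem_right _ _ XX_mem_pair

lemma alexDual_ne_bot : alexDual K D ≠ ⊥ := by
  intro h
  have := prod_gen_mem (K := K) (D := D)
  rw [h, Ideal.mem_bot] at this
  have hne : (∏ e ∈ Efin D, (X e.1 * X e.2 ^ D.w e.2 : MvPolynomial (Fin s) K)) ≠ 0 := by
    apply Finset.prod_ne_zero_iff.2
    intro e _
    exact mul_ne_zero (X_ne_zero _) (pow_ne_zero _ (X_ne_zero _))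
  exact hne this

lemma pair_le_XX {e : Fin s × Fin s} :
    (Ideal.span {X e.1, X e.2 ^ D.w e.2} : Ideal (MvPolynomial (Fin s) K)) ≤
      Ideal.span {X e.1, X e.2} := by
  apply Ideal.span_le.2
  intro f hf
  simp only [Set.mem_insert_iff, Set.mem_singleton_iff] at hf
  rcases hf with rfl | rfl
  · exact Ideal.subset_span (by simp)
  · have hmem : (X e.2 : MvPolynomial (Fin s) K) ∈ Ideal.span {X e.1, X e.2} :=
      Ideal.subset_span (by simp)
    exact Ideal.pow_mem_of_mem _ hmem _ (D.w_pos e.2)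

lemma alexDual_le_XX {e : Fin s × Fin s} (he : e ∈ D.E) :
    alexDual K D ≤ (Ideal.span {X e.1, X e.2} : Ideal (MvPolynomial (Fin s) K)) :=
  le_trans (alexDual_le he) pair_le_XX

/-- Any prime containing the Alexander dual contains one of the `(X i, X j)`. -/
lemma exists_XX_le {p : Ideal (MvPolynomial (Fin s) K)} (hp : p.IsPrime)
    (hle : alexDual K D ≤ p) :
    ∃ e ∈ D.E, Ideal.span {X e.1, X e.2} ≤ p := by
  have hprod : (∏ e ∈ Efin D, (Ideal.span {X e.1, X e.2 ^ D.w e.2} :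
      Ideal (MvPolynomial (Fin s) K))) ≤ p := by
    refine le_trans (le_trans Ideal.prod_le_inf ?_) hle
    refine le_iInf fun e => le_iInf fun he => Finset.inf_le (mem_Efin.2 he)
  obtain ⟨e, heE, hele⟩ := (hp.prod_le).1 hprod
  refine ⟨e, mem_Efin.1 heE, ?_⟩
  rw [Ideal.span_le]
  rintro f (rfl | rfl)
  · exact hele (Ideal.subset_span (Set.mem_insert _ _))
  · exact hp.mem_of_pow_mem _ (hele (Ideal.subset_span (Set.mem_insert_of_mem _ rfl)))

lemma XX_le_XX_iff {e f : Fin s × Fin s} (he : e ∈ D.E) (hf : f ∈ D.E)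
    (hle : (Ideal.span {X e.1, X e.2} : Ideal (MvPolynomial (Fin s) K)) ≤
      Ideal.span {X f.1, X f.2}) : e = f := by
  have h1 : e.1 = f.1 ∨ e.1 = f.2 :=
    X_mem_spanXX.1 (hle (Ideal.subset_span (Set.mem_insert _ _)))
  have h2 : e.2 = f.1 ∨ e.2 = f.2 :=
    X_mem_spanXX.1 (hle (Ideal.subset_span (Set.mem_insert_of_mem _ rfl)))
  have hee := edge_ne he
  have hff := edge_ne hf
  have hef : e = (e.1, e.2) := rfl
  have hff' : f = (f.1, f.2) := rfl
  rcases h1 with h1 | h1 <;> rcases h2 with h2 | h2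
  · exact absurd (h1.trans h2.symm) hee
  · rw [hef, hff', h1, h2]
  · -- e = (f.2, f.1), contradiction with no_two_orientations
    exfalso
    have : (f.2, f.1) ∈ D.E := by
      rw [hef, h1, h2] at he
      exact he
    exact D.no_two_orientations f.1 f.2 (by rw [← hff']; exact hf) this
  · exact absurd (h1.trans h2.symm) hee

lemma minimalPrimes_alexDual :
    (alexDual K D).minimalPrimes =
      {P | ∃ e ∈ D.E, P = (Ideal.span {X e.1, X e.2} : Ideal (MvPolynomial (Fin s) K))} := by
  ext p
  constructor
  · intro hp
    obtain ⟨⟨hprime, hle⟩, hmin⟩ := hp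
    obtain ⟨e, he, hXXle⟩ := exists_XX_le hprime hle
    have hback : p ≤ Ideal.span {X e.1, X e.2} :=
      hmin ⟨isPrime_spanXX e.1 e.2, alexDual_le_XX he⟩ hXXle
    exact ⟨e, he, le_antisymm hback hXXle⟩
  · rintro ⟨e, he, rfl⟩
    constructor
    · exact ⟨isPrime_spanXX e.1 e.2, alexDual_le_XX he⟩
    · rintro y ⟨hyprime, hyle⟩ hysub
      obtain ⟨f, hf, hXXle⟩ := exists_XX_le hyprime hyle
      have : f = e := XX_le_XX_iff hf he (le_trans hXXle hysub)
      subst this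
      exact hXXle

end AuxNTF
namespace AuxNTF

variable {s : ℕ} {K : Type*} [Field K] {D : WOGraph s}

open Classical in
/-- The multiplier avoiding the prime `(X e.1, X e.2)` but lying in all other components. -/
noncomputable def uMult (K : Type*) [Field K] (D : WOGraph s) (e : Fin s × Fin s) :
    MvPolynomial (Fin s) K :=
  ∏ f ∈ (Efin D).erase e,
    (if f.1 = e.1 ∨ f.1 = e.2 then X f.2 ^ D.w f.2 else X f.1)

open Classical in
lemma uMult_factor_mem {e f : Fin s × Fin s} :
    (if f.1 = e.1 ∨ f.1 = e.2 then (X f.2 ^ D.w f.2 : MvPolynomial (Fin s) K) else X f.1)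
      ∈ Ideal.span {X f.1, X f.2 ^ D.w f.2} := by
  split_ifs
  · exact Ideal.subset_span (by simp)
  · exact Ideal.subset_span (by simp)

open Classical in
lemma uMult_factor_not_mem {e f : Fin s × Fin s} (he : e ∈ D.E) (hf : f ∈ D.E) (hne : f ≠ e) :
    (if f.1 = e.1 ∨ f.1 = e.2 then (X f.2 ^ D.w f.2 : MvPolynomial (Fin s) K) else X f.1)
      ∉ Ideal.span {X e.1, X e.2} := by
  have hee := edge_ne he
  have hff := edge_ne hf
  split_ifs with hcase
  · intro hmem
    have hX2 : (X f.2 : MvPolynomial (Fin s) K) ∈ Ideal.span {X e.1, X e.2} :=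
      (isPrime_spanXX e.1 e.2).mem_of_pow_mem _ hmem
    have h2 : f.2 = e.1 ∨ f.2 = e.2 := X_mem_spanXX.1 hX2
    -- now {f.1, f.2} ⊆ {e.1, e.2}, f ≠ e, contradictions
    have hef : e = (e.1, e.2) := rfl
    have hff' : f = (f.1, f.2) := rfl
    rcases hcase with h1 | h1 <;> rcases h2 with h2 | h2
    · exact hff (h1.trans h2.symm)
    · exact hne (by rw [hff', hef, h1, h2])
    · -- f = (e.2, e.1) ∈ E contradicts no_two_orientations
      have : (e.2, e.1) ∈ D.E := by rw [hff', h1, h2] at hf; exact hf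
      exact D.no_two_orientations e.1 e.2 (by rw [← hef]; exact he) this
    · exact hff (h1.trans h2.symm)
  · intro hmem
    have h1 : f.1 = e.1 ∨ f.1 = e.2 := X_mem_spanXX.1 hmem
    exact hcase h1

lemma uMult_not_mem {e : Fin s × Fin s} (he : e ∈ D.E) :
    uMult K D e ∉ Ideal.span {X e.1, X e.2} := by
  classical
  have hP := isPrime_spanXX (K := K) e.1 e.2
  unfold uMult
  apply Finset.prod_induction _ (fun y => y ∉ Ideal.span {X e.1, X e.2})
  · intro a b ha hb hab
    rcases hP.mem_or_mem hab with h | h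
    · exact ha h
    · exact hb h
  · intro h1
    exact hP.ne_top ((Ideal.eq_top_iff_one _).2 h1)
  · intro f hfmem
    have hf : f ∈ D.E := mem_Efin.1 (Finset.mem_of_mem_erase hfmem)
    have hne : f ≠ e := Finset.ne_of_mem_erase hfmem
    exact uMult_factor_not_mem he hf hne

lemma uMult_mul_mem {e : Fin s × Fin s} (he : e ∈ D.E) {y : MvPolynomial (Fin s) K}
    (hy : y ∈ Ideal.span {X e.1, X e.2 ^ D.w e.2}) :
    uMult K D e * y ∈ alexDual K D := by
  classical
  rw [mem_alexDual]
  intro f hf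
  by_cases hfe : f = e
  · subst hfe
    exact Ideal.mul_mem_left _ _ hy
  · have hmem : f ∈ (Efin D).erase e :=
      Finset.mem_erase.2 ⟨hfe, mem_Efin.2 hf⟩
    unfold uMult
    rw [← Finset.mul_prod_erase _ _ hmem, mul_assoc]
    exact Ideal.mul_mem_right _ _ uMult_factor_mem

lemma contractAt_alexDual_pow {e : Fin s × Fin s} (he : e ∈ D.E)
    (hP : (Ideal.span {X e.1, X e.2} : Ideal (MvPolynomial (Fin s) K)).IsPrime) (n : ℕ) :
    contractAt ((alexDual K D) ^ n) (Ideal.span {X e.1, X e.2}) hP =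
      Ideal.span {X e.1, X e.2 ^ D.w e.2} ^ n := by
  letI := hP
  set P : Ideal (MvPolynomial (Fin s) K) := Ideal.span {X e.1, X e.2} with hPdef
  set alg := algebraMap (MvPolynomial (Fin s) K) (Localization.AtPrime P) with halg
  have hmapeq : Ideal.map alg (alexDual K D) =
      Ideal.map alg (Ideal.span {X e.1, X e.2 ^ D.w e.2}) := by
    apply le_antisymm
    · exact Ideal.map_mono (alexDual_le he)
    · rw [Ideal.map_le_iff_le_comap]
      intro y hy
      have h1 : alg (uMult K D e * y) ∈ Ideal.map alg (alexDual K D) :=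
        Ideal.mem_map_of_mem _ (uMult_mul_mem he hy)
      have hunit : IsUnit (alg (uMult K D e)) :=
        IsLocalization.map_units (Localization.AtPrime P)
          (⟨uMult K D e, uMult_not_mem he⟩ : P.primeCompl)
      obtain ⟨uu, huu⟩ := hunit
      have heq : alg y = ↑uu⁻¹ * alg (uMult K D e * y) := by
        rw [map_mul, ← huu, Units.inv_mul_cancel_left]
      rw [Ideal.mem_comap, heq]
      exact Ideal.mul_mem_left _ _ h1
  have hcomap : Ideal.comap alg (Ideal.map alg (Ideal.span {X e.1, X e.2 ^ D.w e.2} ^ n)) =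
      Ideal.span {X e.1, X e.2 ^ D.w e.2} ^ n := by
    apply le_antisymm
    · intro x hx
      rw [Ideal.mem_comap] at hx
      rw [IsLocalization.mem_map_algebraMap_iff P.primeCompl] at hx
      obtain ⟨⟨⟨a, ha⟩, ⟨m, hm⟩⟩, hEq⟩ := hx
      simp only at hEq
      rw [← map_mul] at hEq
      rw [IsLocalization.eq_iff_exists P.primeCompl] at hEq
      obtain ⟨⟨cc, hcc⟩, hc⟩ := hEq
      have hmem : (cc * m) * x ∈ Ideal.span {X e.1, X e.2 ^ D.w e.2} ^ n := by
        have hre : cc * (x * m) = (cc * m) * x := by ring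
        rw [← hre]
        simp only at hc
        rw [hc]
        exact Ideal.mul_mem_left _ _ ha
      have hnot : (cc * m) ∉ P := Submonoid.mul_mem P.primeCompl hcc hm
      exact primary_pair (edge_ne he) (D.w_pos e.2) hnot hmem
    · exact Ideal.le_comap_map
  show Ideal.comap alg (Ideal.map alg ((alexDual K D) ^ n)) = _
  rw [Ideal.map_pow, hmapeq, ← Ideal.map_pow]
  exact hcomap

lemma symbolicPower_alexDual_eq (n : ℕ) :
    symbolicPower (alexDual K D) n =
      ⨅ e ∈ D.E, (Ideal.span {X e.1, X e.2 ^ D.w e.2} :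
        Ideal (MvPolynomial (Fin s) K)) ^ n := by
  unfold symbolicPower
  apply le_antisymm
  · apply le_iInf; intro e; apply le_iInf; intro he
    have hmem : (Ideal.span {X e.1, X e.2} : Ideal (MvPolynomial (Fin s) K)) ∈
        (alexDual K D).minimalPrimes := by
      rw [minimalPrimes_alexDual]
      exact ⟨e, he, rfl⟩
    have hle : (⨅ (p : Ideal (MvPolynomial (Fin s) K))
          (hp : p ∈ (alexDual K D).minimalPrimes),
          contractAt ((alexDual K D) ^ n) p hp.1.1) ≤
        contractAt ((alexDual K D) ^ n) _ hmem.1.1 := by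
      exact le_trans (iInf_le _ _) (iInf_le _ hmem)
    rw [contractAt_alexDual_pow he hmem.1.1 n] at hle
    exact hle
  · apply le_iInf; intro p; apply le_iInf; intro hp
    have hp' : p ∈ {P | ∃ e ∈ D.E, P = (Ideal.span {X e.1, X e.2} :
        Ideal (MvPolynomial (Fin s) K))} := by
      rw [← minimalPrimes_alexDual]; exact hp
    obtain ⟨e, he, rfl⟩ := hp'
    rw [contractAt_alexDual_pow he hp.1.1 n]
    exact le_trans (iInf_le _ e) (iInf_le _ he)

lemma mem_symbolicPower_alexDual {n : ℕ} {f : MvPolynomial (Fin s) K} :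
    f ∈ symbolicPower (alexDual K D) n ↔
      ∀ e ∈ D.E, ∀ m ∈ f.support, n * D.w e.2 ≤ D.w e.2 * m e.1 + m e.2 := by
  rw [symbolicPower_alexDual_eq, Ideal.mem_iInf]
  refine forall_congr' fun e => ?_
  rw [Ideal.mem_iInf]
  refine forall_congr' fun he => ?_
  exact pair_pow_mem (edge_ne he) (D.w_pos e.2)

end AuxNTF
namespace AuxNTF

variable {s q : ℕ} {K : Type*} [Field K]

/-- Weighted sums of the generators' exponents. -/
noncomputable def vsum (v : Fin q → (Fin s →₀ ℕ)) (k : Fin q → ℕ) : Fin s →₀ ℕ :=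
  ∑ j, k j • v j

/-- Exponents of the `n`-th power of the monomial ideal generated by the `v j`. -/
def SS (v : Fin q → (Fin s →₀ ℕ)) (n : ℕ) : Set (Fin s →₀ ℕ) :=
  {b | ∃ k : Fin q → ℕ, (∑ j, k j) = n ∧ b = vsum v k}

lemma vsum_apply (v : Fin q → (Fin s →₀ ℕ)) (k : Fin q → ℕ) (i : Fin s) :
    vsum v k i = ∑ j, k j * v j i := by
  unfold vsum
  rw [Finsupp.finset_sum_apply]
  apply Finset.sum_congr rfl
  intro j _
  rw [Finsupp.smul_apply, smul_eq_mul]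

lemma MI_range_pow (v : Fin q → (Fin s →₀ ℕ)) (n : ℕ) :
    (MI K (Set.range v)) ^ n = MI K (SS v n) := by
  classical
  induction n with
  | zero =>
    rw [pow_zero]
    have h0 : SS v 0 = {0} := by
      ext b
      constructor
      · rintro ⟨k, hk, rfl⟩
        have hkj : ∀ j, k j = 0 := by
          intro j
          have := Finset.sum_eq_zero_iff.1 hk j (Finset.mem_univ j)
          exact this
        have : vsum v k = 0 := by
          unfold vsum
          apply Finset.sum_eq_zero
          intro j _
          rw [hkj j, zero_smul]
        simpa [this]
      · rintro rfl
        refine ⟨fun _ => 0, by simp, ?_⟩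
        unfold vsum
        simp
    rw [h0]
    unfold MI
    rw [Set.image_singleton]
    have h1 : monomial (0 : Fin s →₀ ℕ) (1 : K) = 1 := by simp [monomial_zero']
    rw [h1, Ideal.span_singleton_one, Ideal.one_eq_top]
  | succ n ih =>
    rw [pow_succ, ih, MI_mul]
    congr 1
    ext b
    constructor
    · rintro ⟨b1, ⟨k, hk, rfl⟩, b2, ⟨j0, rfl⟩, rfl⟩
      refine ⟨fun jj => k jj + if jj = j0 then 1 else 0, ?_, ?_⟩
      · rw [Finset.sum_add_distrib, hk, Finset.sum_ite_eq' Finset.univ j0 (fun _ => 1)]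
        simp
      · unfold vsum
        have hsplit : ∀ jj, (k jj + if jj = j0 then 1 else 0) • v jj =
            k jj • v jj + (if jj = j0 then v jj else 0) := by
          intro jj
          rw [add_smul]
          congr 1
          split_ifs <;> simp
        rw [Finset.sum_congr rfl (fun jj _ => hsplit jj), Finset.sum_add_distrib,
          Finset.sum_ite_eq' Finset.univ j0 (fun jj => v jj)]
        simp
    · rintro ⟨k, hk, rfl⟩
      have hne : ∃ j0, k j0 ≠ 0 := by
        by_contra hcon
        push_neg at hcon
        rw [Finset.sum_eq_zero (fun j _ => hcon j)] at hk
        omega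
      obtain ⟨j0, hj0⟩ := hne
      set k' : Fin q → ℕ := fun jj => if jj = j0 then k j0 - 1 else k jj with hk'
      have hcongr : ∀ jj ∈ Finset.univ.erase j0, k' jj = k jj := by
        intro jj hjj
        rw [hk']
        simp [Finset.ne_of_mem_erase hjj]
      refine ⟨vsum v k', ⟨k', ?_, rfl⟩, v j0, ⟨j0, rfl⟩, ?_⟩
      · have e1 := Finset.add_sum_erase Finset.univ k (Finset.mem_univ j0)
        have e2 := Finset.add_sum_erase Finset.univ k' (Finset.mem_univ j0)
        have e3 : ∑ jj ∈ Finset.univ.erase j0, k' jj = ∑ jj ∈ Finset.univ.erase j0, k jj :=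
          Finset.sum_congr rfl hcongr
        have e4 : k' j0 = k j0 - 1 := by rw [hk']; simp
        omega
      · unfold vsum
        have e1 : k j0 • v j0 + ∑ x ∈ Finset.univ.erase j0, k x • v x = ∑ x, k x • v x :=
          Finset.add_sum_erase Finset.univ (fun jj => k jj • v jj) (Finset.mem_univ j0)
        have e2 : k' j0 • v j0 + ∑ x ∈ Finset.univ.erase j0, k' x • v x = ∑ x, k' x • v x :=
          Finset.add_sum_erase Finset.univ (fun jj => k' jj • v jj) (Finset.mem_univ j0)
        have e3 : ∑ jj ∈ Finset.univ.erase j0, k' jj • v jj =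
            ∑ jj ∈ Finset.univ.erase j0, k jj • v jj :=
          Finset.sum_congr rfl (fun jj hjj => by rw [hcongr jj hjj])
        rw [← e1, ← e2, e3]
        have e4 : k' j0 = k j0 - 1 := by rw [hk']; simp
        rw [e4]
        have e5 : k j0 • v j0 = (k j0 - 1) • v j0 + v j0 := by
          conv_lhs => rw [show k j0 = (k j0 - 1) + 1 by omega]
          rw [add_nsmul, one_nsmul]
        rw [e5]
        abel

lemma monomial_mem_MI_pow {v : Fin q → (Fin s →₀ ℕ)} {n : ℕ} {a : Fin s →₀ ℕ} :
    monomial a (1 : K) ∈ (MI K (Set.range v)) ^ n ↔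
      ∃ k : Fin q → ℕ, (∑ j, k j) = n ∧ vsum v k ≤ a := by
  rw [MI_range_pow, monomial_mem_MI]
  constructor
  · rintro ⟨b, ⟨k, hk, rfl⟩, hle⟩
    exact ⟨k, hk, hle⟩
  · rintro ⟨k, hk, hle⟩
    exact ⟨vsum v k, ⟨k, hk, rfl⟩, hle⟩

lemma span_gen_eq_MI (v : Fin q → (Fin s →₀ ℕ)) :
    (Ideal.span { f | ∃ j : Fin q, f = monomial (v j) (1 : K) } :
      Ideal (MvPolynomial (Fin s) K)) = MI K (Set.range v) := by
  unfold MI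
  congr 1
  ext f
  constructor
  · rintro ⟨j, rfl⟩
    exact ⟨v j, ⟨j, rfl⟩, rfl⟩
  · rintro ⟨a, ⟨j, rfl⟩, rfl⟩
    exact ⟨j, rfl⟩

end AuxNTF
namespace AuxNTF

/-- Carathéodory-type step: a conic representation can be made linearly independent. -/
lemma cone_caratheodory {ι κ : Type} [Fintype ι] [Fintype κ] [DecidableEq κ]
    (G : κ → ι → ℝ) (X : ι → ℝ) :
    ∀ (N : ℕ) (T : Finset κ), T.card ≤ N →
    (∃ lam : κ → ℝ, (∀ j, 0 ≤ lam j) ∧ (∀ j ∉ T, lam j = 0) ∧ X = ∑ j ∈ T, lam j • G j) →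
    ∃ (T' : Finset κ) (lam : κ → ℝ), (∀ j, 0 ≤ lam j) ∧ (∀ j ∉ T', lam j = 0) ∧
      X = (∑ j ∈ T', lam j • G j) ∧ LinearIndependent ℝ (fun j : T' => G j) := by
  intro N
  induction N with
  | zero =>
    intro T hT hfeas
    obtain ⟨lam, h0, hsupp, hX⟩ := hfeas
    have hTempty : T = ∅ := Finset.card_eq_zero.1 (Nat.le_zero.1 hT)
    subst hTempty
    haveI : IsEmpty ((∅ : Finset κ) : Type) := by
      constructor
      rintro ⟨x, hx⟩
      exact absurd hx (Finset.notMem_empty x)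
    exact ⟨∅, lam, h0, hsupp, hX, linearIndependent_empty_type⟩
  | succ N ih =>
    intro T hT hfeas
    obtain ⟨lam, h0, hsupp, hX⟩ := hfeas
    by_cases hli : LinearIndependent ℝ (fun j : T => G j)
    · exact ⟨T, lam, h0, hsupp, hX, hli⟩
    rw [Fintype.not_linearIndependent_iff] at hli
    obtain ⟨cc, hccsum, i0, hi0⟩ := hli
    set α : κ → ℝ := fun j => if h : j ∈ T then cc ⟨j, h⟩ else 0 with hα
    have hαsum : ∑ j ∈ T, α j • G j = 0 := by
      rw [← Finset.sum_attach T (fun j => α j • G j)]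
      rw [← hccsum, ← Finset.univ_eq_attach]
      apply Finset.sum_congr rfl
      intro x _
      congr 1
      rw [hα]
      simp [x.2]
    have hαoff : ∀ j ∉ T, α j = 0 := by
      intro j hj
      rw [hα]
      simp [hj]
    have hαne : α ↑i0 ≠ 0 := by
      rw [hα]
      simpa [i0.2] using hi0
    -- find a direction with a positive coefficient
    obtain ⟨β, hβoff, hβsum, j1, hj1T, hj1pos⟩ :
        ∃ β : κ → ℝ, (∀ j ∉ T, β j = 0) ∧ (∑ j ∈ T, β j • G j = 0) ∧
          ∃ j1 ∈ T, 0 < β j1 := by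
      rcases lt_or_gt_of_ne hαne with hneg | hpos
      · refine ⟨fun j => -α j, ?_, ?_, ↑i0, i0.2, by simpa using hneg⟩
        · intro j hj
          show -α j = 0
          rw [hαoff j hj, neg_zero]
        · show ∑ j ∈ T, (-α j) • G j = 0
          have hh : ∀ j ∈ T, (-α j) • G j = -(α j • G j) := fun j _ => by rw [neg_smul]
          rw [Finset.sum_congr rfl hh, Finset.sum_neg_distrib, hαsum, neg_zero]
      · exact ⟨α, hαoff, hαsum, ↑i0, i0.2, hpos⟩
    set P := T.filter (fun j => 0 < β j) with hPdef
    have hPne : P.Nonempty := ⟨j1, Finset.mem_filter.2 ⟨hj1T, hj1pos⟩⟩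
    obtain ⟨jm, hjmP, hjmmin⟩ := Finset.exists_min_image P (fun j => lam j / β j) hPne
    obtain ⟨hjmT, hjmpos⟩ := Finset.mem_filter.1 hjmP
    set t := lam jm / β jm with ht
    have ht0 : 0 ≤ t := div_nonneg (h0 jm) (le_of_lt hjmpos)
    set lam' : κ → ℝ := fun j => lam j - t * β j with hlam'
    have h0' : ∀ j, 0 ≤ lam' j := by
      intro j
      rw [hlam']
      simp only
      rcases le_or_gt (β j) 0 with hβj | hβj
      · have : t * β j ≤ 0 := mul_nonpos_of_nonneg_of_nonpos ht0 hβj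
        have := h0 j
        linarith
      · have hjT : j ∈ T := by
          by_contra hjT
          rw [hβoff j hjT] at hβj
          exact lt_irrefl _ hβj
        have hjP : j ∈ P := Finset.mem_filter.2 ⟨hjT, hβj⟩
        have hmin := hjmmin j hjP
        rw [le_div_iff₀ hβj] at hmin
        linarith
    have hsupp' : ∀ j ∉ T.erase jm, lam' j = 0 := by
      intro j hj
      rw [Finset.mem_erase] at hj
      push_neg at hj
      rw [hlam']
      simp only
      by_cases hjT : j ∈ T
      · have hjm : j = jm := by
          by_contra hne
          exact hj hne hjT
        subst hjm
        rw [ht]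
        field_simp
        ring
      · rw [hsupp j hjT, hβoff j hjT]
        ring
    have hX' : X = ∑ j ∈ T.erase jm, lam' j • G j := by
      have e0 : ∑ j ∈ T, lam' j • G j = ∑ j ∈ T, lam j • G j - t • ∑ j ∈ T, β j • G j := by
        rw [Finset.smul_sum, ← Finset.sum_sub_distrib]
        apply Finset.sum_congr rfl
        intro j _
        rw [hlam']
        simp only
        rw [sub_smul, mul_smul]
      have e1 : ∑ j ∈ T, lam' j • G j = X := by
        rw [e0, hβsum, smul_zero, sub_zero]
        exact hX.symm
      have e2 : lam' jm • G jm + ∑ j ∈ T.erase jm, lam' j • G j = ∑ j ∈ T, lam' j • G j :=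
        Finset.add_sum_erase T (fun j => lam' j • G j) hjmT
      have e3 : lam' jm = 0 := by
        rw [hlam']
        simp only
        rw [ht]
        field_simp
        ring
      rw [e3] at e2
      rw [zero_smul, zero_add] at e2
      rw [← e1, ← e2]
    have hcard : (T.erase jm).card ≤ N := by
      have := Finset.card_erase_of_mem hjmT
      omega
    exact ih (T.erase jm) hcard ⟨lam', h0', hsupp', hX'⟩

/-- A rational vector in the real span of rational vectors is in the rational span. -/
lemma rat_mem_span {ι κ' : Type} [Fintype ι] [DecidableEq ι] [Fintype κ']
    (g : κ' → ι → ℚ) (x : ι → ℚ) (lam : κ' → ℝ)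
    (hX : (fun i => (x i : ℝ)) = ∑ j, lam j • (fun i => (g j i : ℝ))) :
    x ∈ Submodule.span ℚ (Set.range g) := by
  by_contra hx
  set W := Submodule.span ℚ (Set.range g) with hW
  have hπx : Submodule.Quotient.mk (p := W) x ≠ 0 := by
    intro h
    exact hx ((Submodule.Quotient.mk_eq_zero W).1 h)
  have hφ : ∃ φ : Module.Dual ℚ ((ι → ℚ) ⧸ W), φ (Submodule.Quotient.mk x) ≠ 0 := by
    by_contra hcon
    push_neg at hcon
    exact hπx ((Module.forall_dual_apply_eq_zero_iff ℚ _).1 hcon)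
  obtain ⟨φ, hφx⟩ := hφ
  set ψ : (ι → ℚ) →ₗ[ℚ] ℚ := φ.comp W.mkQ with hψ
  have hψx : ψ x ≠ 0 := by
    rw [hψ]
    simpa using hφx
  have hψg : ∀ j, ψ (g j) = 0 := by
    intro j
    rw [hψ]
    simp only [LinearMap.comp_apply, Submodule.mkQ_apply]
    have : (Submodule.Quotient.mk (p := W) (g j)) = 0 :=
      (Submodule.Quotient.mk_eq_zero W).2 (Submodule.subset_span ⟨j, rfl⟩)
    rw [this, map_zero]
  -- realize ψ with rational coordinates
  set u : ι → ℚ := fun i => ψ (fun j => if i = j then 1 else 0) with hu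
  have hψeq : ∀ y : ι → ℚ, ψ y = ∑ i, y i * u i := by
    intro y
    conv_lhs => rw [pi_eq_sum_univ y, map_sum]
    apply Finset.sum_congr rfl
    intro i _
    rw [map_smul, smul_eq_mul]
  have hreal : ∀ y : ι → ℚ, ((ψ y : ℚ) : ℝ) = ∑ i, (y i : ℝ) * (u i : ℝ) := by
    intro y
    rw [hψeq y]
    push_cast
    rfl
  have hcontr : ((ψ x : ℚ) : ℝ) = 0 := by
    rw [hreal]
    have hXi : ∀ i, (x i : ℝ) = ∑ j, lam j * (g j i : ℝ) := by
      intro i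
      have := congrFun hX i
      simpa [Finset.sum_apply] using this
    calc ∑ i, (x i : ℝ) * (u i : ℝ)
        = ∑ i, (∑ j, lam j * (g j i : ℝ)) * (u i : ℝ) := by
          apply Finset.sum_congr rfl
          intro i _
          rw [hXi i]
      _ = ∑ i, ∑ j, lam j * ((g j i : ℝ) * (u i : ℝ)) := by
          apply Finset.sum_congr rfl
          intro i _
          rw [Finset.sum_mul]
          apply Finset.sum_congr rfl
          intro j _
          ring
      _ = ∑ j, ∑ i, lam j * ((g j i : ℝ) * (u i : ℝ)) := Finset.sum_comm
      _ = ∑ j, lam j * ∑ i, (g j i : ℝ) * (u i : ℝ) := by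
          apply Finset.sum_congr rfl
          intro j _
          rw [Finset.mul_sum]
      _ = ∑ j, lam j * ((ψ (g j) : ℚ) : ℝ) := by
          apply Finset.sum_congr rfl
          intro j _
          rw [hreal (g j)]
      _ = 0 := by
          apply Finset.sum_eq_zero
          intro j _
          rw [hψg j]
          simp
  rw [Rat.cast_eq_zero] at hcontr
  exact hψx hcontr

/-- The main rationality lemma: real conic representations with rational data
can be replaced by rational ones. -/
lemma rat_cone {ι κ : Type} [Fintype ι] [Fintype κ] [DecidableEq κ] [DecidableEq ι]
    (g : κ → ι → ℚ) (x : ι → ℚ)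
    (lam : κ → ℝ) (hlam : ∀ j, 0 ≤ lam j)
    (heq : (fun i => (x i : ℝ)) = ∑ j, lam j • (fun i => (g j i : ℝ))) :
    ∃ mu : κ → ℚ, (∀ j, 0 ≤ mu j) ∧ (fun i => x i) = ∑ j, mu j • g j := by
  classical
  set G : κ → ι → ℝ := fun j => fun i => (g j i : ℝ) with hG
  set X : ι → ℝ := fun i => (x i : ℝ) with hXdef
  obtain ⟨T, lam', h0', hsupp', hX', hli⟩ :=
    cone_caratheodory G X (Finset.univ.card) Finset.univ (le_refl _)
      ⟨lam, hlam, fun j hj => absurd (Finset.mem_univ j) hj, heq⟩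
  -- x is in the rational span of the g j for j ∈ T
  have hXT : X = ∑ j : T, lam' ↑j • G ↑j := by
    rw [Finset.univ_eq_attach, Finset.sum_attach T (fun j => lam' j • G j)]
    exact hX'
  have hspan : x ∈ Submodule.span ℚ (Set.range (fun j : T => g ↑j)) :=
    rat_mem_span (fun j : T => g ↑j) x (fun j : T => lam' ↑j) hXT
  rw [Finsupp.mem_span_range_iff_exists_finsupp] at hspan
  obtain ⟨cf, hcf⟩ := hspan
  set cq : T → ℚ := fun j => cf j with hcq
  have hcfx : ∑ j : T, cq j • g ↑j = x := by
    rw [← hcf]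
    rw [Finsupp.sum_fintype]
    intro j
    rw [zero_smul]
  -- coefficients coincide with the real ones by linear independence
  have hreal : ∑ j : T, ((cq j : ℝ)) • G ↑j = X := by
    rw [hXdef]
    ext i
    have hxi := congrFun hcfx i
    simp only [Finset.sum_apply, Pi.smul_apply, smul_eq_mul] at hxi ⊢
    rw [← hxi]
    push_cast
    apply Finset.sum_congr rfl
    intro j _
    rw [hG]
  have hcoeff : ∀ j : T, lam' ↑j = (cq j : ℝ) := by
    have hdiff : ∑ j : T, (lam' ↑j - (cq j : ℝ)) • G ↑j = 0 := by
      calc ∑ j : T, (lam' ↑j - (cq j : ℝ)) • G ↑j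
          = ∑ j : T, (lam' ↑j • G ↑j - (cq j : ℝ) • G ↑j) :=
            Finset.sum_congr rfl (fun j _ => sub_smul _ _ _)
        _ = (∑ j : T, lam' ↑j • G ↑j) - ∑ j : T, (cq j : ℝ) • G ↑j :=
            Finset.sum_sub_distrib _ _
        _ = X - X := by rw [hreal, ← hXT]
        _ = 0 := sub_self X
    intro j
    have := Fintype.linearIndependent_iff.1 hli (fun j => lam' ↑j - (cq j : ℝ)) hdiff j
    linarith [this]
  set mu : κ → ℚ := fun j => if h : j ∈ T then cq ⟨j, h⟩ else 0 with hmu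
  refine ⟨mu, ?_, ?_⟩
  · intro j
    rw [hmu]
    by_cases h : j ∈ T
    · simp only [dif_pos h]
      have := hcoeff ⟨j, h⟩
      have h0 := h0' j
      rw [this] at h0
      exact_mod_cast h0
    · simp [dif_neg h]
  · show x = ∑ j : κ, mu j • g j
    symm
    calc ∑ j : κ, mu j • g j
        = ∑ j ∈ T, mu j • g j := by
          symm
          apply Finset.sum_subset (Finset.subset_univ T)
          intro j _ hjT
          rw [hmu]
          simp [dif_neg hjT]
      _ = ∑ j : T, mu ↑j • g ↑j := by
          rw [Finset.univ_eq_attach, Finset.sum_attach T (fun j => mu j • g j)]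
      _ = ∑ j : T, cq j • g ↑j := by
          apply Finset.sum_congr rfl
          intro j _
          congr 1
          rw [hmu]
          simp
      _ = x := hcfx

end AuxNTF
namespace AuxNTF

lemma rat_nat_mul (y : ℚ) (hy : 0 ≤ y) (N : ℕ) (hdvd : y.den ∣ N) :
    ∃ z : ℕ, (z : ℚ) = N * y := by
  obtain ⟨M, hM⟩ := hdvd
  have hden : ((y.den : ℚ)) ≠ 0 := by
    exact_mod_cast y.den_nz
  have hnum : (y.num : ℚ) = y * y.den := (div_eq_iff hden).1 (Rat.num_div_den y)
  have hnn : 0 ≤ (M : ℤ) * y.num := by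
    apply mul_nonneg
    · exact_mod_cast Nat.zero_le M
    · exact Rat.num_nonneg.2 hy
  refine ⟨((M : ℤ) * y.num).toNat, ?_⟩
  have h1 : (((M : ℤ) * y.num).toNat : ℤ) = (M : ℤ) * y.num := Int.toNat_of_nonneg hnn
  have h2 : ((((M : ℤ) * y.num).toNat : ℕ) : ℚ) = (((M : ℤ) * y.num : ℤ) : ℚ) := by
    exact_mod_cast congrArg (fun z : ℤ => (z : ℚ)) h1
  rw [h2]
  push_cast
  rw [hnum, hM]
  push_cast
  ring

lemma NP_sub_IP {s q : ℕ} {K : Type*} [Field K] {D : WOGraph s}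
    (v : Fin q → (Fin s →₀ ℕ))
    (hgen : alexDual K D = Ideal.span { f | ∃ j : Fin q, f = monomial (v j) (1 : K) }) :
    {x : Fin s → ℝ | 0 ≤ x} +
        convexHull ℝ (Set.range fun j : Fin q => fun i : Fin s => ((v j i : ℕ) : ℝ)) ⊆
      {x : Fin s → ℝ | 0 ≤ x ∧
        ∀ e ∈ D.E, 1 ≤ x e.1 + (D.w e.2 : ℝ)⁻¹ * x e.2} := by
  have hvmem : ∀ (j : Fin q), ∀ e ∈ D.E,
      D.w e.2 ≤ D.w e.2 * v j e.1 + v j e.2 := by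
    intro j e he
    have h1 : monomial (v j) (1 : K) ∈ alexDual K D := by
      rw [hgen]; exact Ideal.subset_span ⟨j, rfl⟩
    have h2 := alexDual_le he h1
    rw [show (Ideal.span {X e.1, X e.2 ^ D.w e.2} : Ideal (MvPolynomial (Fin s) K)) =
      (Ideal.span {X e.1, X e.2 ^ D.w e.2}) ^ 1 from (pow_one _).symm,
      pair_pow_mem (edge_ne he) (D.w_pos e.2)] at h2
    have h3 := h2 (v j) (by simp [support_monomial])
    simpa using h3
  set C := {x : Fin s → ℝ | 0 ≤ x ∧
    ∀ e ∈ D.E, 1 ≤ x e.1 + (D.w e.2 : ℝ)⁻¹ * x e.2} with hC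
  have hCconv : Convex ℝ C := by
    intro x hx y hy a b ha hb hab
    constructor
    · intro i
      have h1 : (0:ℝ) ≤ x i := hx.1 i
      have h2 : (0:ℝ) ≤ y i := hy.1 i
      have : (0:ℝ) ≤ a * x i + b * y i := add_nonneg (mul_nonneg ha h1) (mul_nonneg hb h2)
      simpa using this
    · intro e he
      have h1 := hx.2 e he
      have h2 := hy.2 e he
      have hcalc : (a • x + b • y) e.1 + (D.w e.2 : ℝ)⁻¹ * (a • x + b • y) e.2 =
          a * (x e.1 + (D.w e.2 : ℝ)⁻¹ * x e.2) + b * (y e.1 + (D.w e.2 : ℝ)⁻¹ * y e.2) := by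
        simp only [Pi.add_apply, Pi.smul_apply, smul_eq_mul]
        ring
      rw [hcalc]
      nlinarith [mul_le_mul_of_nonneg_left h1 ha, mul_le_mul_of_nonneg_left h2 hb]
  have hrange : Set.range (fun j : Fin q => fun i : Fin s => ((v j i : ℕ) : ℝ)) ⊆ C := by
    rintro x ⟨j, rfl⟩
    constructor
    · intro i
      have : (0 : ℝ) ≤ (v j i : ℝ) := Nat.cast_nonneg _
      simpa using this
    · intro e he
      have hw1 : (1 : ℕ) ≤ D.w e.2 := D.w_pos e.2
      have hwpos : (0 : ℝ) < (D.w e.2 : ℝ) := by exact_mod_cast Nat.lt_of_lt_of_le Nat.zero_lt_one hw1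
      have hcast : ((D.w e.2 : ℕ) : ℝ) ≤ (D.w e.2 : ℝ) * (v j e.1 : ℝ) + (v j e.2 : ℝ) := by
        exact_mod_cast hvmem j e he
      rw [← mul_le_mul_iff_right₀ hwpos]
      have hexp : (D.w e.2 : ℝ) * ((v j e.1 : ℝ) + (D.w e.2 : ℝ)⁻¹ * (v j e.2 : ℝ)) =
          (D.w e.2 : ℝ) * (v j e.1 : ℝ) + (v j e.2 : ℝ) := by
        rw [mul_add, ← mul_assoc, mul_inv_cancel₀ (ne_of_gt hwpos), one_mul]
      rw [mul_one, hexp]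
      exact hcast
  have hhull : convexHull ℝ (Set.range fun j : Fin q => fun i : Fin s => ((v j i : ℕ) : ℝ)) ⊆ C :=
    convexHull_min hrange hCconv
  rintro xx ⟨r, hr, y, hy, rfl⟩
  have hyC := hhull hy
  constructor
  · intro i
    have h1 := hr i
    have h2 := hyC.1 i
    have : (0:ℝ) ≤ r i + y i := by
      simp only [Set.mem_setOf_eq] at h1 h2 ⊢
      have h1' : (0:ℝ) ≤ r i := h1
      have h2' : (0:ℝ) ≤ y i := h2
      linarith
    simpa using this
  · intro e he
    have h2 := hyC.2 e he
    have hr1 : (0:ℝ) ≤ r e.1 := hr e.1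
    have hr2 : (0:ℝ) ≤ r e.2 := hr e.2
    have hwinv : (0:ℝ) ≤ (D.w e.2 : ℝ)⁻¹ := by positivity
    have hexp : (r + y) e.1 + (D.w e.2 : ℝ)⁻¹ * (r + y) e.2 =
        (r e.1 + (D.w e.2 : ℝ)⁻¹ * r e.2) + (y e.1 + (D.w e.2 : ℝ)⁻¹ * y e.2) := by
      simp only [Pi.add_apply]
      ring
    rw [hexp]
    nlinarith [mul_nonneg hwinv hr2]

end AuxNTF
set_option maxHeartbeats 2000000 in
open AuxNTF in
/-- **Corollary (normally torsion-free Alexander duals).** Let `D` be a weighted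
oriented graph with at least one edge and `J(D)` the Alexander dual of `I(D)`, with
minimal monomial generating set `{t^{v_1}, …, t^{v_q}}`. Then `J(D)ⁿ = J(D)^{(n)}` for
all `n ≥ 1` if and only if `J(D)` is a normal ideal and `NP(J(D)) = IP(J(D))`, where
`NP(J(D)) = ℝ₊^s + conv(v_1, …, v_q)` and
`IP(J(D)) = {x : x ≥ 0, x_i + w_j⁻¹ x_j ≥ 1 for every (t_i, t_j) ∈ E(D)}`. -/
theorem alexDual_pow_eq_symbolicPower_iff {s q : ℕ} (K : Type*) [Field K]
    (D : WOGraph s) (hE : D.E.Nonempty)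
    (v : Fin q → (Fin s →₀ ℕ))
    (hgen : alexDual K D = Ideal.span { f | ∃ j : Fin q, f = monomial (v j) (1 : K) })
    (hmingen : ∀ j : Fin q, monomial (v j) (1 : K) ∉
      Ideal.span { f | ∃ k : Fin q, k ≠ j ∧ f = monomial (v k) (1 : K) }) :
    (∀ n : ℕ, 1 ≤ n → alexDual K D ^ n = symbolicPower (alexDual K D) n) ↔
      ((∀ n : ℕ, 1 ≤ n → alexDual K D ^ n = monIntegralClosure K (alexDual K D ^ n)) ∧
        {x : Fin s → ℝ | 0 ≤ x} +
            convexHull ℝ (Set.range fun j : Fin q => fun i : Fin s => (v j i : ℝ)) =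
          {x : Fin s → ℝ | 0 ≤ x ∧
            ∀ e ∈ D.E, 1 ≤ x e.1 + (D.w e.2 : ℝ)⁻¹ * x e.2}) := by
  classical
  have hq : 0 < q := by
    rcases Nat.eq_zero_or_pos q with rfl | h
    · exfalso
      apply alexDual_ne_bot (K := K) (D := D)
      rw [hgen]
      have : { f : MvPolynomial (Fin s) K | ∃ j : Fin 0, f = monomial (v j) (1 : K) } = ∅ :=
        Set.eq_empty_iff_forall_notMem.2 (by rintro f ⟨j, _⟩; exact j.elim0)
      rw [this, Ideal.span_empty]
    · exact h
  have hJMI : alexDual K D = MI K (Set.range v) := by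
    rw [hgen, span_gen_eq_MI]
  have hmono : ∀ (N : ℕ) (a : Fin s →₀ ℕ),
      monomial a (1 : K) ∈ alexDual K D ^ N ↔
        ∃ k : Fin q → ℕ, (∑ j, k j) = N ∧ vsum v k ≤ a := by
    intro N a
    rw [hJMI]
    exact monomial_mem_MI_pow
  constructor
  · -- forward direction
    intro h
    constructor
    · -- normality
      intro n hn
      apply le_antisymm
      · rw [hJMI, MI_range_pow]
        apply Ideal.span_le.2
        rintro f ⟨a, ha, rfl⟩
        apply Ideal.subset_span
        refine ⟨a, rfl, 1, le_rfl, ?_⟩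
        rw [pow_one, pow_one]
        exact Ideal.subset_span ⟨a, ha, rfl⟩
      · unfold monIntegralClosure
        apply Ideal.span_le.2
        rintro f ⟨a, rfl, p, hp, hpow⟩
        show monomial a 1 ∈ alexDual K D ^ n
        rw [h n hn, mem_symbolicPower_alexDual]
        intro e he m hm
        have hma : m = a := by simpa [support_monomial] using hm
        subst hma
        rw [monomial_pow, one_pow, ← pow_mul] at hpow
        have hle := Ideal.pow_right_mono (alexDual_le (K := K) he) (n * p)
        have hpow2 := hle hpow
        rw [pair_pow_mem (edge_ne he) (D.w_pos e.2)] at hpow2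
        have h3 := hpow2 (p • m) (by simp [support_monomial])
        have h4 : (p • m) e.1 = p * m e.1 := rfl
        have h5 : (p • m) e.2 = p * m e.2 := rfl
        rw [h4, h5] at h3
        have hineq : p * (n * D.w e.2) ≤ p * (D.w e.2 * m e.1 + m e.2) := by
          calc p * (n * D.w e.2) = n * p * D.w e.2 := by ring
          _ ≤ D.w e.2 * (p * m e.1) + p * m e.2 := h3
          _ = p * (D.w e.2 * m e.1 + m e.2) := by ring
        exact Nat.le_of_mul_le_mul_left hineq (by omega)
    · -- Newton polyhedron equality
      apply Set.Subset.antisymm (NP_sub_IP v hgen)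
      intro xx hxx
      -- rational points of IP are in NP
      have hkey : ∀ y : Fin s → ℚ, (∀ i, 0 ≤ y i) →
          (∀ e ∈ D.E, (D.w e.2 : ℚ) ≤ D.w e.2 * y e.1 + y e.2) →
          (fun i => (y i : ℝ)) ∈ {x : Fin s → ℝ | 0 ≤ x} +
            convexHull ℝ (Set.range fun j : Fin q => fun i : Fin s => (v j i : ℝ)) := by
        intro y hy0 hyE
        set n : ℕ := ∏ i, (y i).den with hndef
        have hn1 : 1 ≤ n := Finset.one_le_prod' (fun i _ => (y i).pos)
        have hnR : (0:ℝ) < (n:ℝ) := by exact_mod_cast hn1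
        have hz : ∀ i, ∃ z : ℕ, (z : ℚ) = n * y i := fun i =>
          rat_nat_mul (y i) (hy0 i) n (Finset.dvd_prod_of_mem _ (Finset.mem_univ i))
        choose z hz using hz
        set a : Fin s →₀ ℕ := Finsupp.equivFunOnFinite.symm z with hadef
        have haz : ∀ i, a i = z i := fun i => rfl
        have hamem : monomial a (1:K) ∈ alexDual K D ^ n := by
          rw [h n hn1, mem_symbolicPower_alexDual]
          intro e he m hm
          have hma : m = a := by simpa [support_monomial] using hm
          subst hma
          have hq1 : ((n * D.w e.2 : ℕ) : ℚ) ≤ ((D.w e.2 * a e.1 + a e.2 : ℕ) : ℚ) := by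
            push_cast
            rw [haz, haz, hz, hz]
            have hE := hyE e he
            have hn0 : (0:ℚ) ≤ (n:ℚ) := by positivity
            nlinarith [hE, hn0]
          exact_mod_cast hq1
        obtain ⟨k, hksum, hkle⟩ := (hmono n a).1 hamem
        set hullpt : Fin s → ℝ :=
          ∑ j : Fin q, ((k j : ℝ)/(n:ℝ)) • (fun i : Fin s => (v j i : ℝ)) with hhp
        have hhullapply : ∀ i, hullpt i = (∑ j : Fin q, (k j : ℝ) * (v j i : ℝ)) / n := by
          intro i
          rw [hhp, Finset.sum_apply, Finset.sum_div]
          apply Finset.sum_congr rfl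
          intro j _
          rw [Pi.smul_apply, smul_eq_mul]
          ring
        have hbound : ∀ i, hullpt i ≤ (y i : ℝ) := by
          intro i
          rw [hhullapply i]
          have h1 : (vsum v k) i ≤ a i := hkle i
          rw [vsum_apply] at h1
          have h2 : ((∑ j, k j * v j i : ℕ) : ℝ) ≤ ((a i : ℕ) : ℝ) := by exact_mod_cast h1
          have h3 : ((a i : ℕ) : ℝ) = n * (y i : ℝ) := by
            rw [haz i]
            have := hz i
            have : ((z i : ℕ) : ℝ) = ((n : ℝ)) * ((y i : ℝ)) := by exact_mod_cast this
            exact this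
          rw [div_le_iff₀ hnR]
          push_cast at h2
          rw [h3] at h2
          linarith [h2]
        refine Set.mem_add.2 ⟨fun i => (y i : ℝ) - hullpt i, ?_, hullpt, ?_, ?_⟩
        · intro i
          have := hbound i
          simp only [Set.mem_setOf_eq]
          have h0 : (0:ℝ) ≤ (y i : ℝ) - hullpt i := by linarith
          exact h0
        · rw [hhp]
          apply Convex.sum_mem (convex_convexHull ℝ _)
          · intro j _
            positivity
          · rw [← Finset.sum_div]
            rw [show ∑ j : Fin q, (k j : ℝ) = ((∑ j, k j : ℕ) : ℝ) by push_cast; rfl]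
            rw [hksum]
            field_simp
          · intro j _
            exact subset_convexHull ℝ _ ⟨j, rfl⟩
        · funext i
          simp only [Pi.add_apply]
          ring
      -- closedness of NP
      have hNPclosed : IsClosed ({x : Fin s → ℝ | 0 ≤ x} +
          convexHull ℝ (Set.range fun j : Fin q => fun i : Fin s => (v j i : ℝ))) := by
        have h1 : IsClosed {x : Fin s → ℝ | 0 ≤ x} := by
          have he : {x : Fin s → ℝ | 0 ≤ x} = ⋂ i, {x : Fin s → ℝ | 0 ≤ x i} := by
            ext x
            simp only [Set.mem_setOf_eq, Set.mem_iInter]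
            exact ⟨fun hx i => hx i, fun hx i => hx i⟩
          rw [he]
          exact isClosed_iInter (fun i => isClosed_le continuous_const (continuous_apply i))
        have h2 : IsCompact (convexHull ℝ
            (Set.range fun j : Fin q => fun i : Fin s => (v j i : ℝ))) :=
          (Set.finite_range _).isCompact_convexHull ℝ
        have h3 := IsClosed.add_left_of_isCompact h1 h2
        rwa [add_comm] at h3
      rw [← hNPclosed.closure_eq]
      rw [Metric.mem_closure_iff]
      intro ε hε
      set η := ε/4 with hηdef
      have hη0 : 0 < η := by positivity
      have hchoose : ∀ i, ∃ ρ : ℚ, xx i + η < ρ ∧ (ρ:ℝ) < xx i + 2*η := fun i =>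
        exists_rat_btwn (by linarith)
      choose y hy1 hy2 using hchoose
      have hy0 : ∀ i, 0 ≤ y i := by
        intro i
        have h1 : (0:ℝ) ≤ xx i := hxx.1 i
        have h2 := hy1 i
        have h3 : (0:ℝ) < (y i : ℝ) := by linarith
        exact_mod_cast le_of_lt h3
      have hyE : ∀ e ∈ D.E, (D.w e.2 : ℚ) ≤ D.w e.2 * y e.1 + y e.2 := by
        intro e he
        have hw1 : (1 : ℕ) ≤ D.w e.2 := D.w_pos e.2
        have hw0 : (0:ℝ) < (D.w e.2 : ℝ) := by exact_mod_cast Nat.lt_of_lt_of_le Nat.zero_lt_one hw1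
        have hx2 := hxx.2 e he
        have hxw : (D.w e.2:ℝ) ≤ D.w e.2 * xx e.1 + xx e.2 := by
          have hmul := mul_le_mul_of_nonneg_left hx2 (le_of_lt hw0)
          rw [mul_one] at hmul
          have hexp : (D.w e.2:ℝ) * (xx e.1 + (D.w e.2:ℝ)⁻¹ * xx e.2) =
              D.w e.2 * xx e.1 + xx e.2 := by
            rw [mul_add, ← mul_assoc, mul_inv_cancel₀ (ne_of_gt hw0), one_mul]
          rw [hexp] at hmul
          exact hmul
        have hreal : (D.w e.2 : ℝ) ≤ D.w e.2 * (y e.1 : ℝ) + (y e.2 : ℝ) := by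
          have k1 : (D.w e.2:ℝ) * (xx e.1 + η) < D.w e.2 * (y e.1 : ℝ) :=
            mul_lt_mul_of_pos_left (hy1 e.1) hw0
          have k2 := hy1 e.2
          have k3 : (0:ℝ) < (D.w e.2:ℝ) * η := mul_pos hw0 hη0
          nlinarith [k1, k2, k3, hxw]
        exact_mod_cast hreal
      refine ⟨_, hkey y hy0 hyE, ?_⟩
      have hdist : dist xx (fun i => (y i : ℝ)) ≤ 2*η := by
        apply (dist_pi_le_iff (by positivity)).2
        intro i
        rw [Real.dist_eq]
        have h1 := hy1 i
        have h2 := hy2 i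
        rw [abs_le]
        constructor <;> [linarith; linarith]
      have : (2:ℝ)*η < ε := by rw [hηdef]; linarith
      linarith [hdist]
  · -- reverse direction
    rintro ⟨hnorm, hNPIP⟩ n hn
    apply le_antisymm
    · unfold symbolicPower
      refine le_iInf fun p => le_iInf fun hp => ?_
      exact Ideal.le_comap_map
    · intro f hf
      rw [mem_symbolicPower_alexDual] at hf
      have hmonomem : ∀ m ∈ f.support, monomial m (1:K) ∈ alexDual K D ^ n := by
        intro m hm
        rw [hnorm n hn]
        apply Ideal.subset_span
        refine ⟨m, rfl, ?_⟩
        have hnR : (0:ℝ) < (n:ℝ) := by exact_mod_cast hn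
        -- the real point m/n lies in IP = NP
        set xr : Fin s → ℝ := fun i => (m i : ℝ) / n with hxr
        have hxrIP : xr ∈ {x : Fin s → ℝ | 0 ≤ x ∧
            ∀ e ∈ D.E, 1 ≤ x e.1 + (D.w e.2 : ℝ)⁻¹ * x e.2} := by
          constructor
          · intro i
            have : (0:ℝ) ≤ (m i : ℝ) / n := by positivity
            exact this
          · intro e he
            have hw1 : (1 : ℕ) ≤ D.w e.2 := D.w_pos e.2
            have hw0 : (0:ℝ) < (D.w e.2 : ℝ) := by
              exact_mod_cast Nat.lt_of_lt_of_le Nat.zero_lt_one hw1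
            have hineq : ((n * D.w e.2 : ℕ) : ℝ) ≤ ((D.w e.2 * m e.1 + m e.2 : ℕ) : ℝ) := by
              exact_mod_cast hf e he m hm
            push_cast at hineq
            rw [hxr]
            rw [show ((m e.1 : ℝ)/n + (D.w e.2:ℝ)⁻¹ * ((m e.2 : ℝ)/n)) =
              ((D.w e.2:ℝ) * (m e.1:ℝ) + (m e.2:ℝ)) / ((n:ℝ) * (D.w e.2:ℝ)) by
                field_simp
                ]
            rw [le_div_iff₀ (by positivity)]
            linarith [hineq]
        rw [← hNPIP] at hxrIP
        obtain ⟨r, hr, yy, hyy, heq2⟩ := Set.mem_add.1 hxrIP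
        rw [convexHull_eq] at hyy
        obtain ⟨ι', t, wt, zf, hw0, hw1, hzr, hcm⟩ := hyy
        rw [Finset.centerMass_eq_of_sum_1 _ _ hw1] at hcm
        set jsel : ι' → Fin q := fun i => if hi : i ∈ t then (hzr i hi).choose else ⟨0, hq⟩
          with hjseldef
        have hjsel : ∀ i ∈ t, (fun i' : Fin s => ((v (jsel i) i' : ℕ) : ℝ)) = zf i := by
          intro i hi
          rw [hjseldef]
          simp only [dif_pos hi]
          exact (hzr i hi).choose_spec
        set lam : Fin q → ℝ := fun j0 => ∑ i ∈ t.filter (fun i => jsel i = j0), wt i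
          with hlamdef
        have hlam0 : ∀ j0, 0 ≤ lam j0 := by
          intro j0
          apply Finset.sum_nonneg
          intro i hi
          exact hw0 i (Finset.mem_filter.1 hi).1
        have hlamsum : ∑ j0, lam j0 = 1 := by
          rw [hlamdef]
          rw [Finset.sum_fiberwise_of_maps_to (fun i _ => Finset.mem_univ (jsel i)) wt]
          exact hw1
        have hlamvec : ∀ i0 : Fin s,
            ∑ j0, lam j0 * ((v j0 i0 : ℕ) : ℝ) = yy i0 := by
          intro i0
          rw [hlamdef]
          have step1 : ∀ j0 : Fin q, (∑ i ∈ t.filter (fun i => jsel i = j0), wt i) *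
              ((v j0 i0 : ℕ) : ℝ) =
              ∑ i ∈ t.filter (fun i => jsel i = j0), wt i * zf i i0 := by
            intro j0
            rw [Finset.sum_mul]
            apply Finset.sum_congr rfl
            intro i hi
            obtain ⟨hit, hij⟩ := Finset.mem_filter.1 hi
            have := hjsel i hit
            rw [← this, hij]
          rw [Finset.sum_congr rfl (fun j0 _ => step1 j0)]
          rw [Finset.sum_fiberwise_of_maps_to (fun i _ => Finset.mem_univ (jsel i))
            (fun i => wt i * zf i i0)]
          have := congrFun hcm i0
          rw [Finset.sum_apply] at this
          rw [← this]
          apply Finset.sum_congr rfl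
          intro i _
          rw [Pi.smul_apply, smul_eq_mul]
        -- set up the rational cone problem
        set gk : (Fin q ⊕ Fin s) → (Fin s ⊕ Unit) → ℚ :=
          Sum.elim (fun j0 => Sum.elim (fun i => (v j0 i : ℚ)) (fun _ => (1:ℚ)))
            (fun i0 => Sum.elim (fun i => if i0 = i then (1:ℚ) else 0) (fun _ => (0:ℚ)))
          with hgkdef
        set xk : (Fin s ⊕ Unit) → ℚ :=
          Sum.elim (fun i => (m i : ℚ) / n) (fun _ => (1:ℚ)) with hxkdef
        set lamk : (Fin q ⊕ Fin s) → ℝ := Sum.elim lam r with hlamkdef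
        have hlamk0 : ∀ jk, 0 ≤ lamk jk := by
          rintro (j0 | i0)
          · exact hlam0 j0
          · exact hr i0
        have hfeas : (fun co => (xk co : ℝ)) =
            ∑ jk, lamk jk • (fun co => (gk jk co : ℝ)) := by
          funext co
          rw [Finset.sum_apply]
          have hterm : ∀ jk, (lamk jk • (fun co' => (gk jk co' : ℝ))) co =
              lamk jk * (gk jk co : ℝ) := fun jk => rfl
          rw [Finset.sum_congr rfl (fun jk _ => hterm jk)]
          rw [Fintype.sum_sum_type]
          rcases co with i | u
          · have hA : ∑ j0 : Fin q, lamk (Sum.inl j0) * ((gk (Sum.inl j0) (Sum.inl i) : ℚ) : ℝ)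
                = yy i := by
              rw [← hlamvec i]
              apply Finset.sum_congr rfl
              intro j0 _
              rfl
            have hB : ∑ i0 : Fin s, lamk (Sum.inr i0) * ((gk (Sum.inr i0) (Sum.inl i) : ℚ) : ℝ)
                = r i := by
              have hterm2 : ∀ i0 : Fin s,
                  lamk (Sum.inr i0) * ((gk (Sum.inr i0) (Sum.inl i) : ℚ) : ℝ) =
                  if i0 = i then r i0 else 0 := by
                intro i0
                show r i0 * (((if i0 = i then (1:ℚ) else 0) : ℚ) : ℝ) = _
                split_ifs with hii
                · simp
                · simp
              rw [Finset.sum_congr rfl (fun i0 _ => hterm2 i0)]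
              rw [Finset.sum_ite_eq' Finset.univ i (fun i0 => r i0)]
              simp
            rw [hA, hB]
            have := congrFun heq2 i
            have hxki : ((xk (Sum.inl i) : ℚ) : ℝ) = xr i := by
              rw [hxkdef]
              simp only [Sum.elim_inl]
              rw [hxr]
              push_cast
              ring
            rw [hxki, ← this]
            simp only [Pi.add_apply]
            ring
          · have hA : ∑ j0 : Fin q, lamk (Sum.inl j0) * ((gk (Sum.inl j0) (Sum.inr u) : ℚ) : ℝ)
                = 1 := by
              rw [← hlamsum]
              apply Finset.sum_congr rfl
              intro j0 _
              show lam j0 * ((1:ℚ):ℝ) = lam j0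
              simp
            have hB : ∑ i0 : Fin s, lamk (Sum.inr i0) * ((gk (Sum.inr i0) (Sum.inr u) : ℚ) : ℝ)
                = 0 := by
              apply Finset.sum_eq_zero
              intro i0 _
              show r i0 * ((0:ℚ):ℝ) = 0
              simp
            rw [hA, hB]
            show ((1:ℚ):ℝ) = 1 + 0
            simp
        obtain ⟨mu, hmu0, hmueq⟩ := rat_cone gk xk lamk hlamk0 hfeas
        have hmuapp : ∀ co, xk co = ∑ jk, mu jk * gk jk co := by
          intro co
          have := congrFun hmueq co
          rw [Finset.sum_apply] at this
          simpa [smul_eq_mul] using this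
        have hmusum : ∑ j0, mu (Sum.inl j0) = 1 := by
          have := hmuapp (Sum.inr Unit.unit)
          rw [Fintype.sum_sum_type] at this
          have hB : ∑ i0 : Fin s, mu (Sum.inr i0) * gk (Sum.inr i0) (Sum.inr Unit.unit) = 0 := by
            apply Finset.sum_eq_zero
            intro i0 _
            show mu (Sum.inr i0) * 0 = 0
            ring
          have hA : ∑ j0 : Fin q, mu (Sum.inl j0) * gk (Sum.inl j0) (Sum.inr Unit.unit) =
              ∑ j0 : Fin q, mu (Sum.inl j0) := by
            apply Finset.sum_congr rfl
            intro j0 _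
            show mu (Sum.inl j0) * 1 = _
            ring
          rw [hA, hB] at this
          have hxk1 : xk (Sum.inr Unit.unit) = 1 := rfl
          rw [hxk1] at this
          linarith [this]
        have hmuineq : ∀ i, ∑ j0, mu (Sum.inl j0) * (v j0 i : ℚ) ≤ (m i : ℚ)/n := by
          intro i
          have := hmuapp (Sum.inl i)
          rw [Fintype.sum_sum_type] at this
          have hA : ∑ j0 : Fin q, mu (Sum.inl j0) * gk (Sum.inl j0) (Sum.inl i) =
              ∑ j0 : Fin q, mu (Sum.inl j0) * (v j0 i : ℚ) := rfl
          have hB : ∑ i0 : Fin s, mu (Sum.inr i0) * gk (Sum.inr i0) (Sum.inl i) =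
              mu (Sum.inr i) := by
            have hterm3 : ∀ i0 : Fin s, mu (Sum.inr i0) * gk (Sum.inr i0) (Sum.inl i) =
                if i0 = i then mu (Sum.inr i0) else 0 := by
              intro i0
              show mu (Sum.inr i0) * (if i0 = i then (1:ℚ) else 0) = _
              split_ifs <;> ring
            rw [Finset.sum_congr rfl (fun i0 _ => hterm3 i0)]
            rw [Finset.sum_ite_eq' Finset.univ i (fun i0 => mu (Sum.inr i0))]
            simp
          rw [hA, hB] at this
          have hxk2 : xk (Sum.inl i) = (m i : ℚ)/n := rfl
          rw [hxk2] at this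
          have := hmu0 (Sum.inr i)
          linarith
        -- common denominator
        set p : ℕ := ∏ j0, (mu (Sum.inl j0)).den with hpdef
        have hp1 : 1 ≤ p := Finset.one_le_prod' (fun j0 _ => (mu (Sum.inl j0)).pos)
        have hzk : ∀ j0 : Fin q, ∃ zz : ℕ, (zz:ℚ) = (n*p : ℕ) * mu (Sum.inl j0) := by
          intro j0
          apply rat_nat_mul _ (hmu0 _)
          exact Dvd.dvd.mul_left (Finset.dvd_prod_of_mem _ (Finset.mem_univ j0)) n
        choose kf hkf using hzk
        have hksum : ∑ j0, kf j0 = n * p := by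
          have hcast : ((∑ j0, kf j0 : ℕ) : ℚ) = ((n*p : ℕ) : ℚ) := by
            push_cast
            rw [show ∑ j0 : Fin q, (kf j0 : ℚ) = ∑ j0 : Fin q, ((n*p:ℕ):ℚ) * mu (Sum.inl j0) from
              Finset.sum_congr rfl (fun j0 _ => hkf j0)]
            rw [← Finset.mul_sum, hmusum, mul_one]
            push_cast
            ring
          exact_mod_cast hcast
        have hkle : vsum v kf ≤ p • m := by
          intro i
          have hcast : ((vsum v kf i : ℕ) : ℚ) ≤ (((p • m) i : ℕ) : ℚ) := by
            rw [vsum_apply]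
            have h1 : ((∑ j0, kf j0 * v j0 i : ℕ) : ℚ) =
                (n*p : ℕ) * ∑ j0, mu (Sum.inl j0) * (v j0 i : ℚ) := by
              push_cast
              rw [Finset.mul_sum]
              apply Finset.sum_congr rfl
              intro j0 _
              rw [hkf j0]
              push_cast
              ring
            have h2 : (((p • m) i : ℕ) : ℚ) = p * m i := by
              have : (p • m) i = p * m i := rfl
              rw [this]
              push_cast
              ring
            rw [h2]
            calc ((∑ j0, kf j0 * v j0 i : ℕ) : ℚ)
                = (n*p : ℕ) * ∑ j0, mu (Sum.inl j0) * (v j0 i : ℚ) := h1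
              _ ≤ (n*p : ℕ) * ((m i : ℚ)/n) := by
                  apply mul_le_mul_of_nonneg_left (hmuineq i)
                  positivity
              _ = p * m i := by
                  have hnq : ((n:ℚ)) ≠ 0 := by
                    have : (0:ℚ) < n := by exact_mod_cast hn
                    exact ne_of_gt this
                  push_cast
                  field_simp
          exact_mod_cast hcast
        refine ⟨p, hp1, ?_⟩
        rw [monomial_pow, one_pow, ← pow_mul]
        rw [hmono (n*p) (p • m)]
        exact ⟨kf, hksum, hkle⟩
      rw [f.as_sum]
      apply Ideal.sum_mem
      intro m hm
      have hCm : monomial m (MvPolynomial.coeff m f) =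
          C (MvPolynomial.coeff m f) * monomial m 1 := by
        rw [C_mul_monomial, mul_one]
      rw [hCm]
      exact Ideal.mul_mem_left _ _ (hmonomem m hm)
end

section
/- Let I be an ideal of the polynomial ring S = K[t_1,…,t_s] over a field K. Then I^n = I^{(n)} for all n ≥ 1 if and only if I has no embedded primes and Ass(I^n) = Ass(I) for all n ≥ 1. -/
open MvPolynomial Pointwise

/-- The set `Ass(I)` of associated primes of `I`: the prime ideals of the form
`(I : f)` for some `f ∈ S`. -/
def assPrimes {R : Type*} [CommRing R] (I : Ideal R) : Set (Ideal R) :=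
  { p | p.IsPrime ∧ ∃ f : R, p = Submodule.colon I (Ideal.span {f}) }

section Aux

variable {R : Type*} [CommRing R]

lemma mem_contractAt {J p : Ideal R} (hp : p.IsPrime) {x : R} :
    x ∈ contractAt J p hp ↔ ∃ u ∉ p, u * x ∈ J := by
  letI := hp
  constructor
  · intro hx
    rw [contractAt, Ideal.mem_comap,
      IsLocalization.mem_map_algebraMap_iff p.primeCompl] at hx
    obtain ⟨⟨j, u⟩, h⟩ := hx
    rw [← map_mul, IsLocalization.eq_iff_exists p.primeCompl] at h
    obtain ⟨c, hc⟩ := h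
    refine ⟨(c : R) * (u : R), fun hm => ?_, ?_⟩
    · rcases hp.mem_or_mem hm with h | h
      exacts [c.2 h, u.2 h]
    · have : (c : R) * (u : R) * x = (c : R) * ((j : R)) := by
        rw [← hc]; ring
      rw [this]
      exact J.mul_mem_left _ j.2
  · rintro ⟨u, hu, hux⟩
    rw [contractAt, Ideal.mem_comap,
      IsLocalization.mem_map_algebraMap_iff p.primeCompl]
    refine ⟨⟨⟨u * x, hux⟩, ⟨u, hu⟩⟩, ?_⟩
    simp [← map_mul, mul_comm]

lemma le_contractAt {J p : Ideal R} (hp : p.IsPrime) : J ≤ contractAt J p hp := fun x hx =>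
  (mem_contractAt hp).2 ⟨1, fun h => hp.ne_top ((Ideal.eq_top_iff_one p).2 h), by simpa⟩

lemma contractAt_le_prime {J p : Ideal R} (hp : p.IsPrime) (hJ : J ≤ p) :
    contractAt J p hp ≤ p := by
  intro x hx
  obtain ⟨u, hu, hux⟩ := (mem_contractAt hp).1 hx
  rcases hp.mem_or_mem (hJ hux) with h | h
  exacts [absurd h hu, h]

lemma exists_pow_mem {J q : Ideal R} (hq : q ∈ J.minimalPrimes) {a : R} (ha : a ∈ q) :
    ∃ n : ℕ, ∃ u ∉ q, u * a ^ n ∈ J := by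
  haveI := hq.1.1
  by_contra h
  push_neg at h
  have hdisj : Disjoint (J : Set R)
      ((q.primeCompl ⊔ Submonoid.powers a : Submonoid R) : Set R) := by
    rw [Set.disjoint_left]
    rintro x hxJ hxT
    obtain ⟨u, hu, z, hz, rfl⟩ := Submonoid.mem_sup.1 hxT
    obtain ⟨n, rfl⟩ := hz
    exact h n u hu hxJ
  obtain ⟨p', hp', hJp', hdisj'⟩ := Ideal.exists_le_prime_disjoint J _ hdisj
  have hle : p' ≤ q := by
    intro x hx
    by_contra hxq
    exact (Set.disjoint_left.1 hdisj') hx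
      (Submonoid.mem_sup.2 ⟨x, hxq, 1, ⟨0, pow_zero a⟩, mul_one x⟩)
  have hqp' : q ≤ p' := hq.2 ⟨hp', hJp'⟩ hle
  exact (Set.disjoint_left.1 hdisj') (hqp' ha)
    (Submonoid.mem_sup.2 ⟨1, q.primeCompl.one_mem, a, ⟨1, pow_one a⟩, one_mul a⟩)

/-- Any prime of the form `(Q : f)`, `Q` the contraction of `J` at a minimal prime `q`
of `J` and `f ∉ Q`, equals `q`. -/
lemma colon_contract_prime_eq {J q : Ideal R} (hq : q ∈ J.minimalPrimes) {f : R}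
    (hf : f ∉ contractAt J q hq.1.1) {p : Ideal R} (hpp : p.IsPrime)
    (hp : p = Submodule.colon (contractAt J q hq.1.1) (Ideal.span {f})) : p = q := by
  subst hp
  apply le_antisymm
  · intro a ha
    rw [Ideal.mem_colon_span_singleton] at ha
    obtain ⟨u, hu, huaf⟩ := (mem_contractAt _).1 ha
    by_contra haq
    refine hf ((mem_contractAt _).2 ⟨u * a, fun hmem => ?_, by rwa [mul_assoc]⟩)
    rcases hq.1.1.mem_or_mem hmem with h | h
    exacts [hu h, haq h]
  · intro a ha
    obtain ⟨n, u, hu, hun⟩ := exists_pow_mem hq ha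
    have hQ : a ^ n ∈ contractAt J q hq.1.1 := (mem_contractAt _).2 ⟨u, hu, hun⟩
    have : a ^ n ∈ Submodule.colon (contractAt J q hq.1.1) (Ideal.span {f}) := by
      rw [Ideal.mem_colon_span_singleton]
      exact Ideal.mul_mem_right f _ hQ
    exact hpp.mem_of_pow_mem n this

lemma annihilator_span_mk (Q : Ideal R) (g : R) :
    (Submodule.span R {Ideal.Quotient.mk Q g}).annihilator
      = Submodule.colon Q (Ideal.span {g}) := by
  ext a
  rw [Submodule.mem_annihilator_span_singleton, Ideal.mem_colon_span_singleton, Algebra.smul_def]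
  show Ideal.Quotient.mk Q a * Ideal.Quotient.mk Q g = 0 ↔ _
  rw [← map_mul, Ideal.Quotient.eq_zero_iff_mem]

lemma colon_bot_mk (Q : Ideal R) (g : R) :
    (⊥ : Submodule R (R ⧸ Q)).colon {Ideal.Quotient.mk Q g}
      = Submodule.colon Q (Ideal.span {g}) := by
  ext a
  rw [Submodule.mem_colon_singleton, Submodule.mem_bot, Ideal.mem_colon_span_singleton,
    Algebra.smul_def]
  show Ideal.Quotient.mk Q a * Ideal.Quotient.mk Q g = 0 ↔ _
  rw [← map_mul, Ideal.Quotient.eq_zero_iff_mem]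

lemma minimalPrimes_subset_assPrimes [IsNoetherianRing R] (J : Ideal R) :
    J.minimalPrimes ⊆ assPrimes J := by
  intro q hq
  haveI := hq.1.1
  set Q := contractAt J q hq.1.1 with hQdef
  have hQq : Q ≤ q := contractAt_le_prime hq.1.1 hq.1.2
  have h1 : Ideal.Quotient.mk Q 1 ≠ 0 := by
    rw [Ne, Ideal.Quotient.eq_zero_iff_mem]
    intro h
    exact hq.1.1.ne_top ((Ideal.eq_top_iff_one q).2 (hQq h))
  obtain ⟨P, hP, -⟩ :=
    exists_le_isAssociatedPrime_of_isNoetherianRing R (Ideal.Quotient.mk Q 1) h1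
  obtain ⟨hPp, y, hy⟩ := isAssociatedPrime_iff.1 hP
  obtain ⟨g, rfl⟩ := Ideal.Quotient.mk_surjective y
  rw [colon_bot_mk] at hy
  have hgQ : g ∉ Q := by
    intro hg
    refine hPp.ne_top (Ideal.eq_top_iff_one P |>.2 ?_)
    rw [hy, Ideal.mem_colon_span_singleton, one_mul]
    exact hg
  have hPq : P = q := colon_contract_prime_eq hq hgQ hPp hy
  -- now build `f` with `q = (J : f)`
  obtain ⟨T, hT⟩ : q.FG := IsNoetherian.noetherian q
  have key : ∀ a : R, a ∈ T → ∃ u, u ∉ q ∧ u * (a * g) ∈ J := by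
    intro a haT
    have haq : a ∈ q := by
      rw [← hT]; exact Ideal.subset_span haT
    have : a * g ∈ Q := by
      rw [← hPq] at haq
      rw [hy, Ideal.mem_colon_span_singleton] at haq
      exact haq
    obtain ⟨u, hu, huag⟩ := (mem_contractAt _).1 this
    exact ⟨u, hu, huag⟩
  choose u hu1 hu2 using key
  set v : R := ∏ a ∈ T.attach, u a a.2 with hv
  have hvq : v ∉ q := by
    refine Finset.prod_induction _ (fun x => x ∉ q) (fun x y hx hy hxy => ?_)
      (fun h => hq.1.1.ne_top ((Ideal.eq_top_iff_one q).2 h)) (fun a _ => hu1 a a.2)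
    rcases hq.1.1.mem_or_mem hxy with h | h
    exacts [hx h, hy h]
  refine ⟨hq.1.1, v * g, ?_⟩
  apply le_antisymm
  · rw [← hT]
    rw [Ideal.span_le]
    intro t ht
    simp only [SetLike.mem_coe, Ideal.mem_colon_span_singleton]
    have hdvd : u t ht ∣ v := Finset.dvd_prod_of_mem _ (Finset.mem_attach T ⟨t, ht⟩)
    obtain ⟨w, hw⟩ := hdvd
    have : t * (v * g) = w * (u t ht * (t * g)) := by rw [hw]; ring
    rw [this]
    exact J.mul_mem_left w (hu2 t ht)
  · intro b hb
    rw [Ideal.mem_colon_span_singleton] at hb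
    have hbvQ : b * v ∈ Submodule.colon Q (Ideal.span {g}) := by
      rw [Ideal.mem_colon_span_singleton]
      exact le_contractAt hq.1.1 (by rw [show b * v * g = b * (v * g) by ring]; exact hb)
    rw [← hy, hPq] at hbvQ
    rcases hq.1.1.mem_or_mem hbvQ with h | h
    exacts [h, absurd h hvq]

lemma inf_eq_self_of_ass_subset [IsNoetherianRing R] {J : Ideal R}
    (h : assPrimes J ⊆ J.minimalPrimes) :
    (⨅ (p : Ideal R) (hp : p ∈ J.minimalPrimes), contractAt J p hp.1.1) = J := by
  refine le_antisymm ?_ (le_iInf fun p => le_iInf fun hp => le_contractAt hp.1.1)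
  intro x hx
  by_contra hxJ
  have hx0 : (Ideal.Quotient.mk J x) ≠ 0 := by
    rwa [Ne, Ideal.Quotient.eq_zero_iff_mem]
  obtain ⟨P, hP, hle⟩ :=
    exists_le_isAssociatedPrime_of_isNoetherianRing R (Ideal.Quotient.mk J x) hx0
  obtain ⟨hPp, y, hy⟩ := isAssociatedPrime_iff.1 hP
  obtain ⟨g, rfl⟩ := Ideal.Quotient.mk_surjective y
  rw [colon_bot_mk] at hy hle
  have hPmin : P ∈ J.minimalPrimes := h ⟨hPp, g, hy⟩
  simp only [Submodule.mem_iInf] at hx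
  obtain ⟨u, hu, hux⟩ := (mem_contractAt hPmin.1.1).1 (hx P hPmin)
  refine hu (hle ?_)
  rw [Ideal.mem_colon_span_singleton]
  exact hux

lemma ass_subset_minimal_of_inf_eq [IsNoetherianRing R] {J : Ideal R}
    (h : (⨅ (p : Ideal R) (hp : p ∈ J.minimalPrimes), contractAt J p hp.1.1) = J) :
    assPrimes J ⊆ J.minimalPrimes := by
  have hfin : J.minimalPrimes.Finite := by
    rw [Ideal.minimalPrimes_eq_comap]
    exact (minimalPrimes.finite_of_isNoetherianRing (R ⧸ J)).image _
  classical
  rintro p ⟨hpp, f, hf⟩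
  set C : Ideal R → Ideal R := fun q =>
    if hq : q.IsPrime then Submodule.colon (contractAt J q hq) (Ideal.span {f}) else ⊤ with hC
  have hpC : p = ⨅ (q : Ideal R) (_ : q ∈ J.minimalPrimes), C q := by
    ext a
    rw [hf]
    simp only [Submodule.mem_iInf, Ideal.mem_colon_span_singleton]
    constructor
    · intro haf q hq
      rw [hC]
      simp only [dif_pos hq.1.1]
      rw [Ideal.mem_colon_span_singleton]
      exact le_contractAt hq.1.1 haf
    · intro ha
      rw [← h]
      refine (Submodule.mem_iInf _).2 fun q => (Submodule.mem_iInf _).2 fun hq => ?_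
      have := ha q hq
      rw [hC] at this
      simp only [dif_pos hq.1.1] at this
      rw [Ideal.mem_colon_span_singleton] at this
      exact this
  have hinf : hfin.toFinset.inf C ≤ p := by
    rw [hpC]
    exact le_iInf fun q => le_iInf fun hq => Finset.inf_le (hfin.mem_toFinset.2 hq)
  obtain ⟨q, hqT, hqle⟩ := (Ideal.IsPrime.inf_le' hpp).1 hinf
  have hqmin : q ∈ J.minimalPrimes := hfin.mem_toFinset.1 hqT
  have hpq : p = C q := by
    refine le_antisymm ?_ hqle
    rw [hpC]
    exact iInf_le_of_le q (iInf_le_of_le hqmin le_rfl)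
  rw [hC] at hpq
  simp only [dif_pos hqmin.1.1] at hpq
  have hfQ : f ∉ contractAt J q hqmin.1.1 := by
    intro hfQ
    refine hpp.ne_top ((Ideal.eq_top_iff_one p).2 ?_)
    rw [hpq, Ideal.mem_colon_span_singleton, one_mul]
    exact hfQ
  have := colon_contract_prime_eq hqmin hfQ hpp hpq
  rwa [this]

lemma minimalPrimes_pow {I : Ideal R} {n : ℕ} (hn : 1 ≤ n) :
    (I ^ n).minimalPrimes = I.minimalPrimes := by
  have hpred : (fun q : Ideal R => q.IsPrime ∧ I ^ n ≤ q)
      = fun q : Ideal R => q.IsPrime ∧ I ≤ q := by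
    funext q
    refine propext (and_congr_right fun hq => ⟨fun h => ?_, fun h => ?_⟩)
    · calc I ≤ I.radical := Ideal.le_radical
        _ = (I ^ n).radical := (Ideal.radical_pow I (by omega)).symm
        _ ≤ q.radical := Ideal.radical_mono h
        _ = q := hq.radical
    · exact le_trans (Ideal.pow_le_self (by omega)) h
  unfold Ideal.minimalPrimes Ideal.IsMinimalPrime
  rw [hpred]

lemma symbolicPower_eq {I : Ideal R} {n : ℕ} (hn : 1 ≤ n) :
    symbolicPower I n
      = ⨅ (p : Ideal R) (hp : p ∈ (I ^ n).minimalPrimes), contractAt (I ^ n) p hp.1.1 := by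
  have h := minimalPrimes_pow (I := I) hn
  apply le_antisymm
  · exact le_iInf fun p => le_iInf fun hp => iInf₂_le p (h.symm ▸ hp : p ∈ I.minimalPrimes)
  · exact le_iInf fun p => le_iInf fun hp => iInf₂_le p (h ▸ hp : p ∈ (I ^ n).minimalPrimes)

end Aux

/-- **Corollary.** Let `I` be an ideal of the polynomial ring `S = K[t_1,…,t_s]`. Then
`Iⁿ = I^{(n)}` for all `n ≥ 1` if and only if `I` has no embedded primes (no associated
prime properly contains another associated prime) and `Ass(Iⁿ) = Ass(I)` for all
`n ≥ 1`. -/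
theorem pow_eq_symbolicPower_iff_no_embedded_and_ass_stable {s : ℕ} (K : Type*)
    [Field K] (I : Ideal (MvPolynomial (Fin s) K)) :
    (∀ n : ℕ, 1 ≤ n → I ^ n = symbolicPower I n) ↔
      ((¬ ∃ p ∈ assPrimes I, ∃ q ∈ assPrimes I, q < p) ∧
        ∀ n : ℕ, 1 ≤ n → assPrimes (I ^ n) = assPrimes I) := by
  constructor
  · intro H
    have hass : ∀ n : ℕ, 1 ≤ n → assPrimes (I ^ n) = (I ^ n).minimalPrimes := by
      intro n hn
      refine Set.Subset.antisymm ?_ (minimalPrimes_subset_assPrimes _)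
      apply ass_subset_minimal_of_inf_eq
      rw [← symbolicPower_eq hn]
      exact (H n hn).symm
    have hassI : assPrimes I = I.minimalPrimes := by
      have h1 := hass 1 le_rfl
      rwa [pow_one] at h1
    refine ⟨?_, ?_⟩
    · rintro ⟨p, hp, q, hq, hlt⟩
      rw [hassI] at hp hq
      exact absurd (hp.2 ⟨hq.1.1, hq.1.2⟩ hlt.le) (not_le_of_gt hlt)
    · intro n hn
      rw [hass n hn, minimalPrimes_pow hn, ← hassI]
  · rintro ⟨hemb, hstab⟩
    have hassI : assPrimes I ⊆ I.minimalPrimes := by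
      rintro p hp
      haveI := hp.1
      have hIp : I ≤ p := by
        obtain ⟨hpp, f, rfl⟩ := hp
        intro a ha
        rw [Ideal.mem_colon_span_singleton]
        exact I.mul_mem_right f ha
      obtain ⟨q, hq, hqp⟩ := Ideal.exists_minimalPrimes_le hIp
      rcases eq_or_lt_of_le hqp with rfl | hlt
      · exact hq
      · exact absurd ⟨p, hp, q, minimalPrimes_subset_assPrimes I hq, hlt⟩ hemb
    intro n hn
    rw [symbolicPower_eq hn]
    refine (inf_eq_self_of_ass_subset ?_).symm
    rw [hstab n hn, minimalPrimes_pow hn]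
    exact hassI
end

section
/- Let I be a monomial ideal of S = K[t_1,…,t_s] with minimal primes p_1, …, p_r, and for each i let 𝔦_i = I S_{p_i} ∩ S be the p_i-primary component of I. Then I^{(n)} = 𝔦_1^n ∩ ⋯ ∩ 𝔦_r^n for all n ≥ 1. -/
open MvPolynomial Pointwise

/-- A monomial ideal: an ideal generated by monomials. -/
def IsMonomialIdeal {s : ℕ} {K : Type*} [Field K]
    (I : Ideal (MvPolynomial (Fin s) K)) : Prop :=
  ∃ A : Set (Fin s →₀ ℕ), I = Ideal.span ((fun a => monomial a (1 : K)) '' A)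

open scoped Classical

namespace SymbAux

variable {s : ℕ} {K : Type*} [Field K]

/-- membership in contraction -/
theorem mem_contractAt_iff {R : Type*} [CommRing R] {J p : Ideal R} (hp : p.IsPrime) {x : R} :
    x ∈ contractAt J p hp ↔ ∃ u, u ∉ p ∧ u * x ∈ J := by
  letI := hp
  constructor
  · intro hx
    rw [contractAt, Ideal.mem_comap,
      IsLocalization.mem_map_algebraMap_iff p.primeCompl] at hx
    obtain ⟨⟨j, u⟩, h⟩ := hx
    rw [← map_mul, IsLocalization.eq_iff_exists p.primeCompl] at h
    obtain ⟨c, hc⟩ := h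
    refine ⟨(c : R) * (u : R), ?_, ?_⟩
    · intro hmem
      rcases hp.mem_or_mem hmem with h1 | h1
      · exact c.2 h1
      · exact u.2 h1
    · have : (c : R) * (x * (u : R)) = (c : R) * (j : R) := hc
      have h2 : (c : R) * (u : R) * x = (c : R) * (j : R) := by linear_combination this
      rw [h2]
      exact J.mul_mem_left _ j.2
  · rintro ⟨u, hu, hux⟩
    rw [contractAt, Ideal.mem_comap,
      IsLocalization.mem_map_algebraMap_iff p.primeCompl]
    refine ⟨⟨⟨u * x, hux⟩, ⟨u, hu⟩⟩, ?_⟩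
    rw [← map_mul]
    simp [mul_comm]

/-- easy direction: power of contraction is inside contraction of power -/
theorem pow_contractAt_le {R : Type*} [CommRing R] (J p : Ideal R) (hp : p.IsPrime) (n : ℕ) :
    (contractAt J p hp) ^ n ≤ contractAt (J ^ n) p hp := by
  letI := hp
  show _ ≤ Ideal.comap _ _
  rw [← Ideal.map_le_iff_le_comap, Ideal.map_pow]
  have h : Ideal.map (algebraMap R (Localization.AtPrime p)) (contractAt J p hp)
      = Ideal.map (algebraMap R (Localization.AtPrime p)) J  :=
    Ideal.map_comap_map (algebraMap R (Localization.AtPrime p)) J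
  rw [h, ← Ideal.map_pow]

/-- membership characterization for monomial ideals -/
theorem mem_monomialSpan_iff {A : Set (Fin s →₀ ℕ)} {f : MvPolynomial (Fin s) K} :
    f ∈ Ideal.span ((fun a => monomial a (1 : K)) '' A) ↔
      ∀ c ∈ f.support, ∃ a ∈ A, a ≤ c := by
  constructor
  · intro hf
    let M : Ideal (MvPolynomial (Fin s) K) :=
      { carrier := {g | ∀ c ∈ g.support, ∃ a ∈ A, a ≤ c}
        zero_mem' := by simp
        add_mem' := by
          intro g h hg hh c hc
          rcases Finset.mem_union.1 (MvPolynomial.support_add hc) with h1 | h1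
          · exact hg c h1
          · exact hh c h1
        smul_mem' := by
          intro r g hg c hc
          have : c ∈ r.support + g.support := MvPolynomial.support_mul r g (by
            simpa using hc)
          rcases Finset.mem_add.1 this with ⟨a, ha, b, hb, rfl⟩
          obtain ⟨a', ha', hab⟩ := hg b hb
          exact ⟨a', ha', hab.trans le_add_self⟩ }
    have : Ideal.span ((fun a => monomial a (1 : K)) '' A) ≤ M := by
      rw [Ideal.span_le]
      rintro _ ⟨a, ha, rfl⟩
      intro c hc
      rw [MvPolynomial.support_monomial, if_neg (one_ne_zero)] at hc
      simp only [Finset.mem_singleton] at hc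
      exact ⟨a, ha, hc ▸ le_rfl⟩
    exact this hf
  · intro h
    rw [MvPolynomial.as_sum f]
    refine Ideal.sum_mem _ fun c hc => ?_
    obtain ⟨a, ha, hac⟩ := h c hc
    have : monomial c (coeff c f) = monomial (c - a) (coeff c f) * monomial a 1 := by
      rw [MvPolynomial.monomial_mul, mul_one, tsub_add_cancel_of_le hac]
    rw [this]
    exact Ideal.mul_mem_left _ _ (Ideal.subset_span ⟨a, ha, rfl⟩)

/-- product of monomial ideals -/
theorem monomialSpan_mul (A B : Set (Fin s →₀ ℕ)) :
    Ideal.span ((fun a => monomial a (1 : K)) '' A) *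
      Ideal.span ((fun a => monomial a (1 : K)) '' B)
      = Ideal.span ((fun a => monomial a (1 : K)) '' (A + B)) := by
  rw [Ideal.span_mul_span']
  congr 1
  ext f
  constructor
  · rintro ⟨_, ⟨a, ha, rfl⟩, _, ⟨b, hb, rfl⟩, rfl⟩
    exact ⟨a + b, ⟨a, ha, b, hb, rfl⟩, by simp [MvPolynomial.monomial_mul]⟩
  · rintro ⟨_, ⟨a, ha, b, hb, rfl⟩, rfl⟩
    exact ⟨monomial a 1, ⟨a, ha, rfl⟩, monomial b 1, ⟨b, hb, rfl⟩,
      by simp [MvPolynomial.monomial_mul]⟩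

theorem isMonomialIdeal_pow {I : Ideal (MvPolynomial (Fin s) K)} (hI : IsMonomialIdeal I)
    (n : ℕ) : IsMonomialIdeal (I ^ n) := by
  induction n with
  | zero =>
    refine ⟨{0}, ?_⟩
    simp only [pow_zero, Ideal.one_eq_top, Set.image_singleton, monomial_zero', C_1]
    rw [Ideal.span_singleton_one]
  | succ n ih =>
    obtain ⟨A, hA⟩ := hI
    obtain ⟨B, hB⟩ := ih
    exact ⟨B + A, by rw [pow_succ, hB, hA, monomialSpan_mul]⟩

/-- the monomial prime generated by the variables in σ -/
noncomputable def Pσ (σ : Set (Fin s)) : Ideal (MvPolynomial (Fin s) K) :=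
  Ideal.span ((fun a => monomial a (1 : K)) '' ((fun i => Finsupp.single i 1) '' σ))

theorem mem_Pσ_iff {σ : Set (Fin s)} {f : MvPolynomial (Fin s) K} :
    f ∈ (Pσ σ : Ideal (MvPolynomial (Fin s) K)) ↔
      ∀ c ∈ f.support, ∃ i ∈ σ, 1 ≤ c i := by
  rw [Pσ, mem_monomialSpan_iff]
  constructor
  · intro h c hc
    obtain ⟨a, ⟨i, hi, rfl⟩, hac⟩ := h c hc
    exact ⟨i, hi, by simpa using (Finsupp.single_le_iff.1 hac)⟩
  · intro h c hc
    obtain ⟨i, hi, hic⟩ := h c hc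
    exact ⟨Finsupp.single i 1, ⟨i, hi, rfl⟩, Finsupp.single_le_iff.2 hic⟩

theorem X_mem_Pσ {σ : Set (Fin s)} {i : Fin s} (hi : i ∈ σ) :
    (X i : MvPolynomial (Fin s) K) ∈ (Pσ σ : Ideal (MvPolynomial (Fin s) K)) := by
  rw [mem_Pσ_iff]
  intro c hc
  rw [MvPolynomial.support_X, Finset.mem_singleton] at hc
  exact ⟨i, hi, by simp [hc]⟩

theorem Pσ_isPrime (σ : Set (Fin s)) :
    (Pσ σ : Ideal (MvPolynomial (Fin s) K)).IsPrime := by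
  set φ : MvPolynomial (Fin s) K →ₐ[K] MvPolynomial (Fin s) K :=
    aeval (fun i => if i ∈ σ then 0 else X i) with hφ
  have key : ∀ f : MvPolynomial (Fin s) K, f - φ f ∈ (Pσ σ : Ideal (MvPolynomial (Fin s) K)) := by
    intro f
    induction f using MvPolynomial.induction_on with
    | C a => simp [hφ]
    | add p q hp hq =>
      have : p + q - φ (p + q) = (p - φ p) + (q - φ q) := by rw [map_add]; ring
      rw [this]; exact Ideal.add_mem _ hp hq
    | mul_X p i hp =>
      by_cases hi : i ∈ σ
      · have : p * X i - φ (p * X i) = p * X i := by simp [hφ, hi]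
        rw [this]
        exact Ideal.mul_mem_left _ _ (X_mem_Pσ hi)
      · have : p * X i - φ (p * X i) = (p - φ p) * X i := by simp [hφ, hi]; ring
        rw [this]
        exact Ideal.mul_mem_right _ _ hp
  have : (Pσ σ : Ideal (MvPolynomial (Fin s) K)) = RingHom.ker φ.toRingHom := by
    apply le_antisymm
    · rw [Pσ, Ideal.span_le]
      rintro _ ⟨_, ⟨i, hi, rfl⟩, rfl⟩
      simp only [SetLike.mem_coe, RingHom.mem_ker, AlgHom.toRingHom_eq_coe, RingHom.coe_coe, hφ,
        aeval_monomial, Finsupp.prod_single_index, pow_one, map_one, one_mul, pow_zero]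
      simp [Finsupp.prod_single_index, hi]
    · intro f hf
      rw [RingHom.mem_ker] at hf
      have := key f
      rw [show φ.toRingHom f = φ f from rfl] at hf
      rwa [hf, sub_zero] at this
  rw [this]
  exact RingHom.ker_isPrime _

theorem monomial_single_one_eq_X (i : Fin s) :
    (monomial (Finsupp.single i 1) (1 : K)) = X i := rfl

/-- every minimal prime of a monomial ideal is generated by variables -/
theorem minimalPrime_eq_Pσ {I p : Ideal (MvPolynomial (Fin s) K)}
    (hI : IsMonomialIdeal I) (hp : p ∈ I.minimalPrimes) :
    p = Pσ {i | X i ∈ p} := by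
  obtain ⟨A, rfl⟩ := hI
  have hprime : p.IsPrime := hp.1.1
  -- Pσ ≤ p
  have h1 : (Pσ {i | X i ∈ p} : Ideal (MvPolynomial (Fin s) K)) ≤ p := by
    rw [Pσ, Ideal.span_le]
    rintro _ ⟨_, ⟨i, hi, rfl⟩, rfl⟩
    exact hi
  -- I ≤ Pσ
  have h2 : Ideal.span ((fun a => monomial a (1 : K)) '' A) ≤ Pσ {i | X i ∈ p} := by
    rw [Ideal.span_le]
    rintro _ ⟨a, ha, rfl⟩
    have hmem : (monomial a (1 : K)) ∈ p := hp.1.2 (Ideal.subset_span ⟨a, ha, rfl⟩)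
    rw [MvPolynomial.monomial_eq, map_one, one_mul, Finsupp.prod] at hmem
    haveI := hprime
    obtain ⟨i, hi, hXi⟩ := Ideal.IsPrime.prod_mem_iff.1 hmem
    have hXip : X i ∈ p := hprime.mem_of_pow_mem _ hXi
    show monomial a (1:K) ∈ (Pσ {i | X i ∈ p} : Ideal (MvPolynomial (Fin s) K))
    rw [mem_Pσ_iff]
    intro c hc
    rw [MvPolynomial.support_monomial, if_neg (one_ne_zero)] at hc
    simp only [Finset.mem_singleton] at hc
    subst hc
    exact ⟨i, hXip, Finsupp.mem_support_iff.1 hi |> Nat.one_le_iff_ne_zero.2⟩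
  exact le_antisymm (hp.2 ⟨Pσ_isPrime _, h2⟩ h1) h1


/-- The restriction algebra hom: kill variables outside σ by sending them to 1. -/
noncomputable def ρ (σ : Set (Fin s)) :
    MvPolynomial (Fin s) K →ₐ[K] MvPolynomial (Fin s) K :=
  aeval (fun i => if i ∈ σ then X i else 1)

theorem ρ_monomial (σ : Set (Fin s)) (a : Fin s →₀ ℕ) (c : K) :
    ρ σ (monomial a c) = monomial (Finsupp.filter (· ∈ σ) a) c := by
  rw [ρ, aeval_monomial, MvPolynomial.monomial_eq]
  congr 1
  rw [Finsupp.prod_filter_index, Finsupp.prod]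
  rw [Finsupp.support_filter, Finset.prod_filter]
  refine Finset.prod_congr rfl fun i _ => ?_
  split_ifs <;> simp

theorem map_ρ_monomialSpan (σ : Set (Fin s)) (A : Set (Fin s →₀ ℕ)) :
    Ideal.map (ρ σ : MvPolynomial (Fin s) K →ₐ[K] MvPolynomial (Fin s) K)
        (Ideal.span ((fun a => monomial a (1 : K)) '' A))
      = Ideal.span ((fun a => monomial a (1 : K)) '' (Finsupp.filter (· ∈ σ) '' A)) := by
  rw [Ideal.map_span, ← Set.image_comp, ← Set.image_comp]
  congr 1
  funext a
  simp [Function.comp, ρ_monomial]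

theorem map_ρ_le_contractAt (σ : Set (Fin s)) (A : Set (Fin s →₀ ℕ)) :
    Ideal.span ((fun a => monomial a (1 : K)) '' (Finsupp.filter (· ∈ σ) '' A))
      ≤ contractAt (Ideal.span ((fun a => monomial a (1 : K)) '' A)) (Pσ σ) (Pσ_isPrime σ) := by
  rw [Ideal.span_le]
  rintro _ ⟨_, ⟨a, ha, rfl⟩, rfl⟩
  rw [SetLike.mem_coe, mem_contractAt_iff]
  refine ⟨monomial (Finsupp.filter (fun i => ¬ i ∈ σ) a) 1, ?_, ?_⟩
  · intro hmem
    rw [mem_Pσ_iff] at hmem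
    obtain ⟨i, hi, h1⟩ := hmem (Finsupp.filter (fun i => ¬ i ∈ σ) a) (by
      rw [MvPolynomial.support_monomial, if_neg (one_ne_zero)]; simp)
    rw [Finsupp.filter_apply, if_neg (by simpa using hi)] at h1
    exact absurd h1 (by simp)
  · rw [MvPolynomial.monomial_mul, one_mul]
    rw [show Finsupp.filter (fun i => ¬ i ∈ σ) a + Finsupp.filter (· ∈ σ) a = a by
      rw [add_comm]; exact Finsupp.filter_pos_add_filter_neg a _]
    exact Ideal.subset_span ⟨a, ha, rfl⟩

/-- the core combinatorial lemma: saturating a monomial ideal at the monomial prime `Pσ`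
lands in the σ-restricted monomial ideal. -/
theorem mem_filterSpan_of_mul_mem (σ : Set (Fin s)) (A : Set (Fin s →₀ ℕ))
    {u f : MvPolynomial (Fin s) K} (hu : u ∉ (Pσ σ : Ideal (MvPolynomial (Fin s) K)))
    (huf : u * f ∈ Ideal.span ((fun a => monomial a (1 : K)) '' A)) :
    f ∈ Ideal.span ((fun a => monomial a (1 : K)) '' (Finsupp.filter (· ∈ σ) '' A)) := by
  set D : (Fin s →₀ ℕ) → Prop := fun c => ∃ a ∈ A, Finsupp.filter (· ∈ σ) a ≤ c with hD
  have memT : ∀ g : MvPolynomial (Fin s) K,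
      g ∈ Ideal.span ((fun a => monomial a (1 : K)) '' (Finsupp.filter (· ∈ σ) '' A)) ↔
        ∀ c ∈ g.support, D c := by
    intro g
    rw [mem_monomialSpan_iff]
    constructor
    · intro h c hc
      obtain ⟨_, ⟨a, ha, rfl⟩, hle⟩ := h c hc
      exact ⟨a, ha, hle⟩
    · intro h c hc
      obtain ⟨a, ha, hle⟩ := h c hc
      exact ⟨_, ⟨a, ha, rfl⟩, hle⟩
  have filter_le_self : ∀ (a : Fin s →₀ ℕ), Finsupp.filter (· ∈ σ) a ≤ a := by
    intro a
    rw [Finsupp.le_def]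
    intro i
    rw [Finsupp.filter_apply]
    split_ifs <;> simp
  -- u * f lies in the restricted ideal
  have hT : u * f ∈ Ideal.span ((fun a => monomial a (1 : K)) ''
      (Finsupp.filter (· ∈ σ) '' A)) := by
    rw [memT]
    intro c hc
    rw [mem_monomialSpan_iff] at huf
    obtain ⟨a, ha, hle⟩ := huf c hc
    exact ⟨a, ha, (filter_le_self a).trans hle⟩
  -- split f into good and bad parts
  set B : Finset (Fin s →₀ ℕ) := f.support.filter (fun c => ¬ D c) with hB
  set g : MvPolynomial (Fin s) K := ∑ c ∈ B, monomial c (coeff c f) with hg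
  have hgood : f - g ∈ Ideal.span ((fun a => monomial a (1 : K)) ''
      (Finsupp.filter (· ∈ σ) '' A)) := by
    have hsplit : f - g = ∑ c ∈ f.support.filter (fun c => D c), monomial c (coeff c f) := by
      rw [sub_eq_iff_eq_add]
      conv_lhs => rw [MvPolynomial.as_sum f]
      rw [hg, hB]
      exact (Finset.sum_filter_add_sum_filter_not f.support (fun c => D c) _).symm
    rw [hsplit]
    refine Ideal.sum_mem _ fun c hc => ?_
    obtain ⟨a, ha, hle⟩ := (Finset.mem_filter.1 hc).2
    have : monomial c (coeff c f)
        = monomial (c - Finsupp.filter (· ∈ σ) a) (coeff c f)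
          * monomial (Finsupp.filter (· ∈ σ) a) 1 := by
      rw [MvPolynomial.monomial_mul, mul_one, tsub_add_cancel_of_le hle]
    rw [this]
    exact Ideal.mul_mem_left _ _ (Ideal.subset_span ⟨_, ⟨a, ha, rfl⟩, rfl⟩)
  -- u * g is in the restricted ideal
  have hTg : u * g ∈ Ideal.span ((fun a => monomial a (1 : K)) ''
      (Finsupp.filter (· ∈ σ) '' A)) := by
    have : u * g = u * f - u * (f - g) := by ring
    rw [this]
    exact Ideal.sub_mem _ hT (Ideal.mul_mem_left _ _ hgood)
  -- coefficients of g
  have hgcoeff : ∀ d, coeff d g = if d ∈ B then coeff d f else 0 := by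
    intro d
    rw [hg, MvPolynomial.coeff_sum]
    rw [show (fun c => coeff d (monomial c (coeff c f)))
        = fun c => if c = d then coeff c f else 0 by
      funext c; rw [MvPolynomial.coeff_monomial]]
    exact Finset.sum_ite_eq' B d (fun c => coeff c f)
  -- it suffices to prove that the bad part vanishes
  suffices hgz : g = 0 by
    have := hgood
    rwa [hgz, sub_zero] at this
  by_contra hgne
  have hBne : B.Nonempty := by
    rcases Finset.eq_empty_or_nonempty B with h | h
    · exact absurd (by rw [hg, h, Finset.sum_empty]) hgne
    · exact h
  -- pick the extremal exponents
  have hEne : ∃ e ∈ u.support, Finsupp.filter (· ∈ σ) e = 0 := by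
    by_contra hcon
    push_neg at hcon
    apply hu
    rw [mem_Pσ_iff]
    intro c hc
    have h0 := hcon c hc
    have : ∃ i, Finsupp.filter (· ∈ σ) c i ≠ 0 := by
      by_contra hall
      push_neg at hall
      exact h0 (Finsupp.ext hall)
    obtain ⟨i, hi⟩ := this
    rw [Finsupp.filter_apply] at hi
    by_cases hiσ : i ∈ σ
    · rw [if_pos hiσ] at hi
      exact ⟨i, hiσ, Nat.one_le_iff_ne_zero.2 hi⟩
    · rw [if_neg hiσ] at hi
      exact absurd rfl hi
  set E : Finset (Fin s →₀ ℕ) := u.support.filter (fun e => Finsupp.filter (· ∈ σ) e = 0)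
    with hE
  have hEne' : E.Nonempty := by
    obtain ⟨e, he1, he2⟩ := hEne
    exact ⟨e, Finset.mem_filter.2 ⟨he1, he2⟩⟩
  obtain ⟨e, heE, hemax⟩ := Finset.exists_max_image E (fun e => toLex e) hEne'
  set κ : (Fin s →₀ ℕ) → Lex (Lex (Fin s →₀ ℕ) × (Lex (Fin s →₀ ℕ))ᵒᵈ) :=
    fun c => toLex (toLex (Finsupp.filter (· ∈ σ) c),
      OrderDual.toDual (toLex (Finsupp.filter (fun i => ¬ i ∈ σ) c))) with hκ
  obtain ⟨c, hcB, hcmin⟩ := Finset.exists_min_image B κ hBne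
  have hc_suppf : c ∈ f.support := (Finset.mem_filter.1 hcB).1
  have hc_bad : ¬ D c := (Finset.mem_filter.1 hcB).2
  have he_suppu : e ∈ u.support := (Finset.mem_filter.1 heE).1
  have he0 : Finsupp.filter (· ∈ σ) e = 0 := (Finset.mem_filter.1 heE).2
  have he0' : ∀ i ∈ σ, e i = 0 := by
    intro i hi
    have := DFunLike.congr_fun he0 i
    rwa [Finsupp.filter_apply, if_pos hi, Finsupp.coe_zero, Pi.zero_apply] at this
  -- e + c is a bad exponent
  have hec_bad : ¬ D (e + c) := by
    rintro ⟨a, ha, hle⟩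
    refine hc_bad ⟨a, ha, ?_⟩
    rw [Finsupp.le_def] at hle ⊢
    intro i
    by_cases hiσ : i ∈ σ
    · have := hle i
      rwa [Finsupp.add_apply, he0' i hiσ, zero_add] at this
    · rw [Finsupp.filter_apply, if_neg hiσ]
      exact Nat.zero_le _
  -- the coefficient of u * g at e + c is nonzero
  have hcoeff : coeff (e + c) (u * g) = coeff e u * coeff c g := by
    classical
    rw [MvPolynomial.coeff_mul]
    refine Finset.sum_eq_single_of_mem (e, c) (by simp) ?_
    rintro ⟨x, y⟩ hxy hne
    by_contra hprod
    have hxu : coeff x u ≠ 0 := fun h => hprod (by rw [h, zero_mul])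
    have hyg : coeff y g ≠ 0 := fun h => hprod (by rw [h, mul_zero])
    have hyB : y ∈ B := by
      by_contra hyB
      rw [hgcoeff y, if_neg hyB] at hyg
      exact hyg rfl
    have hsum : x + y = e + c := Finset.HasAntidiagonal.mem_antidiagonal.1 hxy
    -- compare the σ-parts
    have hσsum : Finsupp.filter (· ∈ σ) x + Finsupp.filter (· ∈ σ) y
        = Finsupp.filter (· ∈ σ) c := by
      rw [← Finsupp.filter_add, hsum, Finsupp.filter_add, he0, zero_add]
    have hyle : Finsupp.filter (· ∈ σ) y ≤ Finsupp.filter (· ∈ σ) c :=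
      hσsum ▸ le_add_self
    have hklec : κ c ≤ κ y := hcmin y hyB
    have hfirst : toLex (Finsupp.filter (· ∈ σ) y) ≤ toLex (Finsupp.filter (· ∈ σ) c) :=
      Finsupp.toLex_monotone hyle
    rw [hκ, Prod.Lex.le_iff] at hklec
    have hσeq : Finsupp.filter (· ∈ σ) c = Finsupp.filter (· ∈ σ) y := by
      rcases hklec with h | h
      · exact absurd (lt_of_lt_of_le h hfirst) (lt_irrefl _)
      · exact toLex_inj.1 h.1
    have hyσc : Finsupp.filter (· ∈ σ) y = Finsupp.filter (· ∈ σ) c := hσeq.symm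
    -- x has trivial σ-part, hence lies in E
    have hx0 : Finsupp.filter (· ∈ σ) x = 0 := by
      have := hσsum
      rw [hyσc] at this
      exact add_eq_right.1 (by rwa [hσeq] at this)
    have hxE : x ∈ E := Finset.mem_filter.2 ⟨MvPolynomial.mem_support_iff.2 hxu, hx0⟩
    have hxle : toLex x ≤ toLex e := hemax x hxE
    -- second components
    have hsecond : toLex (Finsupp.filter (fun i => ¬ i ∈ σ) y)
        ≤ toLex (Finsupp.filter (fun i => ¬ i ∈ σ) c) := by
      rcases hklec with h | h
      · exact absurd (lt_of_lt_of_le h hfirst) (lt_irrefl _)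
      · exact h.2
    -- the complementary parts
    have hxeq : x = Finsupp.filter (fun i => ¬ i ∈ σ) x := by
      conv_lhs => rw [← Finsupp.filter_pos_add_filter_neg x (· ∈ σ)]
      rw [hx0, zero_add]
    have heeq : e = Finsupp.filter (fun i => ¬ i ∈ σ) e := by
      conv_lhs => rw [← Finsupp.filter_pos_add_filter_neg e (· ∈ σ)]
      rw [he0, zero_add]
    have hcsum : x + Finsupp.filter (fun i => ¬ i ∈ σ) y
        = e + Finsupp.filter (fun i => ¬ i ∈ σ) c := by
      have h2 := congrArg (Finsupp.filter (fun i => ¬ i ∈ σ)) hsum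
      rw [Finsupp.filter_add, Finsupp.filter_add] at h2
      rw [hxeq, heeq]
      exact h2
    -- conclude equality via the lexicographic order
    have tadd : ∀ a b : Fin s →₀ ℕ, toLex a + toLex b = toLex (a + b) := fun _ _ => rfl
    have hxe : toLex x = toLex e := by
      rcases lt_or_eq_of_le hxle with hlt | h
      · exfalso
        have h1 := add_lt_add_right hlt (toLex (Finsupp.filter (fun i => ¬ i ∈ σ) y))
        have h2 := add_le_add_left hsecond (toLex e)
        have h3 := lt_of_lt_of_le h1 h2
        rw [tadd, tadd] at h3
        have h4 : toLex (x + Finsupp.filter (fun i => ¬ i ∈ σ) y)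
            < toLex (e + Finsupp.filter (fun i => ¬ i ∈ σ) c) := by rwa [add_comm x, add_comm e]
        rw [hcsum] at h4
        exact absurd h4 (lt_irrefl _)
      · exact h
    have hxe' : x = e := toLex_inj.1 hxe
    have hyc : y = c := by
      have hcancel : Finsupp.filter (fun i => ¬ i ∈ σ) y
          = Finsupp.filter (fun i => ¬ i ∈ σ) c := by
        have := hcsum
        rw [hxe'] at this
        exact add_left_cancel this
      conv_lhs => rw [← Finsupp.filter_pos_add_filter_neg y (· ∈ σ)]
      conv_rhs => rw [← Finsupp.filter_pos_add_filter_neg c (· ∈ σ)]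
      rw [hyσc, hcancel]
    exact hne (by rw [hxe', hyc])
  have hcg : coeff c g ≠ 0 := by
    rw [hgcoeff c, if_pos hcB]
    exact MvPolynomial.mem_support_iff.1 hc_suppf
  have hcu : coeff e u ≠ 0 := MvPolynomial.mem_support_iff.1 he_suppu
  have hne0 : coeff (e + c) (u * g) ≠ 0 := by
    rw [hcoeff]
    exact mul_ne_zero hcu hcg
  rw [memT] at hTg
  exact hec_bad (hTg (e + c) (MvPolynomial.mem_support_iff.2 hne0))



theorem contractAt_pow_eq {I : Ideal (MvPolynomial (Fin s) K)} (hI : IsMonomialIdeal I)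
    {p : Ideal (MvPolynomial (Fin s) K)} (hp : p ∈ I.minimalPrimes) (n : ℕ) :
    contractAt (I ^ n) p hp.1.1 = (contractAt I p hp.1.1) ^ n := by
  have hpσ : ∃ σ : Set (Fin s), p = Pσ σ := ⟨_, minimalPrime_eq_Pσ hI hp⟩
  obtain ⟨σ, rfl⟩ := hpσ
  refine le_antisymm ?_ (pow_contractAt_le I (Pσ σ) _ n)
  obtain ⟨An, hAn⟩ := isMonomialIdeal_pow hI n
  obtain ⟨A, hA⟩ := hI
  intro x hx
  rw [mem_contractAt_iff] at hx
  obtain ⟨u, hu, hux⟩ := hx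
  rw [hAn] at hux
  have hx2 := mem_filterSpan_of_mul_mem σ An hu hux
  have e1 : Ideal.span ((fun a => monomial a (1 : K)) '' (Finsupp.filter (· ∈ σ) '' An))
      = Ideal.map (ρ σ : MvPolynomial (Fin s) K →ₐ[K] MvPolynomial (Fin s) K) (I ^ n) := by
    rw [hAn, map_ρ_monomialSpan]
  have e2 : Ideal.map (ρ σ : MvPolynomial (Fin s) K →ₐ[K] MvPolynomial (Fin s) K) (I ^ n)
      = (Ideal.map (ρ σ : MvPolynomial (Fin s) K →ₐ[K] MvPolynomial (Fin s) K) I) ^ n :=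
    Ideal.map_pow _ _ _
  have e3 : Ideal.map (ρ σ : MvPolynomial (Fin s) K →ₐ[K] MvPolynomial (Fin s) K) I
      ≤ contractAt I (Pσ σ) (Pσ_isPrime σ) := by
    rw [hA, map_ρ_monomialSpan]
    exact map_ρ_le_contractAt σ A
  have e4 : (Ideal.map (ρ σ : MvPolynomial (Fin s) K →ₐ[K] MvPolynomial (Fin s) K) I) ^ n
      ≤ (contractAt I (Pσ σ) (Pσ_isPrime σ)) ^ n := Ideal.pow_right_mono e3 n
  rw [e1, e2] at hx2
  exact e4 hx2

end SymbAux

/-- **Lemma.** Let `I` be a monomial ideal of `S = K[t_1,…,t_s]` with minimal primes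
`p_1, …, p_r`, and let `𝔦_i = I S_{p_i} ∩ S` be the `p_i`-primary component of `I`.
Then `I^{(n)} = 𝔦_1ⁿ ∩ ⋯ ∩ 𝔦_rⁿ` for all `n ≥ 1`. -/
theorem symbolicPower_eq_iInf_pow_primaryComponent {s : ℕ} (K : Type*) [Field K]
    (I : Ideal (MvPolynomial (Fin s) K)) (hI : IsMonomialIdeal I) :
    ∀ n : ℕ, 1 ≤ n →
      symbolicPower I n =
        ⨅ (p : Ideal (MvPolynomial (Fin s) K)) (hp : p ∈ I.minimalPrimes),
          (contractAt I p hp.1.1) ^ n := by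
  intro n _
  rw [symbolicPower]
  exact iInf_congr fun p => iInf_congr fun hp => SymbAux.contractAt_pow_eq hI hp n
end

section
/- Let I be a monomial ideal of S = K[t_1,…,t_s] and let p be an associated prime of I. Then for all n ≥ 1, I^n S_p ∩ S = (I S_p ∩ S)^n, i.e., the contraction to S of the extension of I^n to S_p equals the n-th power of the contraction to S of the extension of I to S_p. -/
open MvPolynomial Pointwise

section Aux

variable {s : ℕ} (K : Type*) [Field K]

/-- The ideal generated by the monomials with exponents in `M`. -/
noncomputable def spanMono (M : Set (Fin s →₀ ℕ)) : Ideal (MvPolynomial (Fin s) K) :=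
  Ideal.span ((fun a => monomial a (1 : K)) '' M)

variable {K}

theorem mem_spanMono {M : Set (Fin s →₀ ℕ)} {g : MvPolynomial (Fin s) K} :
    g ∈ spanMono K M ↔ ∀ c ∈ g.support, ∃ a ∈ M, a ≤ c := by
  classical
  constructor
  · intro hg
    refine Submodule.span_induction ?_ ?_ ?_ ?_ hg
    · rintro x ⟨a, haM, rfl⟩ c hc
      rw [MvPolynomial.mem_support_iff, coeff_monomial] at hc
      rcases eq_or_ne a c with rfl | h
      · exact ⟨a, haM, le_refl _⟩
      · simp [h] at hc
    · simp
    · intro x y _ _ hx hy c hc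
      rcases Finset.mem_union.1 (MvPolynomial.support_add hc) with h | h
      · exact hx c h
      · exact hy c h
    · intro r x _ hx c hc
      rw [smul_eq_mul, MvPolynomial.mem_support_iff, coeff_mul] at hc
      obtain ⟨⟨d, e⟩, hde, hne⟩ := Finset.exists_ne_zero_of_sum_ne_zero hc
      have he : e ∈ x.support := MvPolynomial.mem_support_iff.2 (right_ne_zero_of_mul hne)
      obtain ⟨a, haM, ha⟩ := hx e he
      exact ⟨a, haM, ha.trans (le_add_self.trans_eq (Finset.HasAntidiagonal.mem_antidiagonal.1 hde))⟩
  · intro h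
    rw [g.as_sum]
    refine Ideal.sum_mem _ fun c hc => ?_
    obtain ⟨a, haM, hac⟩ := h c hc
    have heq : monomial c (coeff c g) = monomial (c - a) (coeff c g) * monomial a 1 := by
      rw [monomial_mul, mul_one, tsub_add_cancel_of_le hac]
    rw [heq]
    exact Ideal.mul_mem_left _ _ (Ideal.subset_span ⟨a, haM, rfl⟩)

theorem monomial_mem_spanMono {M : Set (Fin s →₀ ℕ)} {c : Fin s →₀ ℕ} (k : K)
    (h : ∃ a ∈ M, a ≤ c) : monomial c k ∈ spanMono K M := by
  classical
  rw [mem_spanMono]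
  intro c' hc'
  rw [MvPolynomial.mem_support_iff, coeff_monomial] at hc'
  rcases eq_or_ne c c' with rfl | hne
  · exact h
  · simp [hne] at hc'

theorem spanMono_mul (M N : Set (Fin s →₀ ℕ)) :
    spanMono K M * spanMono K N = spanMono K (Set.image2 (· + ·) M N) := by
  rw [spanMono, spanMono, spanMono, Ideal.span_mul_span']
  congr 1
  ext x
  simp only [Set.mem_mul, Set.mem_image, Set.mem_image2]
  constructor
  · rintro ⟨_, ⟨a, ha, rfl⟩, _, ⟨b, hb, rfl⟩, rfl⟩
    exact ⟨a + b, ⟨a, ha, b, hb, rfl⟩, by rw [monomial_mul, one_mul]⟩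
  · rintro ⟨_, ⟨a, ha, b, hb, rfl⟩, rfl⟩
    exact ⟨monomial a 1, ⟨a, ha, rfl⟩, monomial b 1, ⟨b, hb, rfl⟩, by rw [monomial_mul, one_mul]⟩

theorem mem_contractAt_iff {J p : Ideal (MvPolynomial (Fin s) K)} (hp : p.IsPrime)
    {f : MvPolynomial (Fin s) K} :
    f ∈ contractAt J p hp ↔ ∃ u, u ∉ p ∧ u * f ∈ J := by
  letI := hp
  rw [contractAt, Ideal.mem_comap,
    IsLocalization.mem_map_algebraMap_iff p.primeCompl (Localization.AtPrime p)]
  constructor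
  · rintro ⟨⟨⟨i, hi⟩, ⟨u, hu⟩⟩, h⟩
    refine ⟨u, hu, ?_⟩
    have h2 : algebraMap _ (Localization.AtPrime p) (u * f) =
        algebraMap _ (Localization.AtPrime p) i := by
      rw [map_mul, mul_comm]
      exact h
    have h3 := IsLocalization.injective (Localization.AtPrime p)
      p.primeCompl_le_nonZeroDivisors h2
    exact h3 ▸ hi
  · rintro ⟨u, hu, huf⟩
    refine ⟨⟨⟨u * f, huf⟩, ⟨u, hu⟩⟩, ?_⟩
    simp only [map_mul]
    ring

theorem support_sub_monomial (g : MvPolynomial (Fin s) K) (d : Fin s →₀ ℕ) :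
    (g - monomial d (coeff d g)).support = g.support.erase d := by
  classical
  ext c
  rw [Finset.mem_erase, MvPolynomial.mem_support_iff, MvPolynomial.mem_support_iff,
    MvPolynomial.coeff_sub, coeff_monomial]
  rcases eq_or_ne d c with rfl | h
  · simp
  · simp [h, Ne.symm h]

theorem lex_add_eq {u v d e : Fin s →₀ ℕ} (h : u + v = d + e)
    (h1 : toLex d ≤ toLex u) (h2 : toLex e ≤ toLex v) : u = d ∧ v = e := by
  have hadd : toLex u + toLex v = toLex d + toLex e := by
    rw [← toLex_add, ← toLex_add, h]
  have hu : toLex u = toLex d := by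
    by_contra hne
    have hlt : toLex d < toLex u := h1.lt_of_ne (Ne.symm hne)
    exact absurd hadd (ne_of_gt (add_lt_add_of_lt_of_le hlt h2))
  have hud : u = d := toLex.injective hu
  subst hud
  exact ⟨rfl, add_left_cancel h⟩

set_option maxHeartbeats 1000000 in
theorem pow_min_mul_mem {M : Set (Fin s →₀ ℕ)} {a : MvPolynomial (Fin s) K} {d : Fin s →₀ ℕ}
    (hd : d ∈ a.support) (hmin : ∀ v ∈ a.support, toLex d ≤ toLex v) :
    ∀ n (f : MvPolynomial (Fin s) K), f.support.card ≤ n → a * f ∈ spanMono K M →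
      monomial d (coeff d a) ^ n * f ∈ spanMono K M := by
  intro n
  induction n with
  | zero =>
    intro f hf _
    have hf0 : f = 0 := by
      rwa [Nat.le_zero, Finset.card_eq_zero, MvPolynomial.support_eq_empty] at hf
    rw [hf0, mul_zero]
    exact Ideal.zero_mem _
  | succ n ih =>
    intro f hf hmem
    rcases eq_or_ne f 0 with rfl | hf0
    · rw [mul_zero]; exact Ideal.zero_mem _
    obtain ⟨e, he, hemin⟩ := Finset.exists_min_image f.support toLex
      (MvPolynomial.support_nonempty.2 hf0)
    have key : coeff (d + e) (a * f) = coeff d a * coeff e f := by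
      rw [coeff_mul]
      refine Finset.sum_eq_single (d, e) ?_ ?_
      · rintro ⟨u, v⟩ huv hne
        rw [Finset.HasAntidiagonal.mem_antidiagonal] at huv
        by_contra hterm
        have hu : u ∈ a.support := MvPolynomial.mem_support_iff.2 (left_ne_zero_of_mul hterm)
        have hv : v ∈ f.support := MvPolynomial.mem_support_iff.2 (right_ne_zero_of_mul hterm)
        obtain ⟨rfl, rfl⟩ := lex_add_eq huv (hmin u hu) (hemin v hv)
        exact hne rfl
      · intro hmem2
        rw [Finset.HasAntidiagonal.mem_antidiagonal] at hmem2
        exact absurd rfl hmem2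
    have hde : d + e ∈ (a * f).support :=
      MvPolynomial.mem_support_iff.2 (by
        rw [key]
        exact mul_ne_zero (MvPolynomial.mem_support_iff.1 hd) (MvPolynomial.mem_support_iff.1 he))
    obtain ⟨m, hm, hmle⟩ := mem_spanMono.1 hmem _ hde
    have hmono : monomial d (coeff d a) * monomial e (coeff e f) ∈ spanMono K M := by
      rw [monomial_mul]
      exact monomial_mem_spanMono _ ⟨m, hm, hmle⟩
    have hsupp' : (f - monomial e (coeff e f)).support = f.support.erase e :=
      support_sub_monomial f e
    have hcard' : (f - monomial e (coeff e f)).support.card ≤ n := by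
      rw [hsupp', Finset.card_erase_of_mem he]
      omega
    have hmem' : a * (monomial d (coeff d a) * (f - monomial e (coeff e f))) ∈ spanMono K M := by
      have heq : a * (monomial d (coeff d a) * (f - monomial e (coeff e f)))
          = monomial d (coeff d a) * (a * f) - a * (monomial d (coeff d a) * monomial e (coeff e f)) := by
        ring
      rw [heq]
      exact sub_mem (Ideal.mul_mem_left _ _ hmem) (Ideal.mul_mem_left _ _ hmono)
    have htsupp : (monomial d (coeff d a) : MvPolynomial (Fin s) K).support = {d} := by
      classical
      rw [support_monomial, if_neg (MvPolynomial.mem_support_iff.1 hd)]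
    have hcard'' : (monomial d (coeff d a) * (f - monomial e (coeff e f))).support.card ≤ n := by
      have hsub : (monomial d (coeff d a) * (f - monomial e (coeff e f))).support
          ⊆ (f - monomial e (coeff e f)).support.image (fun v => d + v) := by
        intro c hc
        rw [MvPolynomial.mem_support_iff, coeff_mul] at hc
        obtain ⟨⟨x, y⟩, hxy, hne⟩ := Finset.exists_ne_zero_of_sum_ne_zero hc
        rw [Finset.HasAntidiagonal.mem_antidiagonal] at hxy
        have hx : x ∈ (monomial d (coeff d a) : MvPolynomial (Fin s) K).support :=
          MvPolynomial.mem_support_iff.2 (left_ne_zero_of_mul hne)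
        have hy : y ∈ (f - monomial e (coeff e f)).support :=
          MvPolynomial.mem_support_iff.2 (right_ne_zero_of_mul hne)
        rw [htsupp, Finset.mem_singleton] at hx
        exact Finset.mem_image.2 ⟨y, hy, by rw [← hxy, hx]⟩
      calc (monomial d (coeff d a) * (f - monomial e (coeff e f))).support.card
          ≤ ((f - monomial e (coeff e f)).support.image (fun v => d + v)).card :=
            Finset.card_le_card hsub
        _ ≤ (f - monomial e (coeff e f)).support.card := Finset.card_image_le
        _ ≤ n := hcard'
    have hfin := ih (monomial d (coeff d a) * (f - monomial e (coeff e f))) hcard'' hmem'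
    have h1 : monomial d (coeff d a) ^ (n + 1) * (f - monomial e (coeff e f)) ∈ spanMono K M := by
      have heq : monomial d (coeff d a) ^ (n + 1) * (f - monomial e (coeff e f))
          = monomial d (coeff d a) ^ n * (monomial d (coeff d a) * (f - monomial e (coeff e f))) := by
        ring
      rw [heq]
      exact hfin
    have h2 : monomial d (coeff d a) ^ (n + 1) * monomial e (coeff e f) ∈ spanMono K M := by
      have heq : monomial d (coeff d a) ^ (n + 1) * monomial e (coeff e f)
          = monomial d (coeff d a) ^ n * (monomial d (coeff d a) * monomial e (coeff e f)) := by
        ring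
      rw [heq]
      exact Ideal.mul_mem_left _ _ hmono
    have heq : monomial d (coeff d a) ^ (n + 1) * f
        = monomial d (coeff d a) ^ (n + 1) * (f - monomial e (coeff e f))
          + monomial d (coeff d a) ^ (n + 1) * monomial e (coeff e f) := by
      ring
    rw [heq]
    exact add_mem h1 h2

theorem colon_prime_eq_spanMono {M : Set (Fin s →₀ ℕ)} {p : Ideal (MvPolynomial (Fin s) K)}
    {f : MvPolynomial (Fin s) K}
    (hpI : p = Submodule.colon (spanMono K M) (Ideal.span {f})) (hpp : p.IsPrime) :
    p = spanMono K ((fun i => Finsupp.single i 1) ''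
      {i : Fin s | (X i : MvPolynomial (Fin s) K) ∈ p}) := by
  classical
  have hf0 : f ≠ 0 := by
    rintro rfl
    apply hpp.ne_top
    rw [hpI, Ideal.eq_top_iff_one]
    exact Ideal.mem_colon_span_singleton.2 (by rw [mul_zero]; exact Ideal.zero_mem _)
  have hterm : ∀ n (g : MvPolynomial (Fin s) K), g.support.card ≤ n → g ∈ p →
      ∀ c, monomial c (coeff c g) ∈ p := by
    intro n
    induction n with
    | zero =>
      intro g hg _ c
      have hg0 : g = 0 := by
        rwa [Nat.le_zero, Finset.card_eq_zero, MvPolynomial.support_eq_empty] at hg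
      rw [hg0]
      simp
    | succ n ih =>
      intro g hcard hgp c
      rcases eq_or_ne g 0 with rfl | hg0
      · simp
      obtain ⟨d, hd, hdmin⟩ := Finset.exists_min_image g.support toLex
        (MvPolynomial.support_nonempty.2 hg0)
      have hgf : g * f ∈ spanMono K M := by
        rw [hpI] at hgp
        exact Ideal.mem_colon_span_singleton.1 hgp
      have ht : monomial d (coeff d g) ∈ p := by
        have hpow := pow_min_mul_mem hd hdmin f.support.card f le_rfl hgf
        have htp : monomial d (coeff d g) ^ f.support.card ∈ p := by
          rw [hpI]
          exact Ideal.mem_colon_span_singleton.2 hpow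
        exact hpp.mem_of_pow_mem _ htp
      rcases eq_or_ne d c with rfl | hcd
      · exact ht
      · have hg' : g - monomial d (coeff d g) ∈ p := sub_mem hgp ht
        have hcard' : (g - monomial d (coeff d g)).support.card ≤ n := by
          rw [support_sub_monomial, Finset.card_erase_of_mem hd]
          omega
        have hc' := ih _ hcard' hg' c
        rwa [MvPolynomial.coeff_sub, coeff_monomial, if_neg hcd, sub_zero] at hc'
  apply le_antisymm
  · intro g hg
    rw [mem_spanMono]
    intro c hc
    have hcg : coeff c g ≠ 0 := MvPolynomial.mem_support_iff.1 hc
    have hmc : (monomial c 1 : MvPolynomial (Fin s) K) ∈ p := by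
      have h1 := hterm g.support.card g le_rfl hg c
      have heq : (monomial c (1 : K)) = C (coeff c g)⁻¹ * monomial c (coeff c g) := by
        rw [C_mul_monomial, inv_mul_cancel₀ hcg]
      rw [heq]
      exact Ideal.mul_mem_left _ _ h1
    rw [monomial_eq, C_1, one_mul, Finsupp.prod] at hmc
    haveI := hpp
    obtain ⟨i, hi, hXi⟩ := Ideal.IsPrime.prod_mem_iff.1 hmc
    have hXip : (X i : MvPolynomial (Fin s) K) ∈ p := hpp.mem_of_pow_mem _ hXi
    refine ⟨Finsupp.single i 1, ⟨i, hXip, rfl⟩, ?_⟩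
    rw [Finsupp.single_le_iff]
    exact Nat.one_le_iff_ne_zero.2 (Finsupp.mem_support_iff.1 hi)
  · rw [spanMono, Ideal.span_le]
    rintro x ⟨b, ⟨i, hi, rfl⟩, rfl⟩
    exact hi

/-- Restriction of an exponent vector to the variables in `A`. -/
noncomputable def resA (A : Set (Fin s)) (c : Fin s →₀ ℕ) : Fin s →₀ ℕ :=
  letI := Classical.decPred fun i : Fin s => i ∈ A
  c.filter fun i => i ∈ A

theorem resA_apply_mem {A : Set (Fin s)} {i : Fin s} (h : i ∈ A) (c : Fin s →₀ ℕ) :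
    resA A c i = c i := by
  letI := Classical.decPred fun i : Fin s => i ∈ A
  exact Finsupp.filter_apply_pos _ _ h

theorem resA_apply_not_mem {A : Set (Fin s)} {i : Fin s} (h : i ∉ A) (c : Fin s →₀ ℕ) :
    resA A c i = 0 := by
  letI := Classical.decPred fun i : Fin s => i ∈ A
  exact Finsupp.filter_apply_neg _ _ h

theorem resA_add (A : Set (Fin s)) (c d : Fin s →₀ ℕ) :
    resA A (c + d) = resA A c + resA A d := by
  ext i
  by_cases h : i ∈ A
  · simp [resA_apply_mem h]
  · simp [resA_apply_not_mem h]

theorem resA_le (A : Set (Fin s)) (c : Fin s →₀ ℕ) : resA A c ≤ c := by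
  rw [Finsupp.le_def]
  intro i
  by_cases h : i ∈ A
  · rw [resA_apply_mem h]
  · rw [resA_apply_not_mem h]; exact Nat.zero_le _

theorem resA_mono (A : Set (Fin s)) {c d : Fin s →₀ ℕ} (h : c ≤ d) :
    resA A c ≤ resA A d := by
  rw [Finsupp.le_def] at h ⊢
  intro i
  by_cases hi : i ∈ A
  · rw [resA_apply_mem hi, resA_apply_mem hi]; exact h i
  · rw [resA_apply_not_mem hi]; exact Nat.zero_le _

theorem resA_eq_zero_iff (A : Set (Fin s)) (c : Fin s →₀ ℕ) :
    resA A c = 0 ↔ ∀ i ∈ A, c i = 0 := by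
  constructor
  · intro h i hi
    rw [← resA_apply_mem hi c, h]
    rfl
  · intro h
    ext i
    by_cases hi : i ∈ A
    · rw [resA_apply_mem hi, h i hi]; rfl
    · rw [resA_apply_not_mem hi]; rfl

theorem resA_degree_add (a b : Fin s →₀ ℕ) :
    Finsupp.degree (a + b) = Finsupp.degree a + Finsupp.degree b := by
  simp [Finsupp.degree_eq_weight_one, map_add]

theorem mem_spanMono_singles {A : Set (Fin s)} {g : MvPolynomial (Fin s) K} :
    g ∈ spanMono K ((fun i => Finsupp.single i 1) '' A) ↔
      ∀ c ∈ g.support, ∃ i ∈ A, c i ≠ 0 := by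
  rw [mem_spanMono]
  constructor
  · intro h c hc
    obtain ⟨a, ⟨i, hi, rfl⟩, hle⟩ := h c hc
    rw [Finsupp.single_le_iff] at hle
    exact ⟨i, hi, by omega⟩
  · intro h c hc
    obtain ⟨i, hi, hne⟩ := h c hc
    exact ⟨Finsupp.single i 1, ⟨i, hi, rfl⟩, Finsupp.single_le_iff.2 (by omega)⟩

theorem contract_spanMono {A : Set (Fin s)} (M : Set (Fin s →₀ ℕ))
    (hpp : (spanMono K ((fun i => Finsupp.single i 1) '' A)).IsPrime) :
    contractAt (spanMono K M) (spanMono K ((fun i => Finsupp.single i 1) '' A)) hpp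
      = spanMono K (resA A '' M) := by
  classical
  apply le_antisymm
  · intro g hg
    obtain ⟨u, hu, hug⟩ := (mem_contractAt_iff hpp).1 hg
    rw [mem_spanMono]
    by_contra hbad
    push_neg at hbad
    obtain ⟨c₁, hc₁, hbad₁⟩ := hbad
    set Bad := g.support.filter (fun c => ¬ ∃ m ∈ M, resA A m ≤ resA A c) with hBadDef
    have hBadne : Bad.Nonempty := by
      refine ⟨c₁, Finset.mem_filter.2 ⟨hc₁, ?_⟩⟩
      rintro ⟨m, hm, hle⟩
      exact hbad₁ (resA A m) ⟨m, hm, rfl⟩ (hle.trans (resA_le A c₁))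
    obtain ⟨c₀, hc₀Bad, hc₀min⟩ := Finset.exists_min_image Bad
      (fun c => Finsupp.degree (resA A c)) hBadne
    obtain ⟨hc₀g, hc₀P⟩ := Finset.mem_filter.1 hc₀Bad
    have hu0 : ∃ b ∈ u.support, resA A b = 0 := by
      by_contra h
      push_neg at h
      apply hu
      rw [mem_spanMono_singles]
      intro b hb
      by_contra h2
      push_neg at h2
      exact (h b hb) ((resA_eq_zero_iff A b).2 h2)
    obtain ⟨b₀, hb₀, hb₀res⟩ := hu0
    set u₀ : MvPolynomial (Fin s) K :=
      ∑ b ∈ u.support.filter (fun b => resA A b = 0), monomial b (coeff b u) with hu₀def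
    set f₀ : MvPolynomial (Fin s) K :=
      ∑ c ∈ g.support.filter (fun c => resA A c = resA A c₀), monomial c (coeff c g) with hf₀def
    have hcoeffu₀ : ∀ b, coeff b u₀ = if resA A b = 0 then coeff b u else 0 := by
      intro b
      rw [hu₀def, MvPolynomial.coeff_sum]
      simp only [coeff_monomial]
      rw [Finset.sum_ite_eq' _ b (fun b => coeff b u)]
      by_cases h1 : resA A b = 0
      · by_cases h2 : b ∈ u.support
        · rw [if_pos (show b ∈ u.support.filter (fun b => resA A b = 0) from
            Finset.mem_filter.2 ⟨h2, h1⟩), if_pos h1]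
        · rw [if_neg (show b ∉ u.support.filter (fun b => resA A b = 0) from
            fun hmem => h2 (Finset.mem_filter.1 hmem).1), if_pos h1,
            MvPolynomial.notMem_support_iff.1 h2]
      · rw [if_neg (show b ∉ u.support.filter (fun b => resA A b = 0) from
          fun hmem => h1 (Finset.mem_filter.1 hmem).2), if_neg h1]
    have hcoefff₀ : ∀ c, coeff c f₀ = if resA A c = resA A c₀ then coeff c g else 0 := by
      intro c
      rw [hf₀def, MvPolynomial.coeff_sum]
      simp only [coeff_monomial]
      rw [Finset.sum_ite_eq' _ c (fun c => coeff c g)]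
      by_cases h1 : resA A c = resA A c₀
      · by_cases h2 : c ∈ g.support
        · rw [if_pos (show c ∈ g.support.filter (fun c => resA A c = resA A c₀) from
            Finset.mem_filter.2 ⟨h2, h1⟩), if_pos h1]
        · rw [if_neg (show c ∉ g.support.filter (fun c => resA A c = resA A c₀) from
            fun hmem => h2 (Finset.mem_filter.1 hmem).1), if_pos h1,
            MvPolynomial.notMem_support_iff.1 h2]
      · rw [if_neg (show c ∉ g.support.filter (fun c => resA A c = resA A c₀) from
          fun hmem => h1 (Finset.mem_filter.1 hmem).2), if_neg h1]
    have hu₀ne : u₀ ≠ 0 := by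
      intro h
      have := hcoeffu₀ b₀
      rw [h, if_pos hb₀res] at this
      exact MvPolynomial.mem_support_iff.1 hb₀ (by simpa using this.symm)
    have hf₀ne : f₀ ≠ 0 := by
      intro h
      have := hcoefff₀ c₀
      rw [h, if_pos rfl] at this
      exact MvPolynomial.mem_support_iff.1 hc₀g (by simpa using this.symm)
    obtain ⟨c, hc⟩ := MvPolynomial.support_nonempty.2 (mul_ne_zero hu₀ne hf₀ne)
    have hcne : coeff c (u₀ * f₀) ≠ 0 := MvPolynomial.mem_support_iff.1 hc
    have hresc : resA A c = resA A c₀ := by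
      rw [coeff_mul] at hcne
      obtain ⟨⟨x, y⟩, hxy, hne⟩ := Finset.exists_ne_zero_of_sum_ne_zero hcne
      rw [Finset.HasAntidiagonal.mem_antidiagonal] at hxy
      have hx := left_ne_zero_of_mul hne
      have hy := right_ne_zero_of_mul hne
      rw [hcoeffu₀ x] at hx
      rw [hcoefff₀ y] at hy
      have hx0 : resA A x = 0 := by
        by_contra h; rw [if_neg h] at hx; exact hx rfl
      have hy0 : resA A y = resA A c₀ := by
        by_contra h; rw [if_neg h] at hy; exact hy rfl
      rw [← hxy, resA_add, hx0, hy0, zero_add]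
    have hcoeffeq : coeff c (u * g) = coeff c (u₀ * f₀) := by
      rw [coeff_mul, coeff_mul]
      refine Finset.sum_congr rfl ?_
      rintro ⟨x, y⟩ hxy
      rw [Finset.HasAntidiagonal.mem_antidiagonal] at hxy
      rw [hcoeffu₀ x, hcoefff₀ y]
      by_cases h1 : resA A x = 0
      · by_cases h2 : resA A y = resA A c₀
        · rw [if_pos h1, if_pos h2]
        · exact absurd (by rw [← hresc, ← hxy, resA_add, h1, zero_add]) h2
      · rw [if_neg h1]
        by_cases hcy : coeff x u * coeff y g = 0
        · rw [zero_mul]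
          exact hcy
        · exfalso
          have hxs : x ∈ u.support := MvPolynomial.mem_support_iff.2 (left_ne_zero_of_mul hcy)
          have hys : y ∈ g.support := MvPolynomial.mem_support_iff.2 (right_ne_zero_of_mul hcy)
          have hsum : resA A x + resA A y = resA A c₀ := by
            rw [← resA_add, hxy, hresc]
          have hyle : resA A y ≤ resA A c₀ := hsum ▸ le_add_self
          have hyP : ¬ ∃ m ∈ M, resA A m ≤ resA A y := by
            rintro ⟨m, hm, hle⟩
            exact hc₀P ⟨m, hm, hle.trans hyle⟩
          have hyBad : y ∈ Bad := Finset.mem_filter.2 ⟨hys, hyP⟩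
          have hmin := hc₀min y hyBad
          have hlt : Finsupp.degree (resA A y) < Finsupp.degree (resA A c₀) := by
            rw [← hsum, resA_degree_add]
            have hne0 : Finsupp.degree (resA A x) ≠ 0 := by
              rw [Ne, Finsupp.degree_eq_zero_iff]
              exact h1
            omega
          omega
    have hcsup : c ∈ (u * g).support :=
      MvPolynomial.mem_support_iff.2 (by rw [hcoeffeq]; exact hcne)
    obtain ⟨m, hm, hmle⟩ := mem_spanMono.1 hug c hcsup
    exact hc₀P ⟨m, hm, (resA_mono A hmle).trans_eq hresc⟩
  · rw [spanMono, Ideal.span_le]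
    rintro x ⟨b, ⟨m, hm, rfl⟩, rfl⟩
    rw [SetLike.mem_coe, mem_contractAt_iff hpp]
    refine ⟨monomial (m - resA A m) 1, ?_, ?_⟩
    · intro hmem
      rw [mem_spanMono_singles] at hmem
      obtain ⟨i, hiA, hine⟩ := hmem (m - resA A m) (by
        rw [MvPolynomial.mem_support_iff, coeff_monomial, if_pos rfl]
        exact one_ne_zero)
      rw [Finsupp.tsub_apply, resA_apply_mem hiA] at hine
      omega
    · rw [monomial_mul, one_mul, tsub_add_cancel_of_le (resA_le A m)]
      exact monomial_mem_spanMono _ ⟨m, hm, le_refl m⟩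

theorem contractAt_congr {R : Type*} [CommRing R] {J J' p p' : Ideal R}
    (hp : p.IsPrime) (hp' : p'.IsPrime) (hJ : J = J') (hP : p = p') :
    contractAt J p hp = contractAt J' p' hp' := by
  subst hJ; subst hP; rfl

theorem pow_spanMono (A : Set (Fin s)) (M : Set (Fin s →₀ ℕ)) :
    ∀ n : ℕ, 1 ≤ n → ∃ Mn : Set (Fin s →₀ ℕ),
      spanMono K M ^ n = spanMono K Mn ∧
      spanMono K (resA A '' Mn) = spanMono K (resA A '' M) ^ n := by
  intro n hn
  induction n, hn using Nat.le_induction with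
  | base => exact ⟨M, by rw [pow_one], by rw [pow_one]⟩
  | succ n hn ih =>
    obtain ⟨Mn, h1, h2⟩ := ih
    refine ⟨Set.image2 (· + ·) Mn M, ?_, ?_⟩
    · rw [pow_succ, h1, spanMono_mul]
    · have himg : resA A '' Set.image2 (· + ·) Mn M
          = Set.image2 (· + ·) (resA A '' Mn) (resA A '' M) :=
        Set.image_image2_distrib (fun a b => resA_add A a b)
      rw [himg, ← spanMono_mul, h2, pow_succ]

end Aux

/-- **Proposition.** Let `I` be a monomial ideal of `S = K[t_1,…,t_s]` and let `p` be an
associated prime of `I`. Then `Iⁿ S_p ∩ S = (I S_p ∩ S)ⁿ` for all `n ≥ 1`. -/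
theorem contract_pow_eq_pow_contract {s : ℕ} (K : Type*) [Field K]
    (I p : Ideal (MvPolynomial (Fin s) K)) (hI : IsMonomialIdeal I)
    (hp : p ∈ assPrimes I) :
    ∀ n : ℕ, 1 ≤ n → contractAt (I ^ n) p hp.1 = (contractAt I p hp.1) ^ n := by
  obtain ⟨M, hIM⟩ := hI
  have hIM' : I = spanMono K M := hIM
  obtain ⟨f, hpf⟩ := hp.2
  have hA : p = spanMono K ((fun i => Finsupp.single i 1) ''
      {i : Fin s | (X i : MvPolynomial (Fin s) K) ∈ p}) :=
    colon_prime_eq_spanMono (by rw [hpf, hIM']) hp.1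
  have hppA : (spanMono K ((fun i => Finsupp.single i 1) ''
      {i : Fin s | (X i : MvPolynomial (Fin s) K) ∈ p})).IsPrime := hA ▸ hp.1
  intro n hn
  obtain ⟨Mn, hMn, hMn2⟩ :=
    pow_spanMono (K := K) {i : Fin s | (X i : MvPolynomial (Fin s) K) ∈ p} M n hn
  calc contractAt (I ^ n) p hp.1
      = contractAt (spanMono K Mn) (spanMono K ((fun i => Finsupp.single i 1) ''
          {i : Fin s | (X i : MvPolynomial (Fin s) K) ∈ p})) hppA :=
        contractAt_congr _ _ (by rw [hIM', hMn]) hA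
    _ = spanMono K (resA {i : Fin s | (X i : MvPolynomial (Fin s) K) ∈ p} '' Mn) :=
        contract_spanMono Mn hppA
    _ = spanMono K (resA {i : Fin s | (X i : MvPolynomial (Fin s) K) ∈ p} '' M) ^ n := hMn2
    _ = (contractAt I p hp.1) ^ n := by
        rw [contractAt_congr hp.1 hppA hIM' hA, contract_spanMono M hppA]
end

section
/- Let I ⊆ S = K[t_1,…,t_s] be a monomial ideal with minimal monomial generating set G(I) = {t^{v_1}, …, t^{v_q}}, where v_i = (v_{i,1}, …, v_{i,s}), and let I = I_1 ∩ ⋯ ∩ I_m be its irreducible decomposition. Then the set of pure powers {t_j^{v_{i,j}} : 1 ≤ i ≤ q, 1 ≤ j ≤ s, v_{i,j} ≥ 1} equals the union G(I_1) ∪ ⋯ ∪ G(I_m) of the minimal monomial generating sets of the irreducible components. -/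
open MvPolynomial Pointwise

/-- For `b ∈ ℕ^s \ {0}`, the irreducible monomial ideal
`q_b = ({t_i^{b_i} : b_i ≥ 1})`. -/
noncomputable def irredIdeal (K : Type*) [Field K] {s : ℕ} (b : Fin s → ℕ) :
    Ideal (MvPolynomial (Fin s) K) :=
  Ideal.span { f | ∃ i : Fin s, 1 ≤ b i ∧ f = X i ^ b i }

section Aux

variable {K : Type*} [Field K] {s : ℕ}

lemma irred_set_eq (b : Fin s → ℕ) :
    { f : MvPolynomial (Fin s) K | ∃ i : Fin s, 1 ≤ b i ∧ f = X i ^ b i }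
      = (fun d => monomial d (1 : K)) ''
        { d | ∃ i : Fin s, 1 ≤ b i ∧ d = Finsupp.single i (b i) } := by
  ext f
  constructor
  · rintro ⟨i, hi, rfl⟩
    exact ⟨Finsupp.single i (b i), ⟨i, hi, rfl⟩, (X_pow_eq_monomial).symm⟩
  · rintro ⟨d, ⟨i, hi, rfl⟩, rfl⟩
    exact ⟨i, hi, X_pow_eq_monomial.symm⟩

lemma mem_irredIdeal_iff (b : Fin s → ℕ) (f : MvPolynomial (Fin s) K) :
    f ∈ irredIdeal K b ↔
      ∀ xi ∈ f.support, ∃ j : Fin s, 1 ≤ b j ∧ b j ≤ xi j := by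
  rw [irredIdeal, irred_set_eq, mem_ideal_span_monomial_image]
  refine forall₂_congr fun xi _ => ?_
  constructor
  · rintro ⟨d, ⟨i, hi, rfl⟩, hle⟩
    exact ⟨i, hi, Finsupp.single_le_iff.mp hle⟩
  · rintro ⟨i, hi, hle⟩
    exact ⟨Finsupp.single i (b i), ⟨i, hi, rfl⟩, Finsupp.single_le_iff.mpr hle⟩

lemma monomial_mem_irredIdeal_iff (b : Fin s → ℕ) (a : Fin s →₀ ℕ) :
    monomial a (1 : K) ∈ irredIdeal K b ↔ ∃ j : Fin s, 1 ≤ b j ∧ b j ≤ a j := by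
  rw [mem_irredIdeal_iff]
  simp [support_monomial]

lemma gens_set_eq {q : ℕ} (v : Fin q → (Fin s →₀ ℕ)) :
    { f : MvPolynomial (Fin s) K | ∃ j : Fin q, f = monomial (v j) (1 : K) }
      = (fun d => monomial d (1 : K)) '' Set.range v := by
  ext f
  constructor
  · rintro ⟨j, rfl⟩; exact ⟨v j, ⟨j, rfl⟩, rfl⟩
  · rintro ⟨d, ⟨j, rfl⟩, rfl⟩; exact ⟨j, rfl⟩

lemma gens_ne_set_eq {q : ℕ} (v : Fin q → (Fin s →₀ ℕ)) (j : Fin q) :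
    { f : MvPolynomial (Fin s) K | ∃ k : Fin q, k ≠ j ∧ f = monomial (v k) (1 : K) }
      = (fun d => monomial d (1 : K)) '' { d | ∃ k : Fin q, k ≠ j ∧ d = v k } := by
  ext f
  constructor
  · rintro ⟨k, hk, rfl⟩; exact ⟨v k, ⟨k, hk, rfl⟩, rfl⟩
  · rintro ⟨d, ⟨k, hk, rfl⟩, rfl⟩; exact ⟨k, hk, rfl⟩

end Aux

/-- **Lemma (duality of exponents).** Let `I ⊆ S = K[t_1,…,t_s]` be a monomial ideal with
minimal monomial generating set `G(I) = {t^{v_1}, …, t^{v_q}}` and (irredundant)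
irreducible decomposition `I = q_{α_1} ∩ ⋯ ∩ q_{α_m}`. Then
`{t_j^{v_{i,j}} : v_{i,j} ≥ 1} = G(q_{α_1}) ∪ ⋯ ∪ G(q_{α_m})`, where
`G(q_b) = {t_j^{b_j} : b_j ≥ 1}`. -/
theorem pure_powers_eq_union_gens_of_components {s q m : ℕ} (K : Type*) [Field K]
    (I : Ideal (MvPolynomial (Fin s) K))
    (v : Fin q → (Fin s →₀ ℕ))
    (hgen : I = Ideal.span { f | ∃ j : Fin q, f = monomial (v j) (1 : K) })
    (hmingen : ∀ j : Fin q, monomial (v j) (1 : K) ∉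
      Ideal.span { f | ∃ k : Fin q, k ≠ j ∧ f = monomial (v k) (1 : K) })
    (α : Fin m → (Fin s → ℕ)) (hα : ∀ i, α i ≠ 0)
    (hdec : I = ⨅ i, irredIdeal K (α i))
    (hirr : ∀ j : Fin m, I ≠ ⨅ i ∈ ({j}ᶜ : Set (Fin m)), irredIdeal K (α i)) :
    { g : MvPolynomial (Fin s) K | ∃ i : Fin q, ∃ j : Fin s, 1 ≤ v i j ∧ g = X j ^ v i j } =
      ⋃ i : Fin m, { g | ∃ j : Fin s, 1 ≤ α i j ∧ g = X j ^ α i j } := by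
  classical
  -- membership characterizations
  have hI : ∀ f : MvPolynomial (Fin s) K,
      f ∈ I ↔ ∀ xi ∈ f.support, ∃ k : Fin q, v k ≤ xi := by
    intro f
    rw [hgen, gens_set_eq, mem_ideal_span_monomial_image]
    refine forall₂_congr fun xi _ => ?_
    constructor
    · rintro ⟨d, ⟨k, rfl⟩, h⟩; exact ⟨k, h⟩
    · rintro ⟨k, h⟩; exact ⟨v k, ⟨k, rfl⟩, h⟩
  have hmonoI : ∀ a : Fin s →₀ ℕ,
      monomial a (1 : K) ∈ I ↔ ∃ k : Fin q, v k ≤ a := by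
    intro a
    rw [hI]
    simp [support_monomial]
  ext g
  simp only [Set.mem_setOf_eq, Set.mem_iUnion]
  constructor
  · rintro ⟨i, j, hvij, rfl⟩
    set a : Fin s →₀ ℕ := v i with ha
    set a' : Fin s →₀ ℕ := a - Finsupp.single j 1 with ha'
    have ha'app : ∀ j' : Fin s, a' j' = a j' - (Finsupp.single j 1) j' := by
      intro j'; simp [ha', Finsupp.tsub_apply]
    have ha'j : a' j = a j - 1 := by simp [ha'app]
    have ha'ne : ∀ j' : Fin s, j' ≠ j → a' j' = a j' := by
      intro j' hj'
      rw [ha'app, Finsupp.single_apply, if_neg (fun h => hj' h.symm)]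
      simp
    have ha'le : a' ≤ a := tsub_le_self
    -- `monomial a' 1 ∉ I` by minimality of generators
    have hnot : monomial a' (1 : K) ∉ I := by
      intro h
      obtain ⟨k, hk⟩ := (hmonoI a').mp h
      have hki : k ≠ i := by
        intro hke
        subst hke
        have h1 := hk j
        rw [ha'j, ha] at h1
        rw [ha] at hvij
        omega
      apply hmingen i
      rw [gens_ne_set_eq, mem_ideal_span_monomial_image]
      intro xi hxi
      rw [support_monomial, if_neg (one_ne_zero)] at hxi
      simp only [Finset.mem_singleton] at hxi
      subst hxi
      exact ⟨v k, ⟨k, hki, rfl⟩, le_trans hk ha'le⟩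
    -- find a component not containing `monomial a' 1`
    rw [hdec, Ideal.mem_iInf] at hnot
    push_neg at hnot
    obtain ⟨l, hl⟩ := hnot
    have haI : monomial a (1 : K) ∈ I := (hmonoI a).mpr ⟨i, le_refl _⟩
    have haIl : monomial a (1 : K) ∈ irredIdeal K (α l) := by
      rw [hdec, Ideal.mem_iInf] at haI; exact haI l
    obtain ⟨j', hj'1, hj'2⟩ := (monomial_mem_irredIdeal_iff (α l) a).mp haIl
    rw [monomial_mem_irredIdeal_iff] at hl
    push_neg at hl
    by_cases hej : j' = j
    · subst hej
      have h3 := hl j' hj'1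
      rw [ha'j] at h3
      have heq : α l j' = a j' := by omega
      exact ⟨l, j', by omega, by rw [heq]⟩
    · have h3 := hl j' hj'1
      rw [ha'ne j' hej] at h3
      omega
  · rintro ⟨l, j, hαlj, rfl⟩
    -- irredundancy gives a monomial in the partial intersection not in I
    have hIJ : I ≤ ⨅ k ∈ ({l}ᶜ : Set (Fin m)), irredIdeal K (α k) := by
      rw [hdec]
      exact le_iInf fun k => le_iInf fun _ => iInf_le _ k
    obtain ⟨f, hfJ, hfI⟩ : ∃ f, f ∈ (⨅ k ∈ ({l}ᶜ : Set (Fin m)), irredIdeal K (α k)) ∧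
        f ∉ I := by
      by_contra h
      push_neg at h
      exact hirr l (le_antisymm hIJ h)
    rw [hI] at hfI
    push_neg at hfI
    obtain ⟨xi, hxi, hxv⟩ := hfI
    have hfJ' : ∀ k : Fin m, k ≠ l → f ∈ irredIdeal K (α k) := by
      intro k hk
      have h1 := Ideal.mem_iInf.mp hfJ k
      exact Ideal.mem_iInf.mp h1 hk
    have hxiq : ∀ k : Fin m, k ≠ l → ∃ j' : Fin s, 1 ≤ α k j' ∧ α k j' ≤ xi j' := by
      intro k hk
      exact (mem_irredIdeal_iff (α k) f).mp (hfJ' k hk) xi hxi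
    -- xi is not in q_{α l}
    have hxl : ∀ j' : Fin s, 1 ≤ α l j' → xi j' < α l j' := by
      by_contra h
      push_neg at h
      obtain ⟨j₀, hj₀1, hj₀2⟩ := h
      have : monomial xi (1 : K) ∈ I := by
        rw [hdec, Ideal.mem_iInf]
        intro k
        rw [monomial_mem_irredIdeal_iff]
        by_cases hk : k = l
        · exact ⟨j₀, hk ▸ hj₀1, hk ▸ hj₀2⟩
        · exact hxiq k hk
      obtain ⟨k, hk⟩ := (hmonoI xi).mp this
      exact hxv k hk
    have hxj : xi j < α l j := hxl j hαlj
    -- bump xi up to c with c j = α l j - 1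
    set c : Fin s →₀ ℕ := xi + Finsupp.single j (α l j - 1 - xi j) with hc
    have hcapp : ∀ j' : Fin s, c j' = xi j' + (Finsupp.single j (α l j - 1 - xi j)) j' := by
      intro j'; simp [hc]
    have hcj : c j = α l j - 1 := by
      rw [hcapp]; simp; omega
    have hcne : ∀ j' : Fin s, j' ≠ j → c j' = xi j' := by
      intro j' hj'
      rw [hcapp, Finsupp.single_apply, if_neg (fun h => hj' h.symm)]
      simp
    have hxc : xi ≤ c := le_add_of_nonneg_right zero_le
    set d : Fin s →₀ ℕ := c + Finsupp.single j 1 with hd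
    have hdapp : ∀ j' : Fin s, d j' = c j' + (Finsupp.single j 1) j' := by
      intro j'; simp [hd]
    have hdj : d j = α l j := by rw [hdapp, hcj]; simp; omega
    have hdne : ∀ j' : Fin s, j' ≠ j → d j' = c j' := by
      intro j' hj'
      rw [hdapp, Finsupp.single_apply, if_neg (fun h => hj' h.symm)]
      simp
    have hcd : c ≤ d := le_add_of_nonneg_right zero_le
    -- monomial d ∈ I
    have hdI : monomial d (1 : K) ∈ I := by
      rw [hdec, Ideal.mem_iInf]
      intro k
      rw [monomial_mem_irredIdeal_iff]
      by_cases hk : k = l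
      · subst hk; exact ⟨j, hαlj, le_of_eq hdj.symm⟩
      · obtain ⟨j', h1, h2⟩ := hxiq k hk
        exact ⟨j', h1, le_trans h2 (le_trans (hxc j') (hcd j'))⟩
    -- monomial c ∉ I
    have hcI : monomial c (1 : K) ∉ I := by
      intro h
      have hIl : I ≤ irredIdeal K (α l) := by rw [hdec]; exact iInf_le _ l
      obtain ⟨j', h1, h2⟩ := (monomial_mem_irredIdeal_iff (α l) c).mp (hIl h)
      by_cases hej : j' = j
      · subst hej; rw [hcj] at h2; omega
      · rw [hcne j' hej] at h2
        exact absurd h2 (not_le.mpr (hxl j' h1))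
    -- get generator with exponent α l j at j
    obtain ⟨i, hi⟩ := (hmonoI d).mp hdI
    have hic : ¬ v i ≤ c := fun h => hcI ((hmonoI c).mpr ⟨i, h⟩)
    rw [Finsupp.le_def] at hic
    push_neg at hic
    obtain ⟨j', hj'⟩ := hic
    have hej : j' = j := by
      by_contra hne
      exact absurd (le_trans (hi j') (le_of_eq (hdne j' hne))) (not_le.mpr hj')
    subst hej
    have hvij : v i j' = α l j' := by
      have h1 := hi j'
      rw [hdj] at h1
      rw [hcj] at hj'
      omega
    exact ⟨i, j', by omega, by rw [hvij]⟩
end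

section
/- Let D be a weighted oriented graph with underlying graph G and edge ideal I(D). Then I(D) = ⋂_{C ∈ Υ(D)} I_C, where Υ(D) is the set of all strong vertex covers of D and, for a strong vertex cover C, I_C is the irreducible monomial ideal generated by the variables in L_1(C) together with the pure powers t_i^{w_i} for t_i ∈ L_2(C) ∪ L_3(C). -/
open MvPolynomial Pointwise

/-- The neighbor set `N_G(x)` of a vertex in the underlying graph of `D`. -/
def WOGraph.neighbors {s : ℕ} (D : WOGraph s) (x : Fin s) : Set (Fin s) :=
  { y | (x, y) ∈ D.E ∨ (y, x) ∈ D.E }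

/-- A vertex cover of the underlying graph of `D`. -/
def WOGraph.IsVertexCover {s : ℕ} (D : WOGraph s) (C : Set (Fin s)) : Prop :=
  ∀ e ∈ D.E, (e : Fin s × Fin s).1 ∈ C ∨ e.2 ∈ C

/-- `L_1(C) = {x ∈ C : ∃ (x,y) ∈ E(D) with y ∉ C}`. -/
def WOGraph.L1 {s : ℕ} (D : WOGraph s) (C : Set (Fin s)) : Set (Fin s) :=
  { x | x ∈ C ∧ ∃ y, (x, y) ∈ D.E ∧ y ∉ C }

/-- `L_3(C) = {x ∈ C : N_G(x) ⊆ C}`. -/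
def WOGraph.L3 {s : ℕ} (D : WOGraph s) (C : Set (Fin s)) : Set (Fin s) :=
  { x | x ∈ C ∧ D.neighbors x ⊆ C }

/-- `L_2(C) = C \ (L_1(C) ∪ L_3(C))`. -/
def WOGraph.L2 {s : ℕ} (D : WOGraph s) (C : Set (Fin s)) : Set (Fin s) :=
  C \ (D.L1 C ∪ D.L3 C)

/-- A minimal vertex cover: a vertex cover minimal with respect to inclusion. -/
def WOGraph.IsMinimalVertexCover {s : ℕ} (D : WOGraph s) (C : Set (Fin s)) : Prop :=
  D.IsVertexCover C ∧ ∀ C' ⊆ C, D.IsVertexCover C' → C' = C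

/-- A strong vertex cover of `D`: a vertex cover `C` which is a minimal vertex cover,
or else such that for every `x ∈ L_3(C)` there is `(y, x) ∈ E(D)` with
`y ∈ L_2(C) ∪ L_3(C)` and `w(y) ≥ 2`. -/
def WOGraph.IsStrongVertexCover {s : ℕ} (D : WOGraph s) (C : Set (Fin s)) : Prop :=
  D.IsVertexCover C ∧
    (D.IsMinimalVertexCover C ∨
      ∀ x ∈ D.L3 C, ∃ y, (y, x) ∈ D.E ∧ y ∈ D.L2 C ∪ D.L3 C ∧ 2 ≤ D.w y)

/-- The irreducible ideal `I_C = (L_1(C) ∪ {t_i^{w_i} : t_i ∈ L_2(C) ∪ L_3(C)})`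
attached to a strong vertex cover `C`. -/
noncomputable def coverIdeal (K : Type*) [Field K] {s : ℕ} (D : WOGraph s) (C : Set (Fin s)) :
    Ideal (MvPolynomial (Fin s) K) :=
  Ideal.span ((fun x => (X x : MvPolynomial (Fin s) K)) '' D.L1 C ∪
    (fun x => (X x : MvPolynomial (Fin s) K) ^ D.w x) '' (D.L2 C ∪ D.L3 C))


section Aux

variable {s : ℕ} (D : WOGraph s)

lemma WOGraph.mem_L2_union_L3 {C : Set (Fin s)} {x : Fin s} :
    x ∈ D.L2 C ∪ D.L3 C ↔ x ∈ C ∧ x ∉ D.L1 C := by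
  constructor
  · rintro (⟨hC, hn⟩ | ⟨hC, hN⟩)
    · exact ⟨hC, fun h => hn (Or.inl h)⟩
    · refine ⟨hC, ?_⟩
      rintro ⟨-, y, hxy, hyC⟩
      exact hyC (hN (Or.inl hxy))
  · rintro ⟨hC, h1⟩
    by_cases h3 : x ∈ D.L3 C
    · exact Or.inr h3
    · exact Or.inl ⟨hC, fun h => h.elim h1 h3⟩

lemma WOGraph.edgeIdeal_eq_span_monomial (K : Type*) [Field K] :
    D.edgeIdeal K = Ideal.span ((fun v => (monomial v (1 : K))) ''
      {v | ∃ e ∈ D.E, v = Finsupp.single e.1 1 + Finsupp.single e.2 (D.w e.2)}) := by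
  unfold WOGraph.edgeIdeal
  congr 1
  ext f
  simp only [Set.mem_image, Set.mem_setOf_eq]
  constructor
  · rintro ⟨e, he, rfl⟩
    refine ⟨_, ⟨e, he, rfl⟩, ?_⟩
    rw [← pow_one (X e.1), X_pow_eq_monomial, X_pow_eq_monomial, monomial_mul, one_mul]
  · rintro ⟨v, ⟨e, he, rfl⟩, rfl⟩
    refine ⟨e, he, ?_⟩
    rw [← pow_one (X e.1), X_pow_eq_monomial, X_pow_eq_monomial, monomial_mul, one_mul]

lemma coverIdeal_eq_span_monomial (K : Type*) [Field K] (C : Set (Fin s)) :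
    coverIdeal K D C = Ideal.span ((fun v => (monomial v (1 : K))) ''
      ((fun x => Finsupp.single x 1) '' D.L1 C ∪
        (fun x => Finsupp.single x (D.w x)) '' (D.L2 C ∪ D.L3 C))) := by
  unfold coverIdeal
  congr 1
  ext f
  simp only [Set.mem_image, Set.mem_union, Set.mem_setOf_eq]
  constructor
  · rintro (⟨x, hx, rfl⟩ | ⟨x, hx, rfl⟩)
    · exact ⟨_, Or.inl ⟨x, hx, rfl⟩, by rw [← pow_one (X x), X_pow_eq_monomial]⟩
    · exact ⟨_, Or.inr ⟨x, hx, rfl⟩, by rw [X_pow_eq_monomial]⟩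
  · rintro ⟨v, (⟨x, hx, rfl⟩ | ⟨x, hx, rfl⟩), rfl⟩
    · exact Or.inl ⟨x, hx, by rw [← pow_one (X x), X_pow_eq_monomial]⟩
    · exact Or.inr ⟨x, hx, by rw [X_pow_eq_monomial]⟩

lemma edge_mem_coverIdeal (K : Type*) [Field K] {C : Set (Fin s)}
    (hC : D.IsVertexCover C) {e : Fin s × Fin s} (he : e ∈ D.E) :
    (X e.1 * X e.2 ^ D.w e.2 : MvPolynomial (Fin s) K) ∈ coverIdeal K D C := by
  by_cases h2 : e.2 ∈ C
  · by_cases h1 : e.2 ∈ D.L1 C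
    · have hg : (X e.2 : MvPolynomial (Fin s) K) ∈ coverIdeal K D C :=
        Ideal.subset_span (Or.inl ⟨e.2, h1, rfl⟩)
      obtain ⟨w', hw'⟩ := Nat.exists_eq_add_of_le (D.w_pos e.2)
      rw [hw', pow_add, pow_one]
      have heq : (X e.1 * (X e.2 * X e.2 ^ w') : MvPolynomial (Fin s) K)
          = (X e.1 * X e.2 ^ w') * X e.2 := by ring
      rw [heq]
      exact Ideal.mul_mem_left _ _ hg
    · have h23 : e.2 ∈ D.L2 C ∪ D.L3 C := (D.mem_L2_union_L3).2 ⟨h2, h1⟩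
      exact Ideal.mul_mem_left _ _ (Ideal.subset_span (Or.inr ⟨e.2, h23, rfl⟩))
  · have h1c : e.1 ∈ C := (hC e he).resolve_right h2
    have h1 : e.1 ∈ D.L1 C := ⟨h1c, e.2, he, h2⟩
    rw [mul_comm]
    exact Ideal.mul_mem_left _ _ (Ideal.subset_span (Or.inl ⟨e.1, h1, rfl⟩))

lemma exists_strong_cover (a : Fin s → ℕ)
    (H : ∀ e ∈ D.E, ¬(1 ≤ a e.1 ∧ D.w e.2 ≤ a e.2)) :
    ∃ C : Set (Fin s), D.IsStrongVertexCover C ∧ (∀ x ∈ D.L1 C, a x = 0) ∧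
      (∀ x ∈ D.L2 C ∪ D.L3 C, a x < D.w x) := by
  classical
  set P : Finset (Fin s) → Prop := fun Bp =>
    (∀ i ∈ Bp, ∀ j ∈ Bp, (i, j) ∉ D.E) ∧
    (∀ i ∉ Bp, ∀ j ∈ Bp, 1 ≤ a i → (i, j) ∉ D.E) ∧
    (∀ i : Fin s, D.w i ≤ a i → i ∈ Bp) with hPdef
  have hB0 : P (Finset.univ.filter fun i => D.w i ≤ a i) := by
    refine ⟨?_, ?_, ?_⟩
    · intro i hi j hj hij
      simp only [Finset.mem_filter] at hi hj
      exact H _ hij ⟨le_trans (D.w_pos i) hi.2, hj.2⟩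
    · intro i _ j hj h1 hij
      simp only [Finset.mem_filter] at hj
      exact H _ hij ⟨h1, hj.2⟩
    · intro i hi
      simp [hi]
  obtain ⟨Bm, hBmmem, hmax⟩ :=
    Finset.exists_max_image (Finset.univ.filter P) Finset.card
      ⟨_, Finset.mem_filter.2 ⟨Finset.mem_univ _, hB0⟩⟩
  have hBm : P Bm := (Finset.mem_filter.1 hBmmem).2
  set C : Set (Fin s) := {x | x ∉ Bm} with hCdef
  have hCmem : ∀ x : Fin s, x ∈ C ↔ x ∉ Bm := fun x => Iff.rfl
  have hcover : D.IsVertexCover C := by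
    intro e he
    by_contra h
    push_neg at h
    have h1 : e.1 ∈ Bm := by
      by_contra h1'; exact h.1 ((hCmem e.1).2 h1')
    have h2 : e.2 ∈ Bm := by
      by_contra h2'; exact h.2 ((hCmem e.2).2 h2')
    exact hBm.1 e.1 h1 e.2 h2 he
  have hL1 : ∀ x ∈ D.L1 C, a x = 0 := by
    rintro x ⟨hxC, y, hxy, hyC⟩
    by_contra ha
    have h1 : 1 ≤ a x := Nat.one_le_iff_ne_zero.2 ha
    have hyB : y ∈ Bm := by
      by_contra h'; exact hyC ((hCmem y).2 h')
    exact hBm.2.1 x ((hCmem x).1 hxC) y hyB h1 hxy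
  have hL23 : ∀ x ∈ D.L2 C ∪ D.L3 C, a x < D.w x := by
    intro x hx
    have hxC : x ∈ C := ((D.mem_L2_union_L3).1 hx).1
    by_contra h
    exact (hCmem x).1 hxC (hBm.2.2 x (not_lt.1 h))
  have hstrong : ∀ x ∈ D.L3 C, ∃ y, (y, x) ∈ D.E ∧ y ∈ D.L2 C ∪ D.L3 C ∧ 2 ≤ D.w y := by
    rintro x ⟨hxC, hxN⟩
    by_contra hno
    push_neg at hno
    have hxBm : x ∉ Bm := (hCmem x).1 hxC
    -- show P (insert x Bm)
    have hPins : P (insert x Bm) := by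
      refine ⟨?_, ?_, ?_⟩
      · intro i hi j hj hij
        rcases Finset.mem_insert.1 hi with rfl | hi'
        · rcases Finset.mem_insert.1 hj with rfl | hj'
          · exact D.no_loops _ hij
          · exact (hCmem _).1 (hxN (Or.inl hij)) hj'
        · rcases Finset.mem_insert.1 hj with rfl | hj'
          · exact (hCmem _).1 (hxN (Or.inr hij)) hi'
          · exact hBm.1 _ hi' _ hj' hij
      · intro i hi j hj h1 hij
        have hiBm : i ∉ Bm := fun h' => hi (Finset.mem_insert_of_mem h')
        rcases Finset.mem_insert.1 hj with rfl | hj'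
        · -- edge (i, x); derive the strong condition for x at i, contradiction
          have hiC : i ∈ C := hxN (Or.inr hij)
          have hwi : ¬ D.w i ≤ a i := fun h' => hiBm (hBm.2.2 i h')
          have hw2 : 2 ≤ D.w i := by omega
          have hiL1 : i ∉ D.L1 C := by
            rintro ⟨-, z, hiz, hzC⟩
            have hzB : z ∈ Bm := by
              by_contra h'; exact hzC ((hCmem z).2 h')
            exact hBm.2.1 i hiBm z hzB h1 hiz
          have := hno i hij ((D.mem_L2_union_L3).2 ⟨hiC, hiL1⟩)
          omega
        · exact hBm.2.1 i hiBm j hj' h1 hij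
      · intro i hwi
        exact Finset.mem_insert_of_mem (hBm.2.2 i hwi)
    have hcard := hmax (insert x Bm) (Finset.mem_filter.2 ⟨Finset.mem_univ _, hPins⟩)
    rw [Finset.card_insert_of_notMem hxBm] at hcard
    omega
  exact ⟨C, ⟨hcover, Or.inr hstrong⟩, hL1, hL23⟩

end Aux

/-- **Theorem (irreducible decomposition of `I(D)`).** For a weighted oriented graph `D`,
`I(D) = ⋂_{C ∈ Υ(D)} I_C`, the intersection being taken over all strong vertex covers
`C` of `D`. -/
theorem edgeIdeal_eq_iInf_coverIdeal {s : ℕ} (K : Type*) [Field K] (D : WOGraph s) :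
    D.edgeIdeal K =
      ⨅ (C : Set (Fin s)) (_ : D.IsStrongVertexCover C), coverIdeal K D C := by
  classical
  apply le_antisymm
  · refine le_iInf fun C => le_iInf fun hC => ?_
    rw [WOGraph.edgeIdeal, Ideal.span_le]
    rintro f ⟨e, he, rfl⟩
    exact edge_mem_coverIdeal D K hC.1 he
  · intro f hf
    simp only [Ideal.mem_iInf] at hf
    rw [D.edgeIdeal_eq_span_monomial K, MvPolynomial.mem_ideal_span_monomial_image]
    intro xi hxi
    by_contra hcon
    push_neg at hcon
    have H : ∀ e ∈ D.E, ¬(1 ≤ xi e.1 ∧ D.w e.2 ≤ xi e.2) := by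
      rintro ⟨i, j⟩ he ⟨h1, h2⟩
      refine hcon _ ⟨(i, j), he, rfl⟩ ?_
      rw [Finsupp.le_def]
      intro k
      have hne : i ≠ j := by
        rintro rfl
        exact D.no_loops i he
      simp only at h1 h2 ⊢
      rw [Finsupp.add_apply, Finsupp.single_apply, Finsupp.single_apply]
      by_cases hk1 : i = k
      · subst hk1
        simp [Ne.symm hne]
        omega
      · by_cases hk2 : j = k
        · subst hk2
          simp [hk1]
          omega
        · simp [hk1, hk2]
    obtain ⟨C, hCs, hL1, hL23⟩ := exists_strong_cover D (fun i => xi i) H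
    have hmem := hf C hCs
    rw [coverIdeal_eq_span_monomial, MvPolynomial.mem_ideal_span_monomial_image] at hmem
    obtain ⟨v, hv, hle⟩ := hmem xi hxi
    rcases hv with ⟨x, hx, rfl⟩ | ⟨x, hx, rfl⟩
    · have h1 : 1 ≤ xi x := Finsupp.single_le_iff.1 hle
      have := hL1 x hx
      omega
    · have h1 : D.w x ≤ xi x := Finsupp.single_le_iff.1 hle
      have := hL23 x hx
      omega
end
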